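/- arXiv:2210.01121 — 6 statements merged into one kernel-verified Lean document; each statement's English description precedes it below -/
import Mathlib

section
/- Suppose X is geometrically distributed, i.e. there exists θ ∈ (0,1) with P(X = k) = (1-θ)θ^k for all k ∈ ℕ. Then the linear forms L₁ = X̃_{1-p} + ε(p)·Y and L₂ = X̃_p + (1-ε(p))·Y are stochastically independent. -/
open MeasureTheory ProbabilityTheory

section AuxLemmas
open Finset


private lemma geo_sum (p : ℝ) (n : ℕ) :
    (1 - p) * ∑ i ∈ range (n+1), p ^ i = 1 - p ^ (n+1) := by
  induction n with
  | zero => simp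
  | succ n ih => rw [sum_range_succ, mul_add, ih]; ring

private lemma aux1 (p : ℝ) (m n : ℕ) :
    (1 - p) * ∑ i ∈ range (n+1), ((m+1+i).choose i : ℝ) * p ^ i
      = ∑ i ∈ range (n+1), ((m+i).choose i : ℝ) * p ^ i
        - ((m+n+1).choose (m+1) : ℝ) * p ^ (n+1) := by
  induction n with
  | zero => simp
  | succ n ih =>
    have h1 : (m+1+(n+1)).choose (n+1) = (m+n+1).choose (n+1) + (m+n+1).choose n := by
      have h := Nat.choose_succ_succ (m+n+1) n
      simp only [Nat.succ_eq_add_one] at h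
      rw [show m+1+(n+1) = (m+n+1)+1 by omega, h]; omega
    have h3 : (m+(n+1)+1).choose (m+1) = (m+n+1).choose (n+1) + (m+n+1).choose n := by
      have h := Nat.choose_symm (show m+1 ≤ m+n+2 by omega)
      rw [show m+n+2-(m+1) = n+1 by omega] at h
      have h4 := Nat.choose_succ_succ (m+n+1) n
      simp only [Nat.succ_eq_add_one] at h4
      rw [show m+(n+1)+1 = m+n+2 by omega, ← h, show m+n+2 = (m+n+1)+1 by omega, h4]; omega
    have h5 : (m+(n+1)).choose (n+1) = (m+n+1).choose (n+1) := by
      rw [show m+(n+1) = m+n+1 by omega]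
    have h2 : (m+n+1).choose (m+1) = (m+n+1).choose n := by
      have h := Nat.choose_symm (show n ≤ m+n+1 by omega)
      rw [show m+n+1-n = m+1 by omega] at h
      exact h
    rw [sum_range_succ, sum_range_succ (f := fun i => ((m+i).choose i : ℝ) * p ^ i),
      mul_add, ih, h1, h3, h5, h2]
    push_cast
    ring

private lemma keyid (p : ℝ) (m n : ℕ) :
    p ^ (n+1) * ∑ i ∈ range (m+1), ((n+i).choose i : ℝ) * (1-p) ^ i
      + (1-p) ^ (m+1) * ∑ i ∈ range (n+1), ((m+i).choose i : ℝ) * p ^ i = 1 := by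
  induction m with
  | zero =>
    have hsum : ∑ i ∈ range (n+1), ((0+i).choose i : ℝ) * p ^ i
        = ∑ i ∈ range (n+1), p ^ i := by
      refine sum_congr rfl fun i _ => ?_; simp
    rw [hsum, sum_range_one]
    simp only [Nat.add_zero, Nat.choose_zero_right, Nat.cast_one, pow_zero, mul_one, zero_add,
      pow_one]
    linarith [geo_sum p n]
  | succ m ih =>
    have ha := aux1 p m n
    have hsymm : (n+(m+1)).choose (m+1) = (m+n+1).choose (m+1) := by
      rw [show n+(m+1) = m+n+1 by omega]
    have hstep : (1-p) ^ (m+1+1) * ∑ i ∈ range (n+1), ((m+1+i).choose i : ℝ) * p ^ i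
        = (1-p) ^ (m+1) * (∑ i ∈ range (n+1), ((m+i).choose i : ℝ) * p ^ i
            - ((m+n+1).choose (m+1) : ℝ) * p ^ (n+1)) := by
      rw [← ha]; ring
    rw [sum_range_succ, hstep, hsymm]
    nlinarith [ih]


private lemma real_id (p θ : ℝ) (m n : ℕ) :
    (∑ y ∈ range (m+1), (1-θ)*θ^(m-y+n) * ((1-θ)*θ^y) * p
        * (((m-y+n).choose (m-y) : ℝ) * ((1-p)^(m-y) * p^(m-y+n-(m-y)))))
      + (∑ y ∈ range (n+1), (1-θ)*θ^(m+n-y) * ((1-θ)*θ^y) * (1-p)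
        * (((m+n-y).choose m : ℝ) * ((1-p)^m * p^(m+n-y-m))))
      = (1-θ)*θ^m * ((1-θ)*θ^n) := by
  set F : ℕ → ℝ := fun i => (1-θ)^2*θ^(m+n) * p^(n+1) * (((n+i).choose i : ℝ) * (1-p)^i) with hFdef
  set F0 : ℕ → ℝ := fun i => (1-θ)^2*θ^(m+n) * (1-p)^(m+1) * (((m+i).choose i : ℝ) * p^i)
    with hF0def
  have h1 : (∑ y ∈ range (m+1), (1-θ)*θ^(m-y+n) * ((1-θ)*θ^y) * p
      * (((m-y+n).choose (m-y) : ℝ) * ((1-p)^(m-y) * p^(m-y+n-(m-y)))))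
      = (1-θ)^2*θ^(m+n) * (p^(n+1) * ∑ i ∈ range (m+1), ((n+i).choose i : ℝ) * (1-p)^i) := by
    have hterm : ∀ y ∈ range (m+1), (1-θ)*θ^(m-y+n) * ((1-θ)*θ^y) * p
        * (((m-y+n).choose (m-y) : ℝ) * ((1-p)^(m-y) * p^(m-y+n-(m-y)))) = F (m - y) := by
      intro y hy
      rw [mem_range] at hy
      rw [show m-y+n-(m-y) = n by omega, show m-y+n = n+(m-y) by omega]
      have hpow : θ^(n+(m-y)) * θ^y = θ^(m+n) := by rw [← pow_add]; congr 1; omega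
      simp only [hFdef]
      linear_combination ((1-θ)^2 * p^(n+1) * (((n+(m-y)).choose (m-y) : ℝ))
        * (1-p)^(m-y)) * hpow
    rw [Finset.sum_congr rfl hterm]
    have hrefl := Finset.sum_range_reflect F (m+1)
    simp only [Nat.add_sub_cancel] at hrefl
    rw [hrefl]
    simp only [hFdef, Finset.mul_sum]
    exact Finset.sum_congr rfl fun i _ => by ring
  have h0 : (∑ y ∈ range (n+1), (1-θ)*θ^(m+n-y) * ((1-θ)*θ^y) * (1-p)
      * (((m+n-y).choose m : ℝ) * ((1-p)^m * p^(m+n-y-m))))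
      = (1-θ)^2*θ^(m+n) * ((1-p)^(m+1) * ∑ i ∈ range (n+1), ((m+i).choose i : ℝ) * p^i) := by
    have hterm : ∀ y ∈ range (n+1), (1-θ)*θ^(m+n-y) * ((1-θ)*θ^y) * (1-p)
        * (((m+n-y).choose m : ℝ) * ((1-p)^m * p^(m+n-y-m))) = F0 (n - y) := by
      intro y hy
      rw [mem_range] at hy
      rw [show m+n-y-m = n-y by omega, show m+n-y = m+(n-y) by omega]
      have hch : (m+(n-y)).choose m = (m+(n-y)).choose (n-y) := by
        rw [← Nat.choose_symm (Nat.le_add_right m (n-y)), Nat.add_sub_cancel_left]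
      rw [hch]
      have hpow : θ^(m+(n-y)) * θ^y = θ^(m+n) := by rw [← pow_add]; congr 1; omega
      simp only [hF0def]
      linear_combination ((1-θ)^2 * (1-p)^(m+1) * (((m+(n-y)).choose (n-y) : ℝ))
        * p^(n-y)) * hpow
    rw [Finset.sum_congr rfl hterm]
    have hrefl := Finset.sum_range_reflect F0 (n+1)
    simp only [Nat.add_sub_cancel] at hrefl
    rw [hrefl]
    simp only [hF0def, Finset.mul_sum]
    exact Finset.sum_congr rfl fun i _ => by ring
  rw [h1, h0]
  calc (1-θ)^2*θ^(m+n) * (p^(n+1) * ∑ i ∈ range (m+1), ((n+i).choose i : ℝ) * (1-p)^i)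
      + (1-θ)^2*θ^(m+n) * ((1-p)^(m+1) * ∑ i ∈ range (n+1), ((m+i).choose i : ℝ) * p^i)
      = (1-θ)^2*θ^(m+n) * (p^(n+1) * ∑ i ∈ range (m+1), ((n+i).choose i : ℝ) * (1-p)^i
        + (1-p)^(m+1) * ∑ i ∈ range (n+1), ((m+i).choose i : ℝ) * p^i) := by ring
    _ = (1-θ)^2*θ^(m+n) * 1 := by rw [keyid]
    _ = (1-θ)*θ^m * ((1-θ)*θ^n) := by rw [pow_add]; ring

end AuxLemmas


private lemma atom_meas {Ω : Type*} [MeasurableSpace Ω] (μ : Measure Ω)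
    (X Y εp : Ω → ℕ) (ε : ℕ → Ω → ℕ)
    (hindep : iIndepFun
      (fun i : ℕ => if i = 0 then X else if i = 1 then Y else if i = 2 then εp
        else ε (i - 3)) μ)
    (k y e : ℕ) (b : ℕ → ℕ) :
    μ ((X ⁻¹' {k}) ∩ (Y ⁻¹' {y}) ∩ (εp ⁻¹' {e}) ∩ ⋂ j ∈ Finset.range k, ε j ⁻¹' {b j})
      = μ (X ⁻¹' {k}) * μ (Y ⁻¹' {y}) * μ (εp ⁻¹' {e})
        * ∏ j ∈ Finset.range k, μ (ε j ⁻¹' {b j}) := by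
  classical
  set F : ℕ → Ω → ℕ := fun i => if i = 0 then X else if i = 1 then Y else if i = 2 then εp
    else ε (i - 3) with hF
  have hF3 : ∀ j : ℕ, F (j+3) = ε j := by intro j; simp [hF]
  set sets : ℕ → Set ℕ := fun i => if i = 0 then {k} else if i = 1 then {y}
    else if i = 2 then {e} else {b (i-3)} with hsets
  have hs3 : ∀ j : ℕ, sets (j+3) = {b j} := by intro j; simp [hsets]
  set S : Finset ℕ := insert 0 (insert 1 (insert 2 ((Finset.range k).image (· + 3)))) with hS
  have h := hindep.measure_inter_preimage_eq_mul (S := S) (sets := sets)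
    (fun i _ => MeasurableSpace.measurableSet_top)
  have h0 : (0:ℕ) ∉ insert 1 (insert 2 ((Finset.range k).image (· + 3))) := by
    simp
  have h1 : (1:ℕ) ∉ insert 2 ((Finset.range k).image (· + 3)) := by
    simp
  have h2 : (2:ℕ) ∉ (Finset.range k).image (· + 3) := by
    simp
  rw [hS, Finset.set_biInter_insert, Finset.set_biInter_insert, Finset.set_biInter_insert,
    Finset.set_biInter_finset_image, Finset.prod_insert h0, Finset.prod_insert h1,
    Finset.prod_insert h2, Finset.prod_image (fun x _ y _ hxy => by omega)] at h
  have hc : ∀ j : ℕ, F (j + 3) ⁻¹' sets (j + 3) = ε j ⁻¹' {b j} := fun j => by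
    rw [hF3, hs3]
  have hF0 : F 0 ⁻¹' sets 0 = X ⁻¹' {k} := rfl
  have hF1 : F 1 ⁻¹' sets 1 = Y ⁻¹' {y} := rfl
  have hF2 : F 2 ⁻¹' sets 2 = εp ⁻¹' {e} := rfl
  rw [hF0, hF1, hF2, Set.iInter₂_congr (fun j (_ : j ∈ Finset.range k) => hc j)] at h
  calc μ ((X ⁻¹' {k}) ∩ (Y ⁻¹' {y}) ∩ (εp ⁻¹' {e}) ∩ ⋂ j ∈ Finset.range k, ε j ⁻¹' {b j})
      = μ ((X ⁻¹' {k}) ∩ ((Y ⁻¹' {y}) ∩ ((εp ⁻¹' {e}) ∩ ⋂ j ∈ Finset.range k, ε j ⁻¹' {b j}))) := by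
        rw [Set.inter_assoc, Set.inter_assoc]
    _ = μ (X ⁻¹' {k}) * (μ (Y ⁻¹' {y}) * (μ (εp ⁻¹' {e})
          * ∏ j ∈ Finset.range k, μ (ε j ⁻¹' {b j}))) := by
        rw [h]; simp [Finset.prod_congr rfl fun j _ => congrArg μ (hc j)]
    _ = _ := by ring

private lemma binom_meas {Ω : Type*} [MeasurableSpace Ω] (μ : Measure Ω) [IsProbabilityMeasure μ]
    (p : ℝ) (hp0 : 0 < p) (hp1 : p < 1)
    (X Y εp : Ω → ℕ) (ε : ℕ → Ω → ℕ)
    (hXm : Measurable X) (hYm : Measurable Y) (hεpm : Measurable εp)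
    (hεm : ∀ j, Measurable (ε j))
    (hε01 : ∀ j ω, ε j ω ≤ 1)
    (hεP : ∀ j, μ {ω | ε j ω = 1} = ENNReal.ofReal (1 - p))
    (hindep : iIndepFun
      (fun i : ℕ => if i = 0 then X else if i = 1 then Y else if i = 2 then εp
        else ε (i - 3)) μ)
    (k y e a : ℕ) :
    μ ((X ⁻¹' {k}) ∩ (Y ⁻¹' {y}) ∩ (εp ⁻¹' {e}) ∩ {ω | ∑ j ∈ Finset.range k, ε j ω = a})
      = μ (X ⁻¹' {k}) * μ (Y ⁻¹' {y}) * μ (εp ⁻¹' {e})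
        * ENNReal.ofReal ((k.choose a : ℝ) * ((1-p)^a * p^(k-a))) := by
  classical
  set A : Set Ω := (X ⁻¹' {k}) ∩ (Y ⁻¹' {y}) ∩ (εp ⁻¹' {e}) with hA
  set pat : Finset ℕ → Set Ω :=
    fun s => ⋂ j ∈ Finset.range k, ε j ⁻¹' {if j ∈ s then 1 else 0} with hpat
  have hone : ∀ j, μ (ε j ⁻¹' {1}) = ENNReal.ofReal (1-p) := fun j => hεP j
  have hzero : ∀ j, μ (ε j ⁻¹' {0}) = ENNReal.ofReal p := by
    intro j
    have hc : ε j ⁻¹' {0} = {ω | ε j ω = 1}ᶜ := by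
      ext ω
      simp only [Set.mem_preimage, Set.mem_singleton_iff, Set.mem_compl_iff, Set.mem_setOf_eq]
      have := hε01 j ω; omega
    have hms : MeasurableSet {ω | ε j ω = 1} := (hεm j) (measurableSet_singleton 1)
    rw [hc, prob_compl_eq_one_sub hms, hεP j]
    have hadd : ENNReal.ofReal (1-p) + ENNReal.ofReal p = 1 := by
      rw [← ENNReal.ofReal_add (by linarith) (by linarith)]
      norm_num
    rw [← hadd, ENNReal.add_sub_cancel_left ENNReal.ofReal_ne_top]
  -- decomposition of the sum event
  have hdecomp : {ω | ∑ j ∈ Finset.range k, ε j ω = a}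
      = ⋃ s ∈ (Finset.range k).powersetCard a, pat s := by
    ext ω
    simp only [Set.mem_setOf_eq, Set.mem_iUnion, Finset.mem_powersetCard, hpat,
      Set.mem_iInter, Set.mem_preimage, Set.mem_singleton_iff]
    constructor
    · intro hsum
      refine ⟨(Finset.range k).filter (fun j => ε j ω = 1), ⟨Finset.filter_subset _ _, ?_⟩, ?_⟩
      · rw [← hsum, Finset.card_filter]
        refine Finset.sum_congr rfl fun j hj => ?_
        rcases Nat.le_one_iff_eq_zero_or_eq_one.mp (hε01 j ω) with h|h
        · simp [h]
        · simp [h]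
      · intro j hj
        rcases Nat.le_one_iff_eq_zero_or_eq_one.mp (hε01 j ω) with h|h
        · rw [if_neg (by simp [Finset.mem_filter, h]), h]
        · rw [if_pos (by simp [Finset.mem_filter, h, hj]), h]
    · rintro ⟨s, ⟨hsub, hcard⟩, hpatm⟩
      have hrw : ∑ j ∈ Finset.range k, ε j ω
          = ∑ j ∈ Finset.range k, (if j ∈ s then 1 else 0) :=
        Finset.sum_congr rfl fun j hj => hpatm j hj
      rw [hrw, Finset.sum_ite_mem, Finset.inter_eq_right.mpr hsub, Finset.sum_const,
        smul_eq_mul, mul_one, hcard]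
  -- disjointness
  have hdisjpat : (↑((Finset.range k).powersetCard a) : Set (Finset ℕ)).PairwiseDisjoint
      (fun s => A ∩ pat s) := by
    intro s hs t ht hst
    simp only [Finset.mem_coe, Finset.mem_powersetCard] at hs ht
    refine Set.disjoint_left.mpr fun ω hωs hωt => hst ?_
    have hs' := hωs.2; have ht' := hωt.2
    simp only [hpat, Set.mem_iInter, Set.mem_preimage, Set.mem_singleton_iff] at hs' ht'
    ext j
    by_cases hj : j ∈ Finset.range k
    · have h1 := hs' j hj; have h2 := ht' j hj
      by_cases hjs : j ∈ s <;> by_cases hjt : j ∈ t <;>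
        simp [hjs, hjt] at h1 h2 ⊢ <;> omega
    · constructor
      · intro h; exact absurd (hs.1 h) hj
      · intro h; exact absurd (ht.1 h) hj
  have hmeaspat : ∀ s ∈ (Finset.range k).powersetCard a, MeasurableSet (A ∩ pat s) := by
    intro s _
    refine MeasurableSet.inter ?_ ?_
    · exact ((hXm (measurableSet_singleton _)).inter (hYm (measurableSet_singleton _))).inter
        (hεpm (measurableSet_singleton _))
    · exact MeasurableSet.biInter (Finset.range k).countable_toSet
        fun j _ => (hεm j) (measurableSet_singleton _)
  -- measure computation
  have key : μ (A ∩ {ω | ∑ j ∈ Finset.range k, ε j ω = a})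
      = ∑ s ∈ (Finset.range k).powersetCard a, μ (A ∩ pat s) := by
    rw [hdecomp, Set.inter_iUnion₂, measure_biUnion_finset hdisjpat hmeaspat]
  have hprodval : ∀ s ∈ (Finset.range k).powersetCard a,
      μ (A ∩ pat s) = μ (X ⁻¹' {k}) * μ (Y ⁻¹' {y}) * μ (εp ⁻¹' {e})
        * ENNReal.ofReal ((1-p)^a * p^(k-a)) := by
    intro s hs
    rw [Finset.mem_powersetCard] at hs
    have := atom_meas μ X Y εp ε hindep k y e (fun j => if j ∈ s then 1 else 0)
    rw [hA]
    rw [show A ∩ pat s = (X ⁻¹' {k}) ∩ (Y ⁻¹' {y}) ∩ (εp ⁻¹' {e}) ∩ pat s from rfl] at *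
    rw [this]
    congr 1
    calc ∏ j ∈ Finset.range k, μ (ε j ⁻¹' {if j ∈ s then 1 else 0})
        = ∏ j ∈ Finset.range k,
            (if j ∈ s then ENNReal.ofReal (1-p) else ENNReal.ofReal p) := by
          refine Finset.prod_congr rfl fun j _ => ?_
          split_ifs with h
          · exact hone j
          · exact hzero j
      _ = ENNReal.ofReal (1-p) ^ a * ENNReal.ofReal p ^ (k - a) := by
          rw [Finset.prod_ite, Finset.prod_const, Finset.prod_const,
            Finset.filter_mem_eq_inter, Finset.inter_eq_right.mpr hs.1, hs.2]
          congr 2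
          rw [← Finset.sdiff_eq_filter, Finset.card_sdiff_of_subset hs.1, Finset.card_range, hs.2]
      _ = ENNReal.ofReal ((1-p)^a * p^(k-a)) := by
          rw [ENNReal.ofReal_mul (pow_nonneg (by linarith) _), ENNReal.ofReal_pow (by linarith),
            ENNReal.ofReal_pow (by linarith)]
  have hAint : (X ⁻¹' {k}) ∩ (Y ⁻¹' {y}) ∩ (εp ⁻¹' {e}) ∩ {ω | ∑ j ∈ Finset.range k, ε j ω = a}
      = A ∩ {ω | ∑ j ∈ Finset.range k, ε j ω = a} := rfl
  rw [hAint, key, Finset.sum_congr rfl hprodval, Finset.sum_const, Finset.card_powersetCard,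
    Finset.card_range, nsmul_eq_mul]
  have hsplit : ENNReal.ofReal ((k.choose a : ℝ) * ((1-p)^a * p^(k-a)))
      = (k.choose a : ENNReal) * ENNReal.ofReal ((1-p)^a * p^(k-a)) := by
    rw [ENNReal.ofReal_mul (Nat.cast_nonneg _), ENNReal.ofReal_natCast]
  rw [hsplit]
  ring

private lemma joint_meas {Ω : Type*} [MeasurableSpace Ω] (μ : Measure Ω) [IsProbabilityMeasure μ]
    (p θ : ℝ) (hp0 : 0 < p) (hp1 : p < 1) (hθ0 : 0 < θ) (hθ1 : θ < 1)
    (X Y εp : Ω → ℕ) (ε : ℕ → Ω → ℕ)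
    (hXm : Measurable X) (hYm : Measurable Y) (hεpm : Measurable εp)
    (hεm : ∀ j, Measurable (ε j))
    (hXY : IdentDistrib X Y μ μ)
    (hεp01 : ∀ ω, εp ω ≤ 1)
    (hεpp : μ {ω | εp ω = 1} = ENNReal.ofReal p)
    (hε01 : ∀ j ω, ε j ω ≤ 1)
    (hεP : ∀ j, μ {ω | ε j ω = 1} = ENNReal.ofReal (1 - p))
    (hindep : iIndepFun
      (fun i : ℕ => if i = 0 then X else if i = 1 then Y else if i = 2 then εp
        else ε (i - 3)) μ)
    (hgeomX : ∀ k : ℕ, μ (X ⁻¹' {k}) = ENNReal.ofReal ((1 - θ) * θ ^ k))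
    (m n : ℕ) :
    μ ((fun ω => (∑ j ∈ Finset.range (X ω), ε j ω) + εp ω * Y ω) ⁻¹' {m}
        ∩ (fun ω => (∑ j ∈ Finset.range (X ω), (1 - ε j ω)) + (1 - εp ω) * Y ω) ⁻¹' {n})
      = ENNReal.ofReal ((1 - θ) * θ ^ m) * ENNReal.ofReal ((1 - θ) * θ ^ n) := by
  classical
  have hθq : (0:ℝ) ≤ 1 - θ := by linarith
  have hq : (0:ℝ) ≤ 1 - p := by linarith
  have hYk : ∀ y : ℕ, μ (Y ⁻¹' {y}) = ENNReal.ofReal ((1-θ)*θ^y) := fun y => by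
    rw [← hXY.measure_mem_eq (measurableSet_singleton y), hgeomX]
  have hεp1 : μ (εp ⁻¹' {1}) = ENNReal.ofReal p := hεpp
  have hεp0 : μ (εp ⁻¹' {0}) = ENNReal.ofReal (1-p) := by
    have hc : εp ⁻¹' {0} = {ω | εp ω = 1}ᶜ := by
      ext ω
      simp only [Set.mem_preimage, Set.mem_singleton_iff, Set.mem_compl_iff, Set.mem_setOf_eq]
      have := hεp01 ω; omega
    have hms : MeasurableSet {ω : Ω | εp ω = 1} := hεpm (measurableSet_singleton 1)
    rw [hc, prob_compl_eq_one_sub hms, hεpp]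
    have hadd : ENNReal.ofReal (1-p) + ENNReal.ofReal p = 1 := by
      rw [← ENNReal.ofReal_add (by linarith) (by linarith)]; norm_num
    rw [← hadd, ENNReal.add_sub_cancel_right ENNReal.ofReal_ne_top]
  set B1 : ℕ → Set Ω := fun y => (X ⁻¹' {m-y+n}) ∩ (Y ⁻¹' {y}) ∩ (εp ⁻¹' {1})
    ∩ {ω | ∑ j ∈ Finset.range (m-y+n), ε j ω = m-y} with hB1def
  set B0 : ℕ → Set Ω := fun y => (X ⁻¹' {m+n-y}) ∩ (Y ⁻¹' {y}) ∩ (εp ⁻¹' {0})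
    ∩ {ω | ∑ j ∈ Finset.range (m+n-y), ε j ω = m} with hB0def
  have hST : ∀ (ω : Ω) (k : ℕ),
      (∑ j ∈ Finset.range k, (1 - ε j ω)) + (∑ j ∈ Finset.range k, ε j ω) = k := by
    intro ω k
    rw [← Finset.sum_add_distrib]
    rw [Finset.sum_congr rfl (fun j _ => by have := hε01 j ω; omega : ∀ j ∈ Finset.range k,
      (1 - ε j ω) + ε j ω = 1)]
    rw [Finset.sum_const, smul_eq_mul, mul_one, Finset.card_range]
  have hdec : ((fun ω => (∑ j ∈ Finset.range (X ω), ε j ω) + εp ω * Y ω) ⁻¹' {m}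
        ∩ (fun ω => (∑ j ∈ Finset.range (X ω), (1 - ε j ω)) + (1 - εp ω) * Y ω) ⁻¹' {n})
      = (⋃ y ∈ Finset.range (m+1), B1 y) ∪ (⋃ y ∈ Finset.range (n+1), B0 y) := by
    ext ω
    simp only [hB1def, hB0def, Set.mem_inter_iff, Set.mem_preimage, Set.mem_singleton_iff,
      Set.mem_union, Set.mem_iUnion, Finset.mem_range, Set.mem_setOf_eq, exists_prop]
    have hk := hST ω (X ω)
    constructor
    · rintro ⟨h1, h2⟩
      rcases Nat.le_one_iff_eq_zero_or_eq_one.mp (hεp01 ω) with he|he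
      · right
        rw [he] at h1 h2
        refine ⟨Y ω, by omega, ⟨⟨by omega, rfl⟩, he⟩, ?_⟩
        rw [show m+n-Y ω = X ω by omega]
        omega
      · left
        rw [he] at h1 h2
        refine ⟨Y ω, by omega, ⟨⟨by omega, rfl⟩, he⟩, ?_⟩
        rw [show m-Y ω+n = X ω by omega]
        omega
    · rintro (⟨y, hy, ⟨⟨hX, hY⟩, he⟩, hsum⟩ | ⟨y, hy, ⟨⟨hX, hY⟩, he⟩, hsum⟩) <;>
        subst hY <;> rw [← hX] at hsum <;> rw [he] <;> constructor <;> omega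
  have hB1meas : ∀ y : ℕ, μ (B1 y) = ENNReal.ofReal ((1-θ)*θ^(m-y+n) * ((1-θ)*θ^y) * p
      * (((m-y+n).choose (m-y) : ℝ) * ((1-p)^(m-y) * p^(m-y+n-(m-y))))) := by
    intro y
    have na : (0:ℝ) ≤ (1-θ)*θ^(m-y+n) := mul_nonneg hθq (pow_nonneg hθ0.le _)
    have nb : (0:ℝ) ≤ (1-θ)*θ^y := mul_nonneg hθq (pow_nonneg hθ0.le _)
    rw [hB1def]
    rw [binom_meas μ p hp0 hp1 X Y εp ε hXm hYm hεpm hεm hε01 hεP hindep (m-y+n) y 1 (m-y)]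
    rw [hgeomX, hYk, hεp1, ← ENNReal.ofReal_mul na, ← ENNReal.ofReal_mul (mul_nonneg na nb),
      ← ENNReal.ofReal_mul (mul_nonneg (mul_nonneg na nb) hp0.le)]
  have hB0meas : ∀ y : ℕ, μ (B0 y) = ENNReal.ofReal ((1-θ)*θ^(m+n-y) * ((1-θ)*θ^y) * (1-p)
      * (((m+n-y).choose m : ℝ) * ((1-p)^m * p^(m+n-y-m)))) := by
    intro y
    have na : (0:ℝ) ≤ (1-θ)*θ^(m+n-y) := mul_nonneg hθq (pow_nonneg hθ0.le _)
    have nb : (0:ℝ) ≤ (1-θ)*θ^y := mul_nonneg hθq (pow_nonneg hθ0.le _)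
    rw [hB0def]
    rw [binom_meas μ p hp0 hp1 X Y εp ε hXm hYm hεpm hεm hε01 hεP hindep (m+n-y) y 0 m]
    rw [hgeomX, hYk, hεp0, ← ENNReal.ofReal_mul na, ← ENNReal.ofReal_mul (mul_nonneg na nb),
      ← ENNReal.ofReal_mul (mul_nonneg (mul_nonneg na nb) hq)]
  have hd1 : (↑(Finset.range (m+1)) : Set ℕ).PairwiseDisjoint B1 := by
    intro a ha b hb hab
    refine Set.disjoint_left.mpr fun ω hωa hωb => hab ?_
    simp only [hB1def, Set.mem_inter_iff, Set.mem_preimage, Set.mem_singleton_iff,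
      Set.mem_setOf_eq] at hωa hωb
    rw [← hωa.1.1.2, ← hωb.1.1.2]
  have hd0 : (↑(Finset.range (n+1)) : Set ℕ).PairwiseDisjoint B0 := by
    intro a ha b hb hab
    refine Set.disjoint_left.mpr fun ω hωa hωb => hab ?_
    simp only [hB0def, Set.mem_inter_iff, Set.mem_preimage, Set.mem_singleton_iff,
      Set.mem_setOf_eq] at hωa hωb
    rw [← hωa.1.1.2, ← hωb.1.1.2]
  have hmB1 : ∀ y ∈ Finset.range (m+1), MeasurableSet (B1 y) := by
    intro y _
    refine (((hXm (measurableSet_singleton _)).inter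
      (hYm (measurableSet_singleton _))).inter
      (hεpm (measurableSet_singleton _))).inter ?_
    exact (Finset.measurable_sum _ fun j _ => hεm j) (measurableSet_singleton _)
  have hmB0 : ∀ y ∈ Finset.range (n+1), MeasurableSet (B0 y) := by
    intro y _
    refine (((hXm (measurableSet_singleton _)).inter
      (hYm (measurableSet_singleton _))).inter
      (hεpm (measurableSet_singleton _))).inter ?_
    exact (Finset.measurable_sum _ fun j _ => hεm j) (measurableSet_singleton _)
  have hdu : Disjoint (⋃ y ∈ Finset.range (m+1), B1 y) (⋃ y ∈ Finset.range (n+1), B0 y) := by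
    refine Set.disjoint_left.mpr fun ω hω1 hω0 => ?_
    simp only [hB1def, hB0def, Set.mem_iUnion, Set.mem_inter_iff, Set.mem_preimage,
      Set.mem_singleton_iff, Set.mem_setOf_eq, exists_prop] at hω1 hω0
    obtain ⟨y1, _, ⟨⟨_, _⟩, he1⟩, _⟩ := hω1
    obtain ⟨y0, _, ⟨⟨_, _⟩, he0⟩, _⟩ := hω0
    omega
  have nterm1 : ∀ y ∈ Finset.range (m+1), (0:ℝ) ≤ (1-θ)*θ^(m-y+n) * ((1-θ)*θ^y) * p
      * (((m-y+n).choose (m-y) : ℝ) * ((1-p)^(m-y) * p^(m-y+n-(m-y)))) := by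
    intro y _
    have na : (0:ℝ) ≤ (1-θ)*θ^(m-y+n) := mul_nonneg hθq (pow_nonneg hθ0.le _)
    have nb : (0:ℝ) ≤ (1-θ)*θ^y := mul_nonneg hθq (pow_nonneg hθ0.le _)
    exact mul_nonneg (mul_nonneg (mul_nonneg na nb) hp0.le)
      (mul_nonneg (Nat.cast_nonneg _) (mul_nonneg (pow_nonneg hq _) (pow_nonneg hp0.le _)))
  have nterm0 : ∀ y ∈ Finset.range (n+1), (0:ℝ) ≤ (1-θ)*θ^(m+n-y) * ((1-θ)*θ^y) * (1-p)
      * (((m+n-y).choose m : ℝ) * ((1-p)^m * p^(m+n-y-m))) := by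
    intro y _
    have na : (0:ℝ) ≤ (1-θ)*θ^(m+n-y) := mul_nonneg hθq (pow_nonneg hθ0.le _)
    have nb : (0:ℝ) ≤ (1-θ)*θ^y := mul_nonneg hθq (pow_nonneg hθ0.le _)
    exact mul_nonneg (mul_nonneg (mul_nonneg na nb) hq)
      (mul_nonneg (Nat.cast_nonneg _) (mul_nonneg (pow_nonneg hq _) (pow_nonneg hp0.le _)))
  rw [hdec, measure_union hdu (MeasurableSet.biUnion (Finset.range (n+1)).countable_toSet hmB0),
    measure_biUnion_finset hd1 hmB1, measure_biUnion_finset hd0 hmB0,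
    Finset.sum_congr rfl (fun y _ => hB1meas y), Finset.sum_congr rfl (fun y _ => hB0meas y),
    ← ENNReal.ofReal_sum_of_nonneg nterm1, ← ENNReal.ofReal_sum_of_nonneg nterm0,
    ← ENNReal.ofReal_add (Finset.sum_nonneg nterm1) (Finset.sum_nonneg nterm0),
    real_id p θ m n,
    ENNReal.ofReal_mul (mul_nonneg hθq (pow_nonneg hθ0.le _))]


/-- If `X` is geometrically distributed, then the linear forms
`L₁ = X̃_{1-p} + ε(p)·Y` and `L₂ = X̃_p + (1-ε(p))·Y` are independent. -/
theorem geometric_implies_indep_linear_forms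
    {Ω : Type*} [MeasurableSpace Ω] (μ : Measure Ω) [IsProbabilityMeasure μ]
    (p : ℝ) (hp0 : 0 < p) (hp1 : p < 1)
    (X Y εp : Ω → ℕ) (ε : ℕ → Ω → ℕ)
    (hXm : Measurable X) (hYm : Measurable Y) (hεpm : Measurable εp)
    (hεm : ∀ j, Measurable (ε j))
    -- X and Y are identically distributed
    (hXY : IdentDistrib X Y μ μ)
    -- ε(p) is a Bernoulli random variable with parameter p
    (hεp01 : ∀ ω, εp ω ≤ 1)
    (hεpp : μ {ω | εp ω = 1} = ENNReal.ofReal p)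
    -- each ε_j is a Bernoulli random variable with parameter 1 - p
    (hε01 : ∀ j ω, ε j ω ≤ 1)
    (hεP : ∀ j, μ {ω | ε j ω = 1} = ENNReal.ofReal (1 - p))
    -- X, Y, ε(p) and the ε_j's are mutually independent
    (hindep : iIndepFun
      (fun i : ℕ => if i = 0 then X else if i = 1 then Y else if i = 2 then εp
        else ε (i - 3)) μ)
    -- X is geometrically distributed
    (hgeom : ∃ θ : ℝ, 0 < θ ∧ θ < 1 ∧
      ∀ k : ℕ, μ {ω | X ω = k} = ENNReal.ofReal ((1 - θ) * θ ^ k)) :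
    IndepFun (fun ω => (∑ j ∈ Finset.range (X ω), ε j ω) + εp ω * Y ω)
      (fun ω => (∑ j ∈ Finset.range (X ω), (1 - ε j ω)) + (1 - εp ω) * Y ω) μ := by
  classical
  obtain ⟨θ, hθ0, hθ1, hgeomX⟩ := hgeom
  set L1 : Ω → ℕ := fun ω => (∑ j ∈ Finset.range (X ω), ε j ω) + εp ω * Y ω with hL1def
  set L2 : Ω → ℕ := fun ω => (∑ j ∈ Finset.range (X ω), (1 - ε j ω)) + (1 - εp ω) * Y ω
    with hL2def
  set G : ℕ → ENNReal := fun k => ENNReal.ofReal ((1 - θ) * θ ^ k) with hGdef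
  have hgeomX' : ∀ k : ℕ, μ (X ⁻¹' {k}) = ENNReal.ofReal ((1 - θ) * θ ^ k) := fun k => hgeomX k
  have hjoint : ∀ m n : ℕ, μ (L1 ⁻¹' {m} ∩ L2 ⁻¹' {n}) = G m * G n := fun m n =>
    joint_meas μ p θ hp0 hp1 hθ0 hθ1 X Y εp ε hXm hYm hεpm hεm hXY hεp01 hεpp hε01 hεP
      hindep hgeomX' m n
  -- measurability of L1 and L2
  have hL1m : Measurable L1 := by
    apply measurable_to_countable'
    intro c
    have hdec : L1 ⁻¹' {c} = ⋃ k : ℕ,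
        (X ⁻¹' {k} ∩ (fun ω => (∑ j ∈ Finset.range k, ε j ω) + εp ω * Y ω) ⁻¹' {c}) := by
      ext ω
      simp only [hL1def, Set.mem_preimage, Set.mem_singleton_iff, Set.mem_iUnion,
        Set.mem_inter_iff]
      constructor
      · intro h; exact ⟨X ω, rfl, h⟩
      · rintro ⟨k, hk, h⟩; rw [hk]; exact h
    rw [hdec]
    refine MeasurableSet.iUnion fun k => (hXm (measurableSet_singleton _)).inter ?_
    exact ((Finset.measurable_sum _ fun j _ => hεm j).add (hεpm.mul hYm))
      (measurableSet_singleton _)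
  have hL2m : Measurable L2 := by
    apply measurable_to_countable'
    intro c
    have hdec : L2 ⁻¹' {c} = ⋃ k : ℕ,
        (X ⁻¹' {k} ∩ (fun ω => (∑ j ∈ Finset.range k, (1 - ε j ω)) + (1 - εp ω) * Y ω)
          ⁻¹' {c}) := by
      ext ω
      simp only [hL2def, Set.mem_preimage, Set.mem_singleton_iff, Set.mem_iUnion,
        Set.mem_inter_iff]
      constructor
      · intro h; exact ⟨X ω, rfl, h⟩
      · rintro ⟨k, hk, h⟩; rw [hk]; exact h
    rw [hdec]
    refine MeasurableSet.iUnion fun k => (hXm (measurableSet_singleton _)).inter ?_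
    refine ((Finset.measurable_sum _ fun j _ => ?_).add
      ((measurable_from_top.comp hεpm).mul hYm)) (measurableSet_singleton _)
    exact (measurable_from_top (f := fun a : ℕ => 1 - a)).comp (hεm j)
  -- geometric series sums to one
  have hGsum : ∑' k : ℕ, G k = 1 := by
    have hnn : ∀ k : ℕ, 0 ≤ (1 - θ) * θ ^ k := fun k =>
      mul_nonneg (by linarith) (pow_nonneg hθ0.le _)
    have hsumm : Summable (fun k : ℕ => (1 - θ) * θ ^ k) :=
      (summable_geometric_of_lt_one hθ0.le hθ1).mul_left _
    have hval : ∑' k : ℕ, (1 - θ) * θ ^ k = 1 := by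
      rw [tsum_mul_left, tsum_geometric_of_lt_one hθ0.le hθ1]
      exact mul_inv_cancel₀ (by linarith)
    simp only [hGdef]
    rw [← ENNReal.ofReal_tsum_of_nonneg hnn hsumm, hval, ENNReal.ofReal_one]
  -- marginals
  have hmarg2 : ∀ n : ℕ, μ (L2 ⁻¹' {n}) = G n := by
    intro n
    have hdec : L2 ⁻¹' {n} = ⋃ m : ℕ, (L1 ⁻¹' {m} ∩ L2 ⁻¹' {n}) := by
      ext ω
      simp only [Set.mem_preimage, Set.mem_singleton_iff, Set.mem_iUnion, Set.mem_inter_iff]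
      exact ⟨fun h => ⟨L1 ω, rfl, h⟩, fun ⟨m, _, h⟩ => h⟩
    have hdisj : Pairwise (Function.onFun Disjoint fun m => L1 ⁻¹' {m} ∩ L2 ⁻¹' {n}) := by
      intro i j hij
      refine Set.disjoint_left.mpr fun ω h1 h2 => hij ?_
      have e1 : L1 ω = i := h1.1
      have e2 : L1 ω = j := h2.1
      omega
    rw [hdec, measure_iUnion hdisj fun m =>
      (hL1m (measurableSet_singleton _)).inter (hL2m (measurableSet_singleton _))]
    rw [tsum_congr fun m => hjoint m n, ENNReal.tsum_mul_right, hGsum, one_mul]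
  have hmarg1 : ∀ m : ℕ, μ (L1 ⁻¹' {m}) = G m := by
    intro m
    have hdec : L1 ⁻¹' {m} = ⋃ n : ℕ, (L1 ⁻¹' {m} ∩ L2 ⁻¹' {n}) := by
      ext ω
      simp only [Set.mem_preimage, Set.mem_singleton_iff, Set.mem_iUnion, Set.mem_inter_iff]
      exact ⟨fun h => ⟨L2 ω, h, rfl⟩, fun ⟨n, h, _⟩ => h⟩
    have hdisj : Pairwise (Function.onFun Disjoint fun n => L1 ⁻¹' {m} ∩ L2 ⁻¹' {n}) := by
      intro i j hij
      refine Set.disjoint_left.mpr fun ω h1 h2 => hij ?_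
      have e1 : L2 ω = i := h1.2
      have e2 : L2 ω = j := h2.2
      omega
    rw [hdec, measure_iUnion hdisj fun n =>
      (hL1m (measurableSet_singleton _)).inter (hL2m (measurableSet_singleton _))]
    rw [tsum_congr fun n => hjoint m n, ENNReal.tsum_mul_left, hGsum, mul_one]
  -- independence
  rw [indepFun_iff_measure_inter_preimage_eq_mul]
  intro s t hs ht
  have hmeas2t : μ (L2 ⁻¹' t) = ∑' n : t, G ↑n := by
    have hdec : L2 ⁻¹' t = ⋃ n ∈ t, L2 ⁻¹' {n} := by
      ext ω
      simp only [Set.mem_preimage, Set.mem_iUnion, Set.mem_singleton_iff, exists_prop]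
      exact ⟨fun h => ⟨L2 ω, h, rfl⟩, fun ⟨n, hn, h⟩ => h ▸ hn⟩
    have hdisj : t.PairwiseDisjoint fun n => L2 ⁻¹' {n} := by
      intro i _ j _ hij
      refine Set.disjoint_left.mpr fun ω h1 h2 => hij ?_
      have e1 : L2 ω = i := h1
      have e2 : L2 ω = j := h2
      omega
    rw [hdec, measure_biUnion t.to_countable hdisj fun n _ =>
      hL2m (measurableSet_singleton _)]
    exact tsum_congr fun n => hmarg2 n
  have hmeas1s : μ (L1 ⁻¹' s) = ∑' m : s, G ↑m := by
    have hdec : L1 ⁻¹' s = ⋃ m ∈ s, L1 ⁻¹' {m} := by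
      ext ω
      simp only [Set.mem_preimage, Set.mem_iUnion, Set.mem_singleton_iff, exists_prop]
      exact ⟨fun h => ⟨L1 ω, h, rfl⟩, fun ⟨n, hn, h⟩ => h ▸ hn⟩
    have hdisj : s.PairwiseDisjoint fun m => L1 ⁻¹' {m} := by
      intro i _ j _ hij
      refine Set.disjoint_left.mpr fun ω h1 h2 => hij ?_
      have e1 : L1 ω = i := h1
      have e2 : L1 ω = j := h2
      omega
    rw [hdec, measure_biUnion s.to_countable hdisj fun m _ =>
      hL1m (measurableSet_singleton _)]
    exact tsum_congr fun m => hmarg1 m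
  have hint : ∀ m : ℕ, μ (L1 ⁻¹' {m} ∩ L2 ⁻¹' t) = G m * μ (L2 ⁻¹' t) := by
    intro m
    have hdec : L1 ⁻¹' {m} ∩ L2 ⁻¹' t = ⋃ n ∈ t, (L1 ⁻¹' {m} ∩ L2 ⁻¹' {n}) := by
      ext ω
      simp only [Set.mem_inter_iff, Set.mem_preimage, Set.mem_iUnion, Set.mem_singleton_iff,
        exists_prop]
      exact ⟨fun ⟨h1, h2⟩ => ⟨L2 ω, h2, h1, rfl⟩, fun ⟨n, hn, h1, h2⟩ => ⟨h1, h2 ▸ hn⟩⟩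
    have hdisj : t.PairwiseDisjoint fun n => L1 ⁻¹' {m} ∩ L2 ⁻¹' {n} := by
      intro i _ j _ hij
      refine Set.disjoint_left.mpr fun ω h1 h2 => hij ?_
      have e1 : L2 ω = i := h1.2
      have e2 : L2 ω = j := h2.2
      omega
    rw [hdec, measure_biUnion t.to_countable hdisj fun n _ =>
      (hL1m (measurableSet_singleton _)).inter (hL2m (measurableSet_singleton _))]
    calc ∑' (q : ↑t), μ (L1 ⁻¹' {m} ∩ L2 ⁻¹' {(q : ℕ)}) = ∑' (q : ↑t), G m * G ↑q :=
        tsum_congr fun q => hjoint m ↑q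
      _ = G m * ∑' (q : ↑t), G ↑q := ENNReal.tsum_mul_left
      _ = G m * μ (L2 ⁻¹' t) := by rw [hmeas2t]
  have hdec : L1 ⁻¹' s ∩ L2 ⁻¹' t = ⋃ m ∈ s, (L1 ⁻¹' {m} ∩ L2 ⁻¹' t) := by
    ext ω
    simp only [Set.mem_inter_iff, Set.mem_preimage, Set.mem_iUnion, Set.mem_singleton_iff,
      exists_prop]
    exact ⟨fun ⟨h1, h2⟩ => ⟨L1 ω, h1, rfl, h2⟩, fun ⟨m, hm, h1, h2⟩ => ⟨h1 ▸ hm, h2⟩⟩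
  have hdisjs : s.PairwiseDisjoint fun m => L1 ⁻¹' {m} ∩ L2 ⁻¹' t := by
    intro i _ j _ hij
    refine Set.disjoint_left.mpr fun ω h1 h2 => hij ?_
    have e1 : L1 ω = i := h1.1
    have e2 : L1 ω = j := h2.1
    omega
  rw [hdec, measure_biUnion s.to_countable hdisjs fun m _ =>
    (hL1m (measurableSet_singleton _)).inter (hL2m ht)]
  calc ∑' (q : ↑s), μ (L1 ⁻¹' {(q : ℕ)} ∩ L2 ⁻¹' t) = ∑' (q : ↑s), G ↑q * μ (L2 ⁻¹' t) :=
      tsum_congr fun q => hint ↑q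
    _ = (∑' (q : ↑s), G ↑q) * μ (L2 ⁻¹' t) := ENNReal.tsum_mul_right
    _ = μ (L1 ⁻¹' s) * μ (L2 ⁻¹' t) := by rw [hmeas1s]
end

section
/- Suppose the probability generating function 𝒫 of the ℕ-valued random variable X satisfies, for all real u, v with 0 ≤ u ≤ 1 and 0 ≤ v ≤ 1, the functional equation 𝒫((1-p)u + pv)·(p𝒫(u) + (1-p)𝒫(v)) = 𝒫((1-p)u + p)·(p𝒫(u) + (1-p)) · 𝒫((1-p) + pv)·(p + (1-p)𝒫(v)). Then 𝒫(0) > 0, i.e. P(X = 0) > 0. -/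
open MeasureTheory ProbabilityTheory

/-- If the probability generating function `𝒫` of an `ℕ`-valued random variable `X`
satisfies the independence functional equation on `[0,1] × [0,1]`, then
`𝒫(0) > 0`, i.e. `P(X = 0) > 0`. -/
theorem pgf_functional_equation_implies_pos_at_zero
    {Ω : Type*} [MeasurableSpace Ω] (μ : Measure Ω) [IsProbabilityMeasure μ]
    (p : ℝ) (hp0 : 0 < p) (hp1 : p < 1)
    (X : Ω → ℕ) (hXm : Measurable X)
    (P : ℝ → ℝ) (hP : ∀ t : ℝ, P t = ∫ ω, t ^ X ω ∂μ)
    (hfe : ∀ u v : ℝ, 0 ≤ u → u ≤ 1 → 0 ≤ v → v ≤ 1 →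
      P ((1 - p) * u + p * v) * (p * P u + (1 - p) * P v) =
        P ((1 - p) * u + p) * (p * P u + (1 - p)) *
          (P ((1 - p) + p * v) * (p + (1 - p) * P v))) :
    0 < P 0 ∧ 0 < μ {ω | X ω = 0} := by
  have hInt : ∀ t : ℝ, 0 ≤ t → t ≤ 1 → Integrable (fun ω => t ^ X ω) μ := by
    intro t ht0 ht1
    apply Integrable.mono' (integrable_const (1 : ℝ))
    · exact (measurable_const.pow hXm).aestronglyMeasurable
    · filter_upwards with ω
      rw [Real.norm_eq_abs, abs_of_nonneg (pow_nonneg ht0 _)]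
      exact pow_le_one₀ ht0 ht1
  have hpos : ∀ t : ℝ, 0 < t → t ≤ 1 → 0 < P t := by
    intro t ht0 ht1
    rw [hP]
    rw [integral_pos_iff_support_of_nonneg (fun ω => pow_nonneg ht0.le _)
      (hInt t ht0.le ht1)]
    have hsup : Function.support (fun ω => t ^ X ω) = Set.univ :=
      Set.eq_univ_of_forall fun ω => pow_ne_zero _ (ne_of_gt ht0)
    rw [hsup]
    simp
  have hmeas0 : MeasurableSet {ω | X ω = 0} := hXm (measurableSet_singleton 0)
  have hP0 : P 0 = (μ {ω | X ω = 0}).toReal := by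
    rw [hP]
    have hind : (fun ω => (0:ℝ) ^ X ω)
        = Set.indicator {ω | X ω = 0} (fun _ => (1:ℝ)) := by
      ext ω
      by_cases h : X ω = 0
      · simp [h, Set.indicator_of_mem, Set.mem_setOf_eq]
      · simp [Set.indicator_of_notMem, h, zero_pow h]
    rw [hind, integral_indicator_const _ hmeas0]
    simp
    rfl
  have hP0nn : 0 ≤ P 0 := hP0 ▸ ENNReal.toReal_nonneg
  have hp := hpos p hp0 hp1.le
  have hq := hpos (1 - p) (by linarith) (by linarith)
  have h := hfe 0 0 le_rfl zero_le_one le_rfl zero_le_one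
  norm_num at h
  have hne : P 0 ≠ 0 := by
    intro h0
    rw [h0] at h
    ring_nf at h
    nlinarith [mul_pos (mul_pos hp hq) (mul_pos hp0 (by linarith : (0:ℝ) < 1 - p))]
  have hPpos : 0 < P 0 := lt_of_le_of_ne hP0nn (Ne.symm hne)
  refine ⟨hPpos, ?_⟩
  rw [hP0] at hPpos
  exact ENNReal.toReal_pos_iff.mp hPpos |>.1
end

section
/- Suppose the probability generating function 𝒫 of the ℕ-valued random variable X satisfies, for all real u, v with 0 ≤ u ≤ 1 and 0 ≤ v ≤ 1, the functional equation 𝒫((1-p)u + pv)·(p𝒫(u) + (1-p)𝒫(v)) = 𝒫((1-p)u + p)·(p𝒫(u) + (1-p)) · 𝒫((1-p) + pv)·(p + (1-p)𝒫(v)). Then there exists a constant C such that for all u ∈ [0,1], p·𝒫'((1-p)u)/𝒫((1-p)u) + (1-p)·𝒫'(0)/(p·𝒫(u) + (1-p)·𝒫(0)) = C, where 𝒫' denotes the derivative of 𝒫. -/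
open MeasureTheory ProbabilityTheory

/-- If the probability generating function `𝒫` of an `ℕ`-valued random variable `X`
satisfies the independence functional equation on `[0,1] × [0,1]`, then there is a
constant `C` with
`p·𝒫'((1-p)u)/𝒫((1-p)u) + (1-p)·𝒫'(0)/(p·𝒫(u) + (1-p)·𝒫(0)) = C` for all `u ∈ [0,1]`. -/
theorem pgf_functional_equation_implies_derivative_identity
    {Ω : Type*} [MeasurableSpace Ω] (μ : Measure Ω) [IsProbabilityMeasure μ]
    (p : ℝ) (hp0 : 0 < p) (hp1 : p < 1)
    (X : Ω → ℕ) (hXm : Measurable X)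
    (P : ℝ → ℝ) (hP : ∀ t : ℝ, P t = ∫ ω, t ^ X ω ∂μ)
    (hfe : ∀ u v : ℝ, 0 ≤ u → u ≤ 1 → 0 ≤ v → v ≤ 1 →
      P ((1 - p) * u + p * v) * (p * P u + (1 - p) * P v) =
        P ((1 - p) * u + p) * (p * P u + (1 - p)) *
          (P ((1 - p) + p * v) * (p + (1 - p) * P v))) :
    ∃ C : ℝ, ∀ u : ℝ, 0 ≤ u → u ≤ 1 →
      p * deriv P ((1 - p) * u) / P ((1 - p) * u) +
        (1 - p) * deriv P 0 / (p * P u + (1 - p) * P 0) = C := by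
  have hq0 : (0:ℝ) < 1 - p := by linarith
  -- measurability and integrability
  have hmeas : ∀ t : ℝ, AEStronglyMeasurable (fun ω => t ^ X ω) μ :=
    fun t => (measurable_const.pow hXm).aestronglyMeasurable
  have hint : ∀ t : ℝ, |t| ≤ 1 → Integrable (fun ω => t ^ X ω) μ := by
    intro t ht
    refine (integrable_const (1:ℝ)).mono' (hmeas t) ?_
    filter_upwards with ω
    rw [Real.norm_eq_abs, abs_pow]
    exact pow_le_one₀ (abs_nonneg t) ht
  -- positivity of P on (0,1]
  have hPpos0 : ∀ t : ℝ, 0 < t → t ≤ 1 → 0 < P t := by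
    intro t ht0 ht1
    rw [hP]
    rw [integral_pos_iff_support_of_nonneg_ae]
    · have hs : Function.support (fun ω => t ^ X ω) = Set.univ := by
        rw [Set.eq_univ_iff_forall]
        intro ω
        exact (pow_pos ht0 (X ω)).ne'
      rw [hs]
      simp
    · filter_upwards with ω using (pow_pos ht0 (X ω)).le
    · exact hint t (by rw [abs_of_pos ht0]; exact ht1)
  have hPnn : ∀ t : ℝ, 0 ≤ t → 0 ≤ P t := by
    intro t ht
    rw [hP]
    exact integral_nonneg fun ω => pow_nonneg ht _
  -- P 0 > 0 from the functional equation
  have hP0 : 0 < P 0 := by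
    rcases (hPnn 0 le_rfl).lt_or_eq with h | h
    · exact h
    have h00 := hfe 0 0 le_rfl zero_le_one le_rfl zero_le_one
    simp only [mul_zero, add_zero, zero_add] at h00
    rw [← h] at h00
    nlinarith [mul_pos (hPpos0 p hp0 hp1.le) (hPpos0 (1 - p) hq0 (by linarith)),
      mul_pos hp0 hq0]
  have hPpos : ∀ t : ℝ, 0 ≤ t → t ≤ 1 → 0 < P t := by
    intro t ht0 ht1
    rcases ht0.lt_or_eq with h | h
    · exact hPpos0 t h ht1
    · rwa [← h]
  -- differentiability of P on [0,1)
  have hdiff : ∀ t : ℝ, 0 ≤ t → t < 1 → HasDerivAt P (deriv P t) t := by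
    intro t ht0 ht1
    suffices h : DifferentiableAt ℝ P t from h.hasDerivAt
    have hPfun : P = fun x : ℝ => ∫ ω, x ^ X ω ∂μ := funext hP
    set ε : ℝ := (1 - t) / 2 with hεdef
    set r : ℝ := (t + 1) / 2 with hrdef
    have hεpos : 0 < ε := by simp only [hεdef]; linarith
    have hr0 : 0 ≤ r := by simp only [hrdef]; linarith
    have hr1 : r < 1 := by simp only [hrdef]; linarith
    have hxr : ∀ x ∈ Metric.ball t ε, |x| ≤ r := by
      intro x hx
      rw [Metric.mem_ball, Real.dist_eq, abs_lt] at hx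
      rw [abs_le]
      constructor <;> simp only [hεdef, hrdef] at * <;> linarith
    -- summable bound
    have hsum : Summable (fun n : ℕ => ((n:ℝ) + 1) * r ^ n) := by
      have h1 : Summable (fun n : ℕ => (n:ℝ) * r ^ n) := by
        have := summable_pow_mul_geometric_of_norm_lt_one (R := ℝ) 1
          (r := r) (by rwa [Real.norm_eq_abs, abs_of_nonneg hr0])
        simpa using this
      have h2 : Summable (fun n : ℕ => r ^ n) :=
        summable_geometric_of_lt_one hr0 hr1
      simpa [add_mul] using h1.add h2
    set M : ℝ := ∑' n : ℕ, ((n:ℝ) + 1) * r ^ n with hMdef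
    have hMnn : 0 ≤ M :=
      tsum_nonneg fun n => by positivity
    have hbd : ∀ (k : ℕ) (x : ℝ), x ∈ Metric.ball t ε → |(k:ℝ) * x ^ (k - 1)| ≤ M := by
      intro k x hx
      have hxr' := hxr x hx
      have h1 : |(k:ℝ) * x ^ (k - 1)| ≤ (k:ℝ) * r ^ (k - 1) := by
        rw [abs_mul, abs_pow, Nat.abs_cast]
        exact mul_le_mul_of_nonneg_left (pow_le_pow_left₀ (abs_nonneg x) hxr' _)
          (Nat.cast_nonneg k)
      refine h1.trans ?_
      cases k with
      | zero => simpa using hMnn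
      | succ m =>
        have := Summable.le_tsum hsum m (fun n _ => by positivity)
        simpa [Nat.cast_succ, add_comm] using this
    rw [hPfun]
    have hF'm : AEStronglyMeasurable (fun ω => (X ω : ℝ) * t ^ (X ω - 1)) μ := by
      have hm : Measurable (fun ω => (X ω : ℝ) * t ^ (X ω - 1)) :=
        (measurable_from_nat (f := fun k : ℕ => (k : ℝ) * t ^ (k - 1))).comp hXm
      exact hm.aestronglyMeasurable
    have key := hasDerivAt_integral_of_dominated_loc_of_lip
      (μ := μ) (F := fun (x : ℝ) ω => x ^ X ω)
      (F' := fun ω => (X ω : ℝ) * t ^ (X ω - 1))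
      (x₀ := t) (bound := fun _ => M) (s := Metric.ball t ε) (Metric.ball_mem_nhds t hεpos)
      (Filter.Eventually.of_forall fun x => hmeas x)
      (hint t (by rw [abs_of_nonneg ht0]; exact ht1.le))
      hF'm ?_ (integrable_const M) ?_
    · exact key.2.differentiableAt
    · filter_upwards with ω
      refine (convex_ball t ε).lipschitzOnWith_of_nnnorm_hasDerivWithin_le
        (f' := fun x => (X ω : ℝ) * x ^ (X ω - 1))
        (fun x _ => (hasDerivAt_pow (X ω) x).hasDerivWithinAt) ?_
      intro x hx
      rw [← NNReal.coe_le_coe, coe_nnnorm, Real.coe_nnabs, Real.norm_eq_abs,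
        abs_of_nonneg hMnn]
      exact hbd (X ω) x hx
    · filter_upwards with ω
      exact hasDerivAt_pow (X ω) t
  -- set up the constant
  refine ⟨(deriv P (1 - p) * p * (p + (1 - p) * P 0) + P (1 - p) * ((1 - p) * deriv P 0)) /
      (P (1 - p) * (p + (1 - p) * P 0)), ?_⟩
  intro u hu0 hu1
  have hau0 : 0 ≤ (1 - p) * u := by positivity
  have hau1 : (1 - p) * u ≤ 1 - p := by nlinarith
  have hPa : HasDerivAt P (deriv P ((1 - p) * u)) ((1 - p) * u) :=
    hdiff _ hau0 (by linarith)
  have hP0' : HasDerivAt P (deriv P 0) 0 := hdiff 0 le_rfl one_pos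
  have hPq : HasDerivAt P (deriv P (1 - p)) (1 - p) := hdiff _ hq0.le (by linarith)
  -- inner affine derivatives
  have hg : ∀ a : ℝ, HasDerivAt (fun v : ℝ => a + p * v) p 0 := by
    intro a
    simpa using ((hasDerivAt_id (0:ℝ)).const_mul p).const_add a
  -- left side derivative
  have hPa' : HasDerivAt P (deriv P ((1 - p) * u)) ((fun v : ℝ => (1 - p) * u + p * v) 0) := by
    simpa using hPa
  have comp1 : HasDerivAt (fun v : ℝ => P ((1 - p) * u + p * v))
      (deriv P ((1 - p) * u) * p) 0 := hPa'.comp 0 (hg _)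
  have comp2 : HasDerivAt (fun v : ℝ => p * P u + (1 - p) * P v)
      ((1 - p) * deriv P 0) 0 := (hP0'.const_mul (1 - p)).const_add (p * P u)
  have hDL := comp1.mul comp2
  -- right side derivative
  have hPq' : HasDerivAt P (deriv P (1 - p)) ((fun v : ℝ => (1 - p) + p * v) 0) := by
    simpa using hPq
  have comp3 : HasDerivAt (fun v : ℝ => P ((1 - p) + p * v))
      (deriv P (1 - p) * p) 0 := hPq'.comp 0 (hg _)
  have comp4 : HasDerivAt (fun v : ℝ => p + (1 - p) * P v)
      ((1 - p) * deriv P 0) 0 := (hP0'.const_mul (1 - p)).const_add p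
  have hDR := ((comp3.mul comp4).const_mul (P ((1 - p) * u + p) * (p * P u + (1 - p))))
  -- the two functions agree on [0,1]
  have hLR : Set.EqOn (fun v : ℝ => P ((1 - p) * u + p * v) * (p * P u + (1 - p) * P v))
      (fun v : ℝ => P ((1 - p) * u + p) * (p * P u + (1 - p)) *
        (P ((1 - p) + p * v) * (p + (1 - p) * P v))) (Set.Icc 0 1) :=
    fun v hv => hfe u v hu0 hu1 hv.1 hv.2
  have hmem : (0:ℝ) ∈ Set.Icc (0:ℝ) 1 := ⟨le_rfl, zero_le_one⟩
  have hud := (uniqueDiffOn_Icc (zero_lt_one)) 0 hmem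
  have h1 := hDL.hasDerivWithinAt (s := Set.Icc (0:ℝ) 1)
  have h2 := (hDR.hasDerivWithinAt (s := Set.Icc (0:ℝ) 1)).congr
    (fun y hy => hLR hy) (hLR hmem)
  have hueq := (h1.derivWithin hud).symm.trans (h2.derivWithin hud)
  simp only [mul_zero, add_zero] at hueq
  -- functional equation at v = 0
  have h0eq := hfe u 0 hu0 hu1 le_rfl zero_le_one
  simp only [mul_zero, add_zero] at h0eq
  -- positivity facts
  have hA : 0 < P ((1 - p) * u) := hPpos _ hau0 (by linarith)
  have hB : 0 < p * P u + (1 - p) * P 0 := by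
    have := hPnn u hu0
    nlinarith
  have hDq : 0 < P (1 - p) := hPpos _ hq0.le (by linarith)
  have hE : 0 < p + (1 - p) * P 0 := by nlinarith
  have hK : 0 < P ((1 - p) * u + p) * (p * P u + (1 - p)) := by
    have h1 : 0 < P ((1 - p) * u + p) := hPpos _ (by nlinarith) (by nlinarith)
    have h2 := hPnn u hu0
    exact mul_pos h1 (by nlinarith [mul_nonneg hp0.le h2])
  field_simp
  linear_combination (P (1 - p) * (p + (1 - p) * P 0)) * hueq -
    (deriv P (1 - p) * p * (p + (1 - p) * P 0) + P (1 - p) * ((1 - p) * deriv P 0)) * h0eq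
end

section
/- Suppose P(X = 0) < 1 and the probability generating function 𝒫 of the ℕ-valued random variable X satisfies, for all real u, v with 0 ≤ u ≤ 1 and 0 ≤ v ≤ 1, the functional equation 𝒫((1-p)u + pv)·(p𝒫(u) + (1-p)𝒫(v)) = 𝒫((1-p)u + p)·(p𝒫(u) + (1-p)) · 𝒫((1-p) + pv)·(p + (1-p)𝒫(v)). Then there exists a > 1 such that 𝒫(z) = (a-1)/(a-z) for all z ∈ [0,1]; equivalently, X is geometrically distributed with P(X = k) = (1 - 1/a)(1/a)^k for all k ∈ ℕ. -/
open MeasureTheory ProbabilityTheory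

/-- A power series with absolutely summable coefficients that vanishes on `(0,1)`
has all coefficients zero. -/
theorem aux_coeff_zero (d : ℕ → ℝ) (hd : Summable fun k => |d k|)
    (h : ∀ t ∈ Set.Ioo (0:ℝ) 1, ∑' k, d k * t ^ k = 0) : ∀ k, d k = 0 := by
  intro k
  induction k using Nat.strong_induction_on with
  | _ k ih =>
  have hds : Summable d := hd.of_abs
  set g : ℝ → ℝ := fun t => ∑' j, d (j + k) * t ^ j with hg
  have hsum : ∀ t : ℝ, |t| ≤ 1 → Summable fun j => d (j + k) * t ^ j := by
    intro t ht
    apply Summable.of_norm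
    apply Summable.of_nonneg_of_le (fun j => norm_nonneg _) (fun j => ?_)
      ((hd.comp_injective (add_left_injective k)))
    have : |t ^ j| ≤ 1 := by
      rw [abs_pow]; exact pow_le_one₀ (abs_nonneg t) ht
    calc ‖d (j + k) * t ^ j‖ = |d (j + k)| * |t ^ j| := abs_mul _ _
      _ ≤ |d (j + k)| * 1 := by nlinarith [abs_nonneg (d (j+k))]
      _ = |d (j + k)| := mul_one _
  have hgz : ∀ t ∈ Set.Ioo (0:ℝ) 1, g t = 0 := by
    intro t ht
    have hsum' : Summable fun j => d j * t ^ j := by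
      apply Summable.of_norm
      apply Summable.of_nonneg_of_le (fun j => norm_nonneg _) (fun j => ?_) hd
      have : |t ^ j| ≤ 1 := by
        rw [abs_pow]; exact pow_le_one₀ (abs_nonneg t) (le_of_lt (abs_lt.2 ⟨by linarith [ht.1], ht.2⟩))
      calc ‖d j * t ^ j‖ = |d j| * |t ^ j| := abs_mul _ _
        _ ≤ |d j| * 1 := by nlinarith [abs_nonneg (d j)]
        _ = |d j| := mul_one _
    have hsplit := Summable.sum_add_tsum_nat_add k hsum'
    have h0 : ∀ j < k, d j * t ^ j = 0 := fun j hj => by rw [ih j hj]; ring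
    have : ∑' j, d (j + k) * t ^ (j + k) = 0 := by
      have := h t ht
      rw [← hsplit] at this
      have hfin : ∑ i ∈ Finset.range k, d i * t ^ i = 0 :=
        Finset.sum_eq_zero fun i hi => h0 i (Finset.mem_range.1 hi)
      linarith [this, hfin]
    have hfac : ∀ j : ℕ, d (j + k) * t ^ (j + k) = t ^ k * (d (j + k) * t ^ j) := by
      intro j; rw [pow_add]; ring
    rw [tsum_congr hfac, tsum_mul_left] at this
    have htk : (t:ℝ) ^ k ≠ 0 := pow_ne_zero _ (ne_of_gt ht.1)
    exact (mul_eq_zero.1 this).resolve_left htk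
  have hgc : ContinuousOn g (Set.Icc (-1:ℝ) 1) := by
    apply continuousOn_tsum (u := fun j => |d (j + k)|)
    · intro j; exact (continuous_const.mul (continuous_pow j)).continuousOn
    · exact hd.comp_injective (add_left_injective k)
    · intro j t ht
      have : |t| ≤ 1 := abs_le.2 ⟨ht.1, ht.2⟩
      have : |t ^ j| ≤ 1 := by rw [abs_pow]; exact pow_le_one₀ (abs_nonneg t) this
      calc ‖d (j + k) * t ^ j‖ = |d (j + k)| * |t ^ j| := abs_mul _ _
        _ ≤ |d (j + k)| * 1 := by nlinarith [abs_nonneg (d (j+k))]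
        _ = |d (j + k)| := mul_one _
  have hg0 : g 0 = d k := by
    have : g 0 = ∑' j : ℕ, d (j + k) * (0:ℝ) ^ j := rfl
    rw [this, tsum_eq_single 0 (fun j hj => by simp [zero_pow hj])]
    simp
  have hca : ContinuousAt g 0 := by
    apply hgc.continuousAt (s := Set.Icc (-1:ℝ) 1)
    exact Icc_mem_nhds (by norm_num) (by norm_num)
  have hne : (nhdsWithin (0:ℝ) (Set.Ioo 0 1)).NeBot := by
    apply mem_closure_iff_nhdsWithin_neBot.1
    rw [closure_Ioo one_ne_zero.symm]
    exact ⟨le_refl _, by norm_num⟩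
  have h1 : Filter.Tendsto g (nhdsWithin (0:ℝ) (Set.Ioo 0 1)) (nhds (g 0)) :=
    hca.continuousWithinAt.tendsto
  have h2 : Filter.Tendsto g (nhdsWithin (0:ℝ) (Set.Ioo 0 1)) (nhds 0) := by
    apply Filter.Tendsto.congr' _ tendsto_const_nhds
    filter_upwards [self_mem_nhdsWithin] with t ht
    exact (hgz t ht).symm
  have := tendsto_nhds_unique h1 h2
  rw [hg0] at this; exact this

/-- The probability generating function as an integral equals the power series
with coefficients `μ {X = k}`. -/
theorem aux_pgf_series {Ω : Type*} [MeasurableSpace Ω] (μ : Measure Ω) [IsProbabilityMeasure μ]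
    (X : Ω → ℕ) (hXm : Measurable X) (t : ℝ) (ht : |t| ≤ 1) :
    ∫ ω, t ^ X ω ∂μ = ∑' k, (μ {ω | X ω = k}).toReal * t ^ k := by
  have hmap : ∀ k : ℕ, (μ.map X) {k} = μ {ω | X ω = k} := by
    intro k
    rw [Measure.map_apply hXm (measurableSet_singleton k)]
    rfl
  haveI : IsProbabilityMeasure (μ.map X) := Measure.isProbabilityMeasure_map hXm.aemeasurable
  have hint : Integrable (fun n : ℕ => t ^ n) (μ.map X) := by
    apply Integrable.mono' (integrable_const (1:ℝ))
    · exact (measurable_from_nat (f := fun n => t ^ n)).aestronglyMeasurable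
    · filter_upwards with n
      rw [Real.norm_eq_abs, abs_pow]
      exact pow_le_one₀ (abs_nonneg t) ht
  rw [← integral_map hXm.aemeasurable hint.aestronglyMeasurable, integral_countable' hint] at *
  exact tsum_congr fun k => by rw [measureReal_def, hmap k, smul_eq_mul]

/-- Termwise differentiation of a power series with polynomially bounded coefficients. -/
theorem aux_deriv (q : ℕ → ℝ) (C : ℝ) (m : ℕ) (hq : ∀ k, |q k| ≤ C * (k+1) ^ m)
    (t : ℝ) (ht : |t| < 1) :
    HasDerivAt (fun x : ℝ => ∑' k, q k * x ^ k) (∑' k, (q (k+1) * (k+1)) * t ^ k) t := by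
  set r : ℝ := (1 + |t|) / 2 with hr
  have hr0 : 0 < r := by positivity
  have hr1 : r < 1 := by rw [hr]; linarith
  have htr : |t| < r := by rw [hr]; linarith
  set u : ℕ → ℝ := fun k => C * (k+1:ℝ) ^ m * (k * r ^ (k-1)) with hu
  have hC0 : 0 ≤ C := le_trans (abs_nonneg (q 0)) (by simpa using hq 0)
  have husum : Summable u := by
    have hbase : Summable fun j : ℕ => ((j:ℝ)+1) ^ (m+1) * r ^ (j+1) := by
      have := (summable_nat_add_iff (f := fun n : ℕ => (n:ℝ) ^ (m+1) * r ^ n) 1).2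
        (summable_pow_mul_geometric_of_norm_lt_one (m+1)
          (by rw [Real.norm_eq_abs, abs_of_pos hr0]; exact hr1))
      simpa using this
    have hbase' : Summable fun j : ℕ => ((j:ℝ)+1) ^ (m+1) * r ^ j := by
      have h := hbase.mul_left (1/r)
      apply h.congr
      intro j
      field_simp
      rw [pow_succ]
      ring
    apply (summable_nat_add_iff 1).1
    apply Summable.of_nonneg_of_le (fun j => ?_) (fun j => ?_)
      (hbase'.mul_left (C * 2 ^ m))
    · simp only [hu, Nat.add_sub_cancel]; positivity
    · simp only [hu, Nat.add_sub_cancel, Nat.cast_add, Nat.cast_one]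
      have h1 : ((j:ℝ)+1+1) ^ m ≤ 2 ^ m * ((j:ℝ)+1) ^ m := by
        rw [← mul_pow]
        apply pow_le_pow_left₀ (by positivity)
        linarith [Nat.cast_nonneg (α := ℝ) j]
      have hrp : (0:ℝ) ≤ r ^ j := by positivity
      have hj1 : (0:ℝ) ≤ (j:ℝ)+1 := by positivity
      calc C * ((j:ℝ)+1+1) ^ m * (((j:ℝ)+1) * r ^ j)
          ≤ C * (2 ^ m * ((j:ℝ)+1) ^ m) * (((j:ℝ)+1) * r ^ j) := by
            apply mul_le_mul_of_nonneg_right _ (by positivity)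
            exact mul_le_mul_of_nonneg_left h1 hC0
        _ = C * 2 ^ m * (((j:ℝ)+1) ^ (m+1) * r ^ j) := by rw [pow_succ]; ring
  have key := hasDerivAt_tsum_of_isPreconnected husum (isOpen_Ioo (a := -r) (b := r))
    (convex_Ioo _ _).isPreconnected
    (g := fun k x => q k * x ^ k) (g' := fun k x => q k * ((k:ℝ) * x ^ (k-1)))
    (fun k y _ => (hasDerivAt_pow k y).const_mul (q k))
    (fun k y hy => ?_) (y₀ := 0) ⟨by linarith, hr0⟩ ?_ (abs_lt.1 htr)
  · have : (∑' k, q k * ((k:ℝ) * t ^ (k-1))) = ∑' k, (q (k+1) * (k+1)) * t ^ k := by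
      have hsum : Summable fun k => q k * ((k:ℝ) * t ^ (k-1)) := by
        apply Summable.of_norm
        apply Summable.of_nonneg_of_le (fun k => norm_nonneg _) (fun k => ?_) husum
        rw [Real.norm_eq_abs, abs_mul, abs_mul, hu]
        have h1 : |t| ^ (k-1) ≤ r ^ (k-1) := pow_le_pow_left₀ (abs_nonneg t) htr.le _
        have h2 : |(k:ℝ)| = (k:ℝ) := abs_of_nonneg (Nat.cast_nonneg k)
        rw [h2, abs_pow]
        calc |q k| * ((k:ℝ) * |t| ^ (k-1)) ≤ (C * (k+1) ^ m) * ((k:ℝ) * r ^ (k-1)) := by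
              apply mul_le_mul (hq k) _ (by positivity)
                (le_trans (abs_nonneg _) (hq k))
              exact mul_le_mul_of_nonneg_left h1 (Nat.cast_nonneg k)
          _ = C * ((k:ℝ)+1) ^ m * ((k:ℝ) * r ^ (k-1)) := by push_cast; ring
      rw [Summable.tsum_eq_zero_add hsum]
      simp only [Nat.cast_zero, Nat.cast_add, Nat.cast_one, Nat.add_sub_cancel]
      rw [show (q 0 * ((0:ℝ) * t ^ (0-1))) = 0 by ring, zero_add]
      exact tsum_congr fun j => by push_cast; ring
    rw [← this]; exact key
  · rw [Real.norm_eq_abs, abs_mul, abs_mul, hu, abs_pow]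
    have hy' : |y| ≤ r := (abs_lt.2 ⟨hy.1, hy.2⟩).le
    have h1 : |y| ^ (k-1) ≤ r ^ (k-1) := pow_le_pow_left₀ (abs_nonneg y) hy' _
    have h2 : |(k:ℝ)| = (k:ℝ) := abs_of_nonneg (Nat.cast_nonneg k)
    rw [h2]
    calc |q k| * ((k:ℝ) * |y| ^ (k-1)) ≤ (C * (k+1) ^ m) * ((k:ℝ) * r ^ (k-1)) := by
          apply mul_le_mul (hq k) _ (by positivity) (le_trans (abs_nonneg _) (hq k))
          exact mul_le_mul_of_nonneg_left h1 (Nat.cast_nonneg k)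
      _ = C * ((k:ℝ)+1) ^ m * ((k:ℝ) * r ^ (k-1)) := by push_cast; ring
  · apply summable_of_ne_finset_zero (s := {0})
    intro k hk
    have : k ≠ 0 := by simpa using hk
    simp [zero_pow this]

set_option maxHeartbeats 2000000 in
/-- If `P(X = 0) < 1` and the probability generating function `𝒫` of the `ℕ`-valued
random variable `X` satisfies the independence functional equation on `[0,1] × [0,1]`,
then there exists `a > 1` with `𝒫(z) = (a-1)/(a-z)` on `[0,1]`; equivalently, `X` is
geometrically distributed with `P(X = k) = (1 - 1/a)(1/a)^k`. -/
theorem pgf_functional_equation_implies_geometric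
    {Ω : Type*} [MeasurableSpace Ω] (μ : Measure Ω) [IsProbabilityMeasure μ]
    (p : ℝ) (hp0 : 0 < p) (hp1 : p < 1)
    (X : Ω → ℕ) (hXm : Measurable X)
    (hX0 : μ {ω | X ω = 0} < 1)
    (P : ℝ → ℝ) (hP : ∀ t : ℝ, P t = ∫ ω, t ^ X ω ∂μ)
    (hfe : ∀ u v : ℝ, 0 ≤ u → u ≤ 1 → 0 ≤ v → v ≤ 1 →
      P ((1 - p) * u + p * v) * (p * P u + (1 - p) * P v) =
        P ((1 - p) * u + p) * (p * P u + (1 - p)) *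
          (P ((1 - p) + p * v) * (p + (1 - p) * P v))) :
    ∃ a : ℝ, 1 < a ∧
      (∀ z : ℝ, 0 ≤ z → z ≤ 1 → P z = (a - 1) / (a - z)) ∧
      (∀ k : ℕ, μ {ω | X ω = k} = ENNReal.ofReal ((1 - 1 / a) * (1 / a) ^ k)) := by
  classical
  set q : ℕ → ℝ := fun k => (μ {ω | X ω = k}).toReal with hqdef
  have hqnn : ∀ k, 0 ≤ q k := fun k => ENNReal.toReal_nonneg
  have hmne : ∀ k, μ {ω | X ω = k} ≠ ⊤ := fun k => (measure_lt_top μ _).ne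
  have hqle : ∀ k, q k ≤ 1 := by
    intro k
    rw [hqdef]
    have : μ {ω | X ω = k} ≤ 1 := prob_le_one
    simpa using ENNReal.toReal_mono (by simp) this
  -- summability of q
  have hqsum : Summable q := by
    apply ENNReal.summable_toReal
    have hdisj : Pairwise (Function.onFun Disjoint fun k => {ω | X ω = k}) := by
      intro i j hij
      simp only [Function.onFun, Set.disjoint_left]
      rintro ω (hi : X ω = i) (hj : X ω = j)
      exact hij (hi ▸ hj ▸ rfl)
    have hmeas : ∀ k : ℕ, MeasurableSet {ω | X ω = k} := fun k =>
      hXm (measurableSet_singleton k)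
    rw [← measure_iUnion hdisj hmeas]
    exact (measure_lt_top μ _).ne
  set S : ℝ → ℝ := fun t => ∑' k, q k * t ^ k with hSdef
  have hSsum : ∀ t : ℝ, |t| ≤ 1 → Summable fun k => q k * t ^ k := by
    intro t ht
    apply Summable.of_norm
    apply Summable.of_nonneg_of_le (fun k => norm_nonneg _) (fun k => ?_) hqsum
    rw [Real.norm_eq_abs, abs_mul, abs_of_nonneg (hqnn k), abs_pow]
    calc q k * |t| ^ k ≤ q k * 1 := by
          apply mul_le_mul_of_nonneg_left _ (hqnn k)
          exact pow_le_one₀ (abs_nonneg t) ht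
      _ = q k := mul_one _
  have hPS : ∀ t : ℝ, |t| ≤ 1 → P t = S t := by
    intro t ht
    rw [hP t, aux_pgf_series μ X hXm t ht]
  -- S at 1 and 0
  have hS1val : S 1 = 1 := by
    have h1 : P 1 = 1 := by
      rw [hP 1]
      simp
    rw [← hPS 1 (by norm_num), h1]
  have hS0val : S 0 = q 0 := by
    have : S 0 = ∑' k : ℕ, q k * (0:ℝ) ^ k := rfl
    rw [this, tsum_eq_single 0 (fun j hj => by simp [zero_pow hj])]
    simp
  have hq0lt : q 0 < 1 := by
    rw [hqdef]
    have := (ENNReal.toReal_lt_toReal (hmne 0) (by simp)).2 hX0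
    simpa using this
  -- derivatives
  set S₁ : ℝ → ℝ := fun t => ∑' k, (q (k+1) * (k+1)) * t ^ k with hS₁def
  set S₂ : ℝ → ℝ := fun t => ∑' k, ((q (k+1+1) * (k+1+1)) * (k+1)) * t ^ k with hS₂def
  have hqb : ∀ k, |q k| ≤ 1 * ((k:ℝ)+1) ^ 0 := by
    intro k; rw [abs_of_nonneg (hqnn k)]; simpa using hqle k
  have hDS : ∀ t : ℝ, |t| < 1 → HasDerivAt S (S₁ t) t := by
    intro t ht
    exact aux_deriv q 1 0 hqb t ht
  have hDS₁ : ∀ t : ℝ, |t| < 1 → HasDerivAt S₁ (S₂ t) t := by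
    intro t ht
    have hb : ∀ k, |q (k+1) * ((k:ℝ)+1)| ≤ 1 * ((k:ℝ)+1) ^ 1 := by
      intro k
      rw [abs_mul, abs_of_nonneg (by positivity : (0:ℝ) ≤ (k:ℝ)+1), pow_one, one_mul]
      have := hqle (k+1)
      have h0 := hqnn (k+1)
      nlinarith [abs_of_nonneg h0, Nat.cast_nonneg (α := ℝ) k]
    have := aux_deriv (fun k => q (k+1) * (k+1)) 1 1 (by exact_mod_cast hb) t ht
    convert this using 2 with k
    push_cast
    ring
  -- continuity of S on [-1,1]
  have hScont : ContinuousOn S (Set.Icc (-1:ℝ) 1) := by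
    apply continuousOn_tsum (u := q)
    · intro k; exact (continuous_const.mul (continuous_pow k)).continuousOn
    · exact hqsum
    · intro k t ht
      rw [Real.norm_eq_abs, abs_mul, abs_of_nonneg (hqnn k), abs_pow]
      calc q k * |t| ^ k ≤ q k * 1 := by
            apply mul_le_mul_of_nonneg_left _ (hqnn k)
            exact pow_le_one₀ (abs_nonneg t) (abs_le.2 ⟨ht.1, ht.2⟩)
        _ = q k := mul_one _
  -- positivity of S on (0,1)
  have hSpos : ∀ t ∈ Set.Ioo (0:ℝ) 1, 0 < S t := by
    intro t ht
    obtain ⟨k0, hk0⟩ : ∃ k, 0 < q k := by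
      by_contra hcon
      push_neg at hcon
      have : ∀ k, q k = 0 := fun k => le_antisymm (hcon k) (hqnn k)
      have : S 1 = 0 := by
        rw [hSdef]
        simp [this]
      rw [hS1val] at this
      norm_num at this
    have hterm : 0 < q k0 * t ^ k0 := mul_pos hk0 (pow_pos ht.1 k0)
    have hle : q k0 * t ^ k0 ≤ S t := by
      apply Summable.le_tsum (hSsum t (by rw [abs_of_pos ht.1]; exact ht.2.le)) k0
      intro j _
      exact mul_nonneg (hqnn j) (pow_nonneg ht.1.le j)
    linarith
  -- monotonicity of S on [0,1]
  have hSmono : ∀ t₁ t₂ : ℝ, 0 ≤ t₁ → t₁ ≤ t₂ → t₂ ≤ 1 → S t₁ ≤ S t₂ := by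
    intro t₁ t₂ h1 h2 h3
    apply Summable.tsum_le_tsum _ (hSsum t₁ (by rw [abs_of_nonneg h1]; linarith))
      (hSsum t₂ (by rw [abs_of_nonneg (le_trans h1 h2)]; linarith))
    intro k
    apply mul_le_mul_of_nonneg_left _ (hqnn k)
    exact pow_le_pow_left₀ h1 h2 k
  -- functional equation for S
  set φ : ℝ → ℝ := fun u => S ((1-p)*u + p) * (p * S u + (1-p)) with hφdef
  set ψ : ℝ → ℝ := fun v => S ((1-p) + p*v) * (p + (1-p) * S v) with hψdef
  have hfeS : ∀ u ∈ Set.Ioo (0:ℝ) 1, ∀ v ∈ Set.Ioo (0:ℝ) 1,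
      S ((1-p)*u + p*v) * (p * S u + (1-p) * S v) = φ u * ψ v := by
    intro u hu v hv
    have h := hfe u v hu.1.le hu.2.le hv.1.le hv.2.le
    have e1 : |(1-p)*u + p*v| ≤ 1 := by
      rw [abs_of_nonneg (by nlinarith [hu.1, hv.1])]
      nlinarith [hu.2, hv.2]
    have e2 : |u| ≤ 1 := by rw [abs_of_nonneg hu.1.le]; exact hu.2.le
    have e3 : |v| ≤ 1 := by rw [abs_of_nonneg hv.1.le]; exact hv.2.le
    have e4 : |(1-p)*u + p| ≤ 1 := by
      rw [abs_of_nonneg (by nlinarith [hu.1])]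
      nlinarith [hu.2]
    have e5 : |(1-p) + p*v| ≤ 1 := by
      rw [abs_of_nonneg (by nlinarith [hv.1])]
      nlinarith [hv.2]
    rw [hPS _ e1, hPS _ e2, hPS _ e3, hPS _ e4, hPS _ e5] at h
    exact h
  -- membership facts
  have hmem1 : ∀ u ∈ Set.Ioo (0:ℝ) 1, |(1-p)*u + p| < 1 := by
    intro u hu
    rw [abs_of_nonneg (by nlinarith [hu.1])]
    nlinarith [hu.2]
  have hmem2 : ∀ v ∈ Set.Ioo (0:ℝ) 1, |(1-p) + p*v| < 1 := by
    intro v hv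
    rw [abs_of_nonneg (by nlinarith [hv.1])]
    nlinarith [hv.2]
  have hmem3 : ∀ u ∈ Set.Ioo (0:ℝ) 1, ∀ v ∈ Set.Ioo (0:ℝ) 1, |(1-p)*u + p*v| < 1 := by
    intro u hu v hv
    rw [abs_of_nonneg (by nlinarith [hu.1, hv.1])]
    nlinarith [hu.2, hv.2]
  have hmemI : ∀ u ∈ Set.Ioo (0:ℝ) 1, |u| < 1 := by
    intro u hu; rw [abs_of_pos hu.1]; exact hu.2
  -- derivative of φ
  set φ' : ℝ → ℝ := fun u => (S₁ ((1-p)*u + p) * (1-p)) * (p * S u + (1-p))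
      + S ((1-p)*u + p) * (p * S₁ u) with hφ'def
  have hDφ : ∀ u ∈ Set.Ioo (0:ℝ) 1, HasDerivAt φ (φ' u) u := by
    intro u hu
    have hin : HasDerivAt (fun y : ℝ => (1-p)*y + p) (1-p) u := by
      simpa using ((hasDerivAt_id u).const_mul (1-p)).add_const p
    have h1 : HasDerivAt (fun y : ℝ => S ((1-p)*y + p)) (S₁ ((1-p)*u + p) * (1-p)) u :=
      HasDerivAt.comp u (hDS _ (hmem1 u hu)) hin
    have h2 : HasDerivAt (fun y : ℝ => p * S y + (1-p)) (p * S₁ u) u :=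
      ((hDS u (hmemI u hu)).const_mul p).add_const (1-p)
    exact h1.mul h2
  -- derivative of ψ
  set ψ' : ℝ → ℝ := fun v => (S₁ ((1-p) + p*v) * p) * (p + (1-p) * S v)
      + S ((1-p) + p*v) * ((1-p) * S₁ v) with hψ'def
  have hDψ : ∀ v ∈ Set.Ioo (0:ℝ) 1, HasDerivAt ψ (ψ' v) v := by
    intro v hv
    have hin : HasDerivAt (fun y : ℝ => (1-p) + p*y) p v := by
      simpa using (((hasDerivAt_id v).const_mul p).const_add (1-p))
    have h1 : HasDerivAt (fun y : ℝ => S ((1-p) + p*y)) (S₁ ((1-p) + p*v) * p) v :=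
      HasDerivAt.comp v (hDS _ (hmem2 v hv)) hin
    have h2 : HasDerivAt (fun y : ℝ => p + (1-p) * S y) ((1-p) * S₁ v) v :=
      (((hDS v (hmemI v hv)).const_mul (1-p)).const_add p)
    exact h1.mul h2
  -- Step e1: differentiate in u
  have he1 : ∀ u ∈ Set.Ioo (0:ℝ) 1, ∀ v ∈ Set.Ioo (0:ℝ) 1,
      (S₁ ((1-p)*u + p*v) * (1-p)) * (p * S u + (1-p) * S v)
        + S ((1-p)*u + p*v) * (p * S₁ u) = φ' u * ψ v := by
    intro u hu v hv
    have hin : HasDerivAt (fun y : ℝ => (1-p)*y + p*v) (1-p) u := by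
      simpa using ((hasDerivAt_id u).const_mul (1-p)).add_const (p*v)
    have h1 : HasDerivAt (fun y : ℝ => S ((1-p)*y + p*v)) (S₁ ((1-p)*u + p*v) * (1-p)) u :=
      HasDerivAt.comp u (hDS _ (hmem3 u hu v hv)) hin
    have h2 : HasDerivAt (fun y : ℝ => p * S y + (1-p) * S v) (p * S₁ u) u :=
      ((hDS u (hmemI u hu)).const_mul p).add_const ((1-p) * S v)
    have hL : HasDerivAt (fun y : ℝ => S ((1-p)*y + p*v) * (p * S y + (1-p) * S v))
        ((S₁ ((1-p)*u + p*v) * (1-p)) * (p * S u + (1-p) * S v)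
          + S ((1-p)*u + p*v) * (p * S₁ u)) u := h1.mul h2
    have hR : HasDerivAt (fun y : ℝ => φ y * ψ v) (φ' u * ψ v) u :=
      (hDφ u hu).mul_const (ψ v)
    have heq : (fun y : ℝ => S ((1-p)*y + p*v) * (p * S y + (1-p) * S v))
        =ᶠ[nhds u] (fun y : ℝ => φ y * ψ v) := by
      filter_upwards [Ioo_mem_nhds hu.1 hu.2] with y hy
      exact hfeS y hy v hv
    exact (hL.congr_of_eventuallyEq heq.symm |>.unique (hR)) ▸ rfl
  -- Step e2: differentiate in v
  have he2 : ∀ u ∈ Set.Ioo (0:ℝ) 1, ∀ v ∈ Set.Ioo (0:ℝ) 1,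
      (S₁ ((1-p)*u + p*v) * p) * (p * S u + (1-p) * S v)
        + S ((1-p)*u + p*v) * ((1-p) * S₁ v) = φ u * ψ' v := by
    intro u hu v hv
    have hin : HasDerivAt (fun y : ℝ => (1-p)*u + p*y) p v := by
      simpa using (((hasDerivAt_id v).const_mul p).const_add ((1-p)*u))
    have h1 : HasDerivAt (fun y : ℝ => S ((1-p)*u + p*y)) (S₁ ((1-p)*u + p*v) * p) v :=
      HasDerivAt.comp v (hDS _ (hmem3 u hu v hv)) hin
    have h2 : HasDerivAt (fun y : ℝ => p * S u + (1-p) * S y) ((1-p) * S₁ v) v :=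
      ((hDS v (hmemI v hv)).const_mul (1-p)).const_add (p * S u)
    have hL : HasDerivAt (fun y : ℝ => S ((1-p)*u + p*y) * (p * S u + (1-p) * S y))
        ((S₁ ((1-p)*u + p*v) * p) * (p * S u + (1-p) * S v)
          + S ((1-p)*u + p*v) * ((1-p) * S₁ v)) v := h1.mul h2
    have hR : HasDerivAt (fun y : ℝ => φ u * ψ y) (φ u * ψ' v) v :=
      (hDψ v hv).const_mul (φ u)
    have heq : (fun y : ℝ => S ((1-p)*u + p*y) * (p * S u + (1-p) * S y))
        =ᶠ[nhds v] (fun y : ℝ => φ u * ψ y) := by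
      filter_upwards [Ioo_mem_nhds hv.1 hv.2] with y hy
      exact hfeS u hu y hy
    exact (hL.congr_of_eventuallyEq heq.symm |>.unique (hR)) ▸ rfl
  -- Step e3: differentiate he1 in v
  have he3 : ∀ u ∈ Set.Ioo (0:ℝ) 1, ∀ v ∈ Set.Ioo (0:ℝ) 1,
      ((S₂ ((1-p)*u + p*v) * p) * (1-p)) * (p * S u + (1-p) * S v)
        + (S₁ ((1-p)*u + p*v) * (1-p)) * ((1-p) * S₁ v)
        + (S₁ ((1-p)*u + p*v) * p) * (p * S₁ u) = φ' u * ψ' v := by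
    intro u hu v hv
    have hin : HasDerivAt (fun y : ℝ => (1-p)*u + p*y) p v := by
      simpa using (((hasDerivAt_id v).const_mul p).const_add ((1-p)*u))
    have hA : HasDerivAt (fun y : ℝ => S₁ ((1-p)*u + p*y)) (S₂ ((1-p)*u + p*v) * p) v :=
      HasDerivAt.comp v (hDS₁ _ (hmem3 u hu v hv)) hin
    have hA' : HasDerivAt (fun y : ℝ => S₁ ((1-p)*u + p*y) * (1-p))
        ((S₂ ((1-p)*u + p*v) * p) * (1-p)) v := hA.mul_const (1-p)
    have h2 : HasDerivAt (fun y : ℝ => p * S u + (1-p) * S y) ((1-p) * S₁ v) v :=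
      ((hDS v (hmemI v hv)).const_mul (1-p)).const_add (p * S u)
    have hB : HasDerivAt (fun y : ℝ => S ((1-p)*u + p*y)) (S₁ ((1-p)*u + p*v) * p) v :=
      HasDerivAt.comp v (hDS _ (hmem3 u hu v hv)) hin
    have hB' : HasDerivAt (fun y : ℝ => S ((1-p)*u + p*y) * (p * S₁ u))
        ((S₁ ((1-p)*u + p*v) * p) * (p * S₁ u)) v := hB.mul_const (p * S₁ u)
    have hL : HasDerivAt (fun y : ℝ =>
        (S₁ ((1-p)*u + p*y) * (1-p)) * (p * S u + (1-p) * S y)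
          + S ((1-p)*u + p*y) * (p * S₁ u))
        (((S₂ ((1-p)*u + p*v) * p) * (1-p)) * (p * S u + (1-p) * S v)
          + (S₁ ((1-p)*u + p*v) * (1-p)) * ((1-p) * S₁ v)
          + (S₁ ((1-p)*u + p*v) * p) * (p * S₁ u)) v := by
      exact (hA'.mul h2).add hB'
    have hR : HasDerivAt (fun y : ℝ => φ' u * ψ y) (φ' u * ψ' v) v :=
      (hDψ v hv).const_mul (φ' u)
    have heq : (fun y : ℝ =>
        (S₁ ((1-p)*u + p*y) * (1-p)) * (p * S u + (1-p) * S y)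
          + S ((1-p)*u + p*y) * (p * S₁ u))
        =ᶠ[nhds v] (fun y : ℝ => φ' u * ψ y) := by
      filter_upwards [Ioo_mem_nhds hv.1 hv.2] with y hy
      exact he1 u hu y hy
    exact (hL.congr_of_eventuallyEq heq.symm |>.unique (hR)) ▸ rfl
  -- The ODE : S₂ t * S t = 2 * (S₁ t)^2 on (0,1)
  have hode : ∀ t ∈ Set.Ioo (0:ℝ) 1, S₂ t * S t = 2 * (S₁ t) ^ 2 := by
    intro t ht
    have harg : (1-p)*t + p*t = t := by ring
    have e0 := hfeS t ht t ht
    have e1 := he1 t ht t ht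
    have e2 := he2 t ht t ht
    have e3 := he3 t ht t ht
    rw [harg] at e0 e1 e2 e3
    have hprod : (S t * (p * S t + (1-p) * S t)) *
        (((S₂ t * p) * (1-p)) * (p * S t + (1-p) * S t)
          + (S₁ t * (1-p)) * ((1-p) * S₁ t) + (S₁ t * p) * (p * S₁ t))
        = ((S₁ t * (1-p)) * (p * S t + (1-p) * S t) + S t * (p * S₁ t)) *
          ((S₁ t * p) * (p * S t + (1-p) * S t) + S t * ((1-p) * S₁ t)) := by
      rw [e0, e1, e2, e3]
      ring
    have hs : 0 < S t := hSpos t ht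
    have hkey : S t ^ 2 * (p * (1-p) * (S₂ t * S t - 2 * S₁ t ^ 2)) = 0 := by
      linear_combination hprod
    have h1 : p * (1-p) * (S₂ t * S t - 2 * S₁ t ^ 2) = 0 := by
      rcases mul_eq_zero.1 hkey with h | h
      · exact absurd h (pow_ne_zero 2 hs.ne')
      · exact h
    have h2 : S₂ t * S t - 2 * S₁ t ^ 2 = 0 := by
      rcases mul_eq_zero.1 h1 with h | h
      · exact absurd h (mul_ne_zero hp0.ne' (by linarith)).elim
      · exact h
    linarith
  -- G = derivative of 1/S is constant on (0,1)
  set G : ℝ → ℝ := fun t => -S₁ t / S t ^ 2 with hGdef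
  have hDinv : ∀ t ∈ Set.Ioo (0:ℝ) 1, HasDerivAt (fun x => (S x)⁻¹) (G t) t := by
    intro t ht
    exact (hDS t (hmemI t ht)).inv (hSpos t ht).ne'
  have hDG : ∀ t ∈ Set.Ioo (0:ℝ) 1, HasDerivAt G 0 t := by
    intro t ht
    have hs := hSpos t ht
    have h := ((hDS₁ t (hmemI t ht)).div ((hDS t (hmemI t ht)).pow 2)
      (pow_ne_zero 2 hs.ne')).neg
    have hnum : S₂ t * S t ^ 2 - S₁ t * ((2:ℝ) * S t ^ 1 * S₁ t) = 0 := by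
      linear_combination S t * (hode t ht)
    have hfun : G = fun y => -(S₁ y / S y ^ 2) := by
      funext y; simp only [hGdef, neg_div]
    rw [hfun]
    have h21 : ((2:ℕ):ℝ) * S t ^ (2-1) * S₁ t = 2 * S t ^ 1 * S₁ t := by norm_num
    have h' : HasDerivAt (fun y => -(S₁ y / S y ^ 2))
        (-((S₂ t * S t ^ 2 - S₁ t * (((2:ℕ):ℝ) * S t ^ (2 - 1) * S₁ t)) / (S t ^ 2) ^ 2)) t := h
    rw [h21, hnum, zero_div, neg_zero] at h'
    exact h'
  have hG_const : ∀ x ∈ Set.Ioo (0:ℝ) 1, ∀ y ∈ Set.Ioo (0:ℝ) 1, G x = G y := by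
    intro x hx y hy
    have hb := Convex.norm_image_sub_le_of_norm_hasDerivWithin_le
      (f := G) (f' := fun _ => (0:ℝ)) (s := Set.Ioo 0 1) (C := 0)
      (fun z hz => (hDG z hz).hasDerivWithinAt) (fun z _ => by simp) (convex_Ioo 0 1) hx hy
    have h0 : ‖G y - G x‖ ≤ 0 := by simpa using hb
    have := norm_le_zero_iff.1 h0
    linarith [sub_eq_zero.1 this]
  have hhalf : (1/2 : ℝ) ∈ Set.Ioo (0:ℝ) 1 := by norm_num
  obtain ⟨c, hcdef⟩ : ∃ c : ℝ, c = G (1/2) := ⟨_, rfl⟩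
  have hcG : ∀ t ∈ Set.Ioo (0:ℝ) 1, G t = c := fun t ht => by
    rw [hcdef]; exact hG_const t ht (1/2) hhalf
  obtain ⟨dd, hdddef⟩ : ∃ d : ℝ, d = (S (1/2 : ℝ))⁻¹ - c * (1/2) := ⟨_, rfl⟩
  have hlin : ∀ t ∈ Set.Ioo (0:ℝ) 1, (S t)⁻¹ = c * t + dd := by
    intro t ht
    have hD2 : ∀ z ∈ Set.Ioo (0:ℝ) 1,
        HasDerivWithinAt (fun x => (S x)⁻¹ - c * x) 0 (Set.Ioo (0:ℝ) 1) z := by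
      intro z hz
      have h1 : HasDerivAt (fun x => (S x)⁻¹ - c * x) (G z - c) z := by
        have h2 : HasDerivAt (fun x : ℝ => c * x) c z := by
          simpa using (hasDerivAt_id' z).const_mul c
        exact (hDinv z hz).sub h2
      rw [hcG z hz, sub_self] at h1
      exact h1.hasDerivWithinAt
    have hb := Convex.norm_image_sub_le_of_norm_hasDerivWithin_le
      (f := fun x => (S x)⁻¹ - c * x) (f' := fun _ => (0:ℝ)) (s := Set.Ioo 0 1) (C := 0)
      hD2 (fun z _ => by simp) (convex_Ioo 0 1) hhalf ht
    have h0 : ‖((S t)⁻¹ - c * t) - ((S (1/2:ℝ))⁻¹ - c * (1/2))‖ ≤ 0 := by simpa using hb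
    have := sub_eq_zero.1 (norm_le_zero_iff.1 h0)
    rw [hdddef]
    linarith
  -- limits at the endpoints
  have hne1 : (nhdsWithin (1:ℝ) (Set.Ioo (0:ℝ) 1)).NeBot := by
    apply mem_closure_iff_nhdsWithin_neBot.1
    rw [closure_Ioo (by norm_num : (0:ℝ) ≠ 1)]
    exact ⟨by norm_num, le_refl _⟩
  have hne0 : (nhdsWithin (0:ℝ) (Set.Ioo (0:ℝ) 1)).NeBot := by
    apply mem_closure_iff_nhdsWithin_neBot.1
    rw [closure_Ioo (by norm_num : (0:ℝ) ≠ 1)]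
    exact ⟨le_refl _, by norm_num⟩
  have hsub : Set.Ioo (0:ℝ) 1 ⊆ Set.Icc (-1:ℝ) 1 :=
    fun x hx => ⟨by linarith [hx.1], hx.2.le⟩
  have hScw1 : Filter.Tendsto S (nhdsWithin (1:ℝ) (Set.Ioo 0 1)) (nhds 1) := by
    have h := hScont.continuousWithinAt (x := 1) (by norm_num : (1:ℝ) ∈ Set.Icc (-1:ℝ) 1)
    have h' : Filter.Tendsto S (nhdsWithin (1:ℝ) (Set.Icc (-1:ℝ) 1)) (nhds (S 1)) := h
    rw [hS1val] at h'
    exact h'.mono_left (nhdsWithin_mono _ hsub)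
  have hScw0 : Filter.Tendsto S (nhdsWithin (0:ℝ) (Set.Ioo 0 1)) (nhds (q 0)) := by
    have h := hScont.continuousWithinAt (x := 0) (by norm_num : (0:ℝ) ∈ Set.Icc (-1:ℝ) 1)
    have h' : Filter.Tendsto S (nhdsWithin (0:ℝ) (Set.Icc (-1:ℝ) 1)) (nhds (S 0)) := h
    rw [hS0val] at h'
    exact h'.mono_left (nhdsWithin_mono _ hsub)
  have hcd1 : c + dd = 1 := by
    have hA : Filter.Tendsto (fun t => (S t)⁻¹) (nhdsWithin (1:ℝ) (Set.Ioo 0 1)) (nhds 1) := by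
      have := hScw1.inv₀ one_ne_zero
      simpa using this
    have hB : Filter.Tendsto (fun t : ℝ => c * t + dd) (nhdsWithin (1:ℝ) (Set.Ioo 0 1))
        (nhds (c * 1 + dd)) :=
      ((continuous_const.mul continuous_id).add continuous_const).continuousAt.tendsto.mono_left
        nhdsWithin_le_nhds
    have hAB : Filter.Tendsto (fun t => (S t)⁻¹) (nhdsWithin (1:ℝ) (Set.Ioo 0 1))
        (nhds (c * 1 + dd)) := by
      apply hB.congr'
      filter_upwards [self_mem_nhdsWithin] with t ht
      exact (hlin t ht).symm
    have := tendsto_nhds_unique hAB hA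
    linarith
  -- c is negative
  have hc0 : c ≠ 0 := by
    intro h
    have hdd1 : dd = 1 := by rw [h] at hcd1; linarith
    have hone : Filter.Tendsto S (nhdsWithin (0:ℝ) (Set.Ioo 0 1)) (nhds 1) := by
      apply Filter.Tendsto.congr' _ tendsto_const_nhds
      filter_upwards [self_mem_nhdsWithin] with t ht
      have := hlin t ht
      rw [h, hdd1] at this
      simp only [zero_mul, zero_add] at this
      exact (inv_eq_one.1 this).symm
    have := tendsto_nhds_unique hScw0 hone
    linarith
  have hclt : c < 0 := by
    have hcle : c ≤ 0 := ?_
    · exact lt_of_le_of_ne hcle hc0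
    have hq : (1/4 : ℝ) ∈ Set.Ioo (0:ℝ) 1 := by norm_num
    have hmono := hSmono (1/4) (1/2) (by norm_num) (by norm_num) (by norm_num)
    have h4 := hSpos _ hq
    have h2 := hSpos _ hhalf
    have hinv : (S (1/2:ℝ))⁻¹ ≤ (S (1/4:ℝ))⁻¹ := by
      apply inv_anti₀ h4 hmono
    rw [hlin _ hq, hlin _ hhalf] at hinv
    linarith
  -- define a
  obtain ⟨a, hadef⟩ : ∃ a : ℝ, a = dd / (-c) := ⟨_, rfl⟩
  have hnc : 0 < -c := by linarith
  have hddpos : 0 < dd := by linarith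
  have ha1 : 1 < a := by
    rw [hadef, lt_div_iff₀ hnc]
    linarith
  have hczpos : ∀ z : ℝ, z ≤ 1 → 0 < c * z + dd := by
    intro z hz
    have : c * z ≥ c * 1 := by
      apply mul_le_mul_of_nonpos_left hz hclt.le
    linarith
  have hSfull : ∀ z : ℝ, 0 ≤ z → z ≤ 1 → S z = (c * z + dd)⁻¹ := by
    intro z hz0 hz1
    rcases eq_or_lt_of_le hz0 with h0 | h0
    · -- z = 0
      have hlim : Filter.Tendsto (fun t : ℝ => (c * t + dd)⁻¹) (nhdsWithin (0:ℝ) (Set.Ioo 0 1))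
          (nhds ((c * 0 + dd)⁻¹)) := by
        apply Filter.Tendsto.mono_left _ nhdsWithin_le_nhds
        apply ContinuousAt.tendsto
        apply ContinuousAt.inv₀ (by fun_prop)
        simpa using (hczpos 0 (by norm_num)).ne'
      have hAB : Filter.Tendsto S (nhdsWithin (0:ℝ) (Set.Ioo 0 1))
          (nhds ((c * 0 + dd)⁻¹)) := by
        apply hlim.congr'
        filter_upwards [self_mem_nhdsWithin] with t ht
        rw [← hlin t ht, inv_inv]
      have := tendsto_nhds_unique hScw0 hAB
      subst h0
      rw [hS0val]
      simpa using this
    rcases eq_or_lt_of_le hz1 with h1 | h1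
    · -- z = 1
      rw [h1, hS1val]
      rw [show c * 1 + dd = 1 by linarith]
      norm_num
    · have := hlin z ⟨h0, h1⟩
      rw [← this, inv_inv]
  -- conclusion 1
  have hform : ∀ z : ℝ, 0 ≤ z → z ≤ 1 → P z = (a - 1) / (a - z) := by
    intro z hz0 hz1
    rw [hPS z (by rw [abs_of_nonneg hz0]; exact hz1), hSfull z hz0 hz1]
    have h1 : a - z = (c * z + dd) / (-c) := by
      rw [eq_div_iff hnc.ne', hadef, sub_mul, div_mul_cancel₀ _ hnc.ne']
      ring
    have h2 : a - 1 = (-c)⁻¹ := by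
      rw [inv_eq_one_div, eq_div_iff hnc.ne', hadef, sub_mul, div_mul_cancel₀ _ hnc.ne']
      linarith
    have hzc : c * z + dd ≠ 0 := (hczpos z hz1).ne'
    rw [h1, h2]
    rw [eq_comm, div_eq_iff (by exact div_ne_zero hzc (neg_ne_zero.2 hc0))]
    rw [← mul_div_assoc, inv_mul_cancel₀ hzc, one_div]
  -- conclusion 2 : the coefficients
  have ha0 : 0 < a := by linarith
  have hia0 : 0 ≤ 1/a := by positivity
  have hia1 : 1/a < 1 := by rw [div_lt_one ha0]; linarith
  have hfrac : ∀ z : ℝ, z ≤ 1 → (a - 1) / (a - z) = (c * z + dd)⁻¹ := by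
    intro z hz1
    have h1 : a - z = (c * z + dd) / (-c) := by
      rw [eq_div_iff hnc.ne', hadef, sub_mul, div_mul_cancel₀ _ hnc.ne']
      ring
    have h2 : a - 1 = (-c)⁻¹ := by
      rw [inv_eq_one_div, eq_div_iff hnc.ne', hadef, sub_mul, div_mul_cancel₀ _ hnc.ne']
      linarith
    have hzc : c * z + dd ≠ 0 := (hczpos z hz1).ne'
    rw [h1, h2]
    rw [div_eq_iff (by exact div_ne_zero hzc (neg_ne_zero.2 hc0))]
    rw [← mul_div_assoc, inv_mul_cancel₀ hzc, one_div]
  have hcksum : Summable fun k : ℕ => |(1 - 1/a) * (1/a) ^ k| := by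
    apply Summable.of_nonneg_of_le (fun k => abs_nonneg _) (fun k => ?_)
      ((summable_geometric_of_lt_one hia0 hia1).mul_left (1 - 1/a))
    rw [abs_mul, abs_pow, abs_of_nonneg (by linarith : (0:ℝ) ≤ 1 - 1/a),
      abs_of_nonneg hia0]
  have hck2 : ∀ t : ℝ, t ∈ Set.Ioo (0:ℝ) 1 →
      Summable fun k : ℕ => ((1 - 1/a) * (1/a) ^ k) * t ^ k := by
    intro t ht
    have h := ((summable_geometric_of_lt_one
      (div_nonneg ht.1.le ha0.le)
      (by rw [div_lt_one ha0]; linarith [ht.2] : t/a < 1)).mul_left (1 - 1/a))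
    apply h.congr
    intro k
    rw [div_pow, div_pow, one_pow]
    ring
  have hcgeo : ∀ t ∈ Set.Ioo (0:ℝ) 1,
      ∑' k : ℕ, ((1 - 1/a) * (1/a) ^ k) * t ^ k = (c * t + dd)⁻¹ := by
    intro t ht
    have hta0 : (0:ℝ) ≤ t/a := div_nonneg ht.1.le ha0.le
    have hta1 : t/a < 1 := by rw [div_lt_one ha0]; linarith [ht.2]
    have hat : a - t ≠ 0 := by nlinarith [ht.2]
    calc ∑' k : ℕ, ((1 - 1/a) * (1/a) ^ k) * t ^ k
        = ∑' k : ℕ, (1 - 1/a) * (t/a) ^ k := by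
          apply tsum_congr
          intro k
          rw [div_pow, div_pow, one_pow]
          ring
      _ = (1 - 1/a) * ∑' k : ℕ, (t/a) ^ k := tsum_mul_left
      _ = (1 - 1/a) * (1 - t/a)⁻¹ := by rw [tsum_geometric_of_lt_one hta0 hta1]
      _ = (a - 1) / (a - t) := by
          have e1 : (a - 1)/a = 1 - 1/a := by rw [sub_div, div_self ha0.ne']
          have e2 : (a - t)/a = 1 - t/a := by rw [sub_div, div_self ha0.ne']
          rw [← e1, ← e2, inv_div, div_mul_div_comm, mul_comm (a-1) a,
            mul_div_mul_left _ _ ha0.ne']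
      _ = (c * t + dd)⁻¹ := hfrac t ht.2.le
  have hq_eq : ∀ k, q k = (1 - 1/a) * (1/a) ^ k := by
    have hzero : ∀ k, q k - (1 - 1/a) * (1/a) ^ k = 0 := by
      apply aux_coeff_zero
      · apply Summable.of_nonneg_of_le (fun k => abs_nonneg _) (fun k => ?_)
          ((hqsum.abs).add hcksum)
        rw [sub_eq_add_neg]
        exact (abs_add_le _ _).trans (by rw [abs_neg])
      · intro t ht
        have hs1 := hSsum t (by rw [abs_of_pos ht.1]; exact ht.2.le)
        have hs2 := hck2 t ht
        have : (∑' k : ℕ, (q k - (1 - 1/a) * (1/a) ^ k) * t ^ k)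
            = (∑' k : ℕ, q k * t ^ k) - ∑' k : ℕ, ((1 - 1/a) * (1/a) ^ k) * t ^ k := by
          rw [← Summable.tsum_sub hs1 hs2]
          apply tsum_congr
          intro k
          ring
        rw [this, hcgeo t ht]
        have hSt : (∑' k : ℕ, q k * t ^ k) = (c * t + dd)⁻¹ :=
          hSfull t ht.1.le ht.2.le
        rw [hSt, sub_self]
    intro k
    have := hzero k
    linarith
  refine ⟨a, ha1, hform, fun k => ?_⟩
  rw [← hq_eq k]
  exact (ENNReal.ofReal_toReal (hmne k)).symm
end

section
/- Suppose X is Poisson distributed, i.e. there exists λ ≥ 0 with P(X = k) = e^{-λ} λ^k / k! for all k ∈ ℕ. Then the linear forms K₁ = X̃_{1-p} + Ỹ_{1-q} and K₂ = X̃_p + Ỹ_q are stochastically independent. -/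
open MeasureTheory ProbabilityTheory
open scoped ENNReal

open scoped ENNReal


lemma aux_pascal (r s : ℝ) (hr : 0 ≤ r) (hs : 0 ≤ s) (n a : ℕ) :
    ENNReal.ofReal ((n.choose (a+1)) * r^(a+1) * s^(n-(a+1))) * ENNReal.ofReal s
      + ENNReal.ofReal ((n.choose a) * r^a * s^(n-a)) * ENNReal.ofReal r
    = ENNReal.ofReal (((n+1).choose (a+1)) * r^(a+1) * s^(n-a)) := by
  rw [← ENNReal.ofReal_mul (by positivity), ← ENNReal.ofReal_mul (by positivity),
    ← ENNReal.ofReal_add (by positivity) (by positivity)]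
  congr 1
  rcases lt_or_ge n (a+1) with h | h
  · rcases Nat.lt_or_ge n a with h' | h'
    · rw [Nat.choose_eq_zero_of_lt (by omega), Nat.choose_eq_zero_of_lt h',
        Nat.choose_eq_zero_of_lt (by omega)]
      simp
    · have hna : n = a := by omega
      subst hna
      rw [Nat.choose_eq_zero_of_lt (by omega), Nat.choose_self, Nat.choose_self]
      simp [pow_succ]
  · have h1 : n - a = (n - (a+1)) + 1 := by omega
    rw [Nat.choose_succ_succ (n) (a)]
    push_cast
    rw [h1, pow_succ]
    ring

lemma aux_pois_tsum (c : ℝ) (hc : 0 ≤ c) :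
    ∑' k : ℕ, ENNReal.ofReal (Real.exp (-c) * c^k / k.factorial) = 1 := by
  have h := ProbabilityTheory.poissonPMFRealSum ⟨c, hc⟩
  have heq : ∀ k : ℕ, ProbabilityTheory.poissonPMFReal ⟨c, hc⟩ k
      = Real.exp (-c) * c^k / k.factorial := by
    intro k; rfl
  replace h : HasSum (fun k : ℕ => Real.exp (-c) * c^k / k.factorial) 1 := h
  rw [← ENNReal.ofReal_tsum_of_nonneg (fun k => by positivity) h.summable, h.tsum_eq,
    ENNReal.ofReal_one]

lemma aux_pois_split (l r s : ℝ) (hl : 0 ≤ l) (hr : 0 ≤ r) (hs : 0 ≤ s) (hrs : r + s = 1)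
    (i j : ℕ) :
    ENNReal.ofReal (Real.exp (-l) * l^(i+j) / (i+j).factorial)
      * ENNReal.ofReal (((i+j).choose i) * r^i * s^j)
    = ENNReal.ofReal (Real.exp (-(l*r)) * (l*r)^i / i.factorial)
      * ENNReal.ofReal (Real.exp (-(l*s)) * (l*s)^j / j.factorial) := by
  rw [← ENNReal.ofReal_mul (by positivity), ← ENNReal.ofReal_mul (by positivity)]
  congr 1
  have hch : (((i+j).choose i : ℕ) : ℝ) * (i.factorial * j.factorial) = (i+j).factorial := by
    have := Nat.choose_mul_factorial_mul_factorial (Nat.le_add_right i j)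
    push_cast [← this]
    simp [Nat.add_sub_cancel_left]
    ring
  have hexp : Real.exp (-l) = Real.exp (-(l*r)) * Real.exp (-(l*s)) := by
    rw [← Real.exp_add]; congr 1; nlinarith
  have hfi : (i.factorial : ℝ) ≠ 0 := Nat.cast_ne_zero.mpr i.factorial_ne_zero
  have hfj : (j.factorial : ℝ) ≠ 0 := Nat.cast_ne_zero.mpr j.factorial_ne_zero
  have hfij : ((i+j).factorial : ℝ) ≠ 0 := Nat.cast_ne_zero.mpr (i+j).factorial_ne_zero
  rw [hexp, mul_pow, mul_pow, pow_add]
  field_simp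
  linear_combination (l^i * l^j * r^i * s^j) * hch


lemma aux_binom {Ω : Type*} [MeasurableSpace Ω] (μ : Measure Ω) [IsProbabilityMeasure μ]
    (r s : ℝ) (hr : 0 ≤ r) (hs : 0 ≤ s)
    (e : ℕ → Ω → ℕ) (hm : ∀ j, Measurable (e j)) (h01 : ∀ j ω, e j ω ≤ 1)
    (hP1 : ∀ j, μ {ω | e j ω = 1} = ENNReal.ofReal r)
    (hP0 : ∀ j, μ {ω | e j ω = 0} = ENNReal.ofReal s)
    (hind : ∀ n a c, μ ({ω | ∑ l ∈ Finset.range n, e l ω = a} ∩ {ω | e n ω = c})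
      = μ {ω | ∑ l ∈ Finset.range n, e l ω = a} * μ {ω | e n ω = c}) :
    ∀ n a, μ {ω | ∑ l ∈ Finset.range n, e l ω = a}
      = ENNReal.ofReal ((n.choose a) * r^a * s^(n-a)) := by
  intro n
  induction n with
  | zero =>
    intro a
    rcases a with _ | a
    · have h0 : {ω : Ω | ∑ l ∈ Finset.range 0, e l ω = 0} = Set.univ := by ext ω; simp
      rw [h0, measure_univ]; simp
    · have h0 : {ω : Ω | ∑ l ∈ Finset.range 0, e l ω = a+1} = ∅ := by ext ω; simp
      rw [h0, measure_empty, Nat.choose_eq_zero_of_lt (by omega)]; simp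
  | succ n ih =>
    intro a
    have hmsum : Measurable (fun ω => ∑ l ∈ Finset.range n, e l ω) :=
      Finset.measurable_sum _ fun l _ => hm l
    rcases a with _ | a
    · have hev : {ω : Ω | ∑ l ∈ Finset.range (n+1), e l ω = 0}
          = {ω | ∑ l ∈ Finset.range n, e l ω = 0} ∩ {ω | e n ω = 0} := by
        ext ω; simp only [Set.mem_setOf_eq, Set.mem_inter_iff, Finset.sum_range_succ]; omega
      rw [hev, hind, ih, hP0, ← ENNReal.ofReal_mul (by positivity)]
      congr 1
      simp [pow_succ]
    · have hev : {ω : Ω | ∑ l ∈ Finset.range (n+1), e l ω = a+1}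
          = ({ω | ∑ l ∈ Finset.range n, e l ω = a+1} ∩ {ω | e n ω = 0})
            ∪ ({ω | ∑ l ∈ Finset.range n, e l ω = a} ∩ {ω | e n ω = 1}) := by
        ext ω
        simp only [Set.mem_setOf_eq, Set.mem_inter_iff, Set.mem_union, Finset.sum_range_succ]
        have := h01 n ω
        omega
      have hd : Disjoint ({ω : Ω | ∑ l ∈ Finset.range n, e l ω = a+1} ∩ {ω | e n ω = 0})
          (({ω | ∑ l ∈ Finset.range n, e l ω = a} ∩ {ω | e n ω = 1})) := by
        rw [Set.disjoint_left]
        rintro ω ⟨-, h0⟩ ⟨-, h1⟩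
        simp only [Set.mem_setOf_eq] at h0 h1
        omega
      have hm2 : MeasurableSet (({ω : Ω | ∑ l ∈ Finset.range n, e l ω = a} ∩ {ω | e n ω = 1})) :=
        (hmsum (measurableSet_singleton a)).inter ((hm n) (measurableSet_singleton 1))
      rw [hev, measure_union hd hm2, hind, hind, ih, ih, hP0, hP1,
        Nat.succ_sub_succ, aux_pascal r s hr hs n a]


noncomputable def Po (c : ℝ) (k : ℕ) : ℝ≥0∞ :=
  ENNReal.ofReal (Real.exp (-c) * c^k / k.factorial)


/-- If `X` is Poisson distributed, then the linear forms
`K₁ = X̃_{1-p} + Ỹ_{1-q}` and `K₂ = X̃_p + Ỹ_q` are independent. -/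
theorem poisson_implies_indep_linear_forms
    {Ω : Type*} [MeasurableSpace Ω] (μ : Measure Ω) [IsProbabilityMeasure μ]
    (p q : ℝ) (hp0 : 0 < p) (hp1 : p < 1) (hq0 : 0 < q) (hq1 : q < 1)
    (X Y : Ω → ℕ) (ε εt : ℕ → Ω → ℕ)
    (hXm : Measurable X) (hYm : Measurable Y)
    (hεm : ∀ j, Measurable (ε j)) (hεtm : ∀ j, Measurable (εt j))
    -- X and Y are identically distributed
    (hXY : IdentDistrib X Y μ μ)
    -- each ε_j is a Bernoulli random variable with parameter 1 - p
    (hε01 : ∀ j ω, ε j ω ≤ 1)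
    (hεP : ∀ j, μ {ω | ε j ω = 1} = ENNReal.ofReal (1 - p))
    -- each ε̃_j is a Bernoulli random variable with parameter 1 - q
    (hεt01 : ∀ j ω, εt j ω ≤ 1)
    (hεtP : ∀ j, μ {ω | εt j ω = 1} = ENNReal.ofReal (1 - q))
    -- X, Y, the ε_j's and the ε̃_j's are mutually independent
    (hindep : iIndepFun
      (fun i : ℕ => if i = 0 then X else if i = 1 then Y
        else if (i - 2) % 2 = 0 then ε ((i - 2) / 2) else εt ((i - 2) / 2)) μ)
    -- X is Poisson distributed
    (hpois : ∃ l : ℝ, 0 ≤ l ∧ ∀ k : ℕ,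
      μ {ω | X ω = k} = ENNReal.ofReal (Real.exp (-l) * l ^ k / k.factorial)) :
    IndepFun
      (fun ω => (∑ j ∈ Finset.range (X ω), ε j ω) +
        ∑ j ∈ Finset.range (Y ω), εt j ω)
      (fun ω => (∑ j ∈ Finset.range (X ω), (1 - ε j ω)) +
        ∑ j ∈ Finset.range (Y ω), (1 - εt j ω)) μ := by
  obtain ⟨l, hl0, hlP⟩ := hpois
  set F : ℕ → Ω → ℕ := fun i : ℕ => if i = 0 then X else if i = 1 then Y
      else if (i - 2) % 2 = 0 then ε ((i - 2) / 2) else εt ((i - 2) / 2) with hF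
  -- identify family members
  have hF0 : F 0 = X := by simp [hF]
  have hF1 : F 1 = Y := by simp [hF]
  have hFe : ∀ j, F (2*j+2) = ε j := by
    intro j
    have h1 : (2*j+2) ≠ 0 := by omega
    have h2 : (2*j+2) ≠ 1 := by omega
    have h3 : (2*j+2-2) % 2 = 0 := by omega
    have h4 : (2*j+2-2) / 2 = j := by omega
    simp only [hF, if_neg h1, if_neg h2, if_pos h3, h4]
  have hFo : ∀ j, F (2*j+3) = εt j := by
    intro j
    have h1 : (2*j+3) ≠ 0 := by omega
    have h2 : (2*j+3) ≠ 1 := by omega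
    have h3 : ¬ ((2*j+3-2) % 2 = 0) := by omega
    have h4 : (2*j+3-2) / 2 = j := by omega
    simp only [hF, if_neg h1, if_neg h2, if_neg h3, h4]
  have hFm : ∀ i, Measurable (F i) := by
    intro i
    simp only [hF]
    split_ifs
    exacts [hXm, hYm, hεm _, hεtm _]
  -- block independence tool
  have hsup : ∀ (Sc Tc : Set ℕ), Disjoint Sc Tc →
      Indep (⨆ i ∈ Sc, MeasurableSpace.comap (F i) inferInstance)
        (⨆ i ∈ Tc, MeasurableSpace.comap (F i) inferInstance) μ := by
    intro Sc Tc hST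
    exact indep_iSup_of_disjoint (fun i => (hFm i).comap_le) hindep hST
  -- measurability in sup σ-algebras
  have hle : ∀ (Sc : Set ℕ) (i : ℕ), i ∈ Sc →
      MeasurableSpace.comap (F i) inferInstance
        ≤ ⨆ i ∈ Sc, MeasurableSpace.comap (F i) inferInstance :=
    fun Sc i hi => le_biSup (fun i => MeasurableSpace.comap (F i) inferInstance) hi
  have hcomapSet : ∀ (g : Ω → ℕ) (i : ℕ), F i = g → ∀ (Sc : Set ℕ), i ∈ Sc → ∀ A : Set ℕ,
      MeasurableSet[⨆ i ∈ Sc, MeasurableSpace.comap (F i) inferInstance] (g ⁻¹' A) := by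
    intro g i hg Sc hi A
    exact hle Sc i hi _ ⟨A, trivial, by rw [hg]⟩
  have hmX : ∀ (Sc : Set ℕ), 0 ∈ Sc → ∀ n : ℕ,
      MeasurableSet[⨆ i ∈ Sc, MeasurableSpace.comap (F i) inferInstance] {ω | X ω = n} :=
    fun Sc h0 n => hcomapSet X 0 hF0 Sc h0 {n}
  have hmY : ∀ (Sc : Set ℕ), 1 ∈ Sc → ∀ n : ℕ,
      MeasurableSet[⨆ i ∈ Sc, MeasurableSpace.comap (F i) inferInstance] {ω | Y ω = n} :=
    fun Sc h0 n => hcomapSet Y 1 hF1 Sc h0 {n}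
  have hmE : ∀ (Sc : Set ℕ) (n : ℕ), (∀ j, j < n → 2*j+2 ∈ Sc) → ∀ a : ℕ,
      MeasurableSet[⨆ i ∈ Sc, MeasurableSpace.comap (F i) inferInstance]
        {ω | ∑ l ∈ Finset.range n, ε l ω = a} := by
    intro Sc n hSc a
    have hmsum : Measurable[⨆ i ∈ Sc, MeasurableSpace.comap (F i) inferInstance]
        (fun ω => ∑ l ∈ Finset.range n, ε l ω) := by
      apply Finset.measurable_sum
      intro lx hl
      have h1 : Measurable[⨆ i ∈ Sc, MeasurableSpace.comap (F i) inferInstance]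
          (F (2*lx+2)) :=
        Measurable.of_comap_le (hle Sc _ (hSc lx (Finset.mem_range.mp hl)))
      rwa [hFe lx] at h1
    exact hmsum (measurableSet_singleton a)
  have hmEt : ∀ (Sc : Set ℕ) (n : ℕ), (∀ j, j < n → 2*j+3 ∈ Sc) → ∀ a : ℕ,
      MeasurableSet[⨆ i ∈ Sc, MeasurableSpace.comap (F i) inferInstance]
        {ω | ∑ l ∈ Finset.range n, εt l ω = a} := by
    intro Sc n hSc a
    have hmsum : Measurable[⨆ i ∈ Sc, MeasurableSpace.comap (F i) inferInstance]
        (fun ω => ∑ l ∈ Finset.range n, εt l ω) := by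
      apply Finset.measurable_sum
      intro lx hl
      have h1 : Measurable[⨆ i ∈ Sc, MeasurableSpace.comap (F i) inferInstance]
          (F (2*lx+3)) :=
        Measurable.of_comap_le (hle Sc _ (hSc lx (Finset.mem_range.mp hl)))
      rwa [hFo lx] at h1
    exact hmsum (measurableSet_singleton a)
  -- Bernoulli zero probabilities
  have hPzero : ∀ (e : ℕ → Ω → ℕ) (r : ℝ), 0 ≤ r → r ≤ 1 → (∀ j ω, e j ω ≤ 1) →
      (∀ j, Measurable (e j)) → (∀ j, μ {ω | e j ω = 1} = ENNReal.ofReal r) →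
      ∀ j, μ {ω | e j ω = 0} = ENNReal.ofReal (1 - r) := by
    intro e r hr0 hr1 h01 hm hP j
    have hdis : Disjoint {ω | e j ω = 0} {ω | e j ω = 1} := by
      rw [Set.disjoint_left]
      intro ω h0 h1
      simp only [Set.mem_setOf_eq] at h0 h1
      omega
    have hun : {ω | e j ω = 0} ∪ {ω | e j ω = 1} = Set.univ := by
      ext ω
      simp only [Set.mem_union, Set.mem_setOf_eq, Set.mem_univ, iff_true]
      have := h01 j ω; omega
    have hsum2 : μ {ω | e j ω = 0} + μ {ω | e j ω = 1} = 1 := by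
      rw [← measure_union hdis ((hm j) (measurableSet_singleton 1)), hun, measure_univ]
    have hone : ENNReal.ofReal (1 - r) + ENNReal.ofReal r = 1 := by
      rw [← ENNReal.ofReal_add (by linarith) hr0]
      norm_num
    rw [hP j] at hsum2
    have := hsum2.trans hone.symm
    exact WithTop.add_right_cancel ENNReal.ofReal_ne_top this
  have hεP0 : ∀ j, μ {ω | ε j ω = 0} = ENNReal.ofReal p := by
    intro j
    rw [hPzero ε (1-p) (by linarith) (by linarith) hε01 hεm hεP j]
    norm_num
  have hεtP0 : ∀ j, μ {ω | εt j ω = 0} = ENNReal.ofReal q := by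
    intro j
    rw [hPzero εt (1-q) (by linarith) (by linarith) hεt01 hεtm hεtP j]
    norm_num
  -- independence for binomial inductions
  have hindε : ∀ n a c, μ ({ω | ∑ l ∈ Finset.range n, ε l ω = a} ∩ {ω | ε n ω = c})
      = μ {ω | ∑ l ∈ Finset.range n, ε l ω = a} * μ {ω | ε n ω = c} := by
    intro n a c
    have hdisj : Disjoint ((fun j => 2*j+2) '' (Set.Iio n)) ({2*n+2} : Set ℕ) := by
      rw [Set.disjoint_right]
      rintro x hx ⟨j, hj, rfl⟩
      simp only [Set.mem_singleton_iff] at hx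
      simp only [Set.mem_Iio] at hj
      omega
    exact (Indep_iff _ _ _).1 (hsup _ _ hdisj) _ _
      (hmE ((fun j => 2*j+2) '' Set.Iio n) n (fun j hj => ⟨j, hj, rfl⟩) a)
      (hcomapSet (ε n) (2*n+2) (hFe n) {2*n+2} rfl {c})
  have hindεt : ∀ n a c, μ ({ω | ∑ l ∈ Finset.range n, εt l ω = a} ∩ {ω | εt n ω = c})
      = μ {ω | ∑ l ∈ Finset.range n, εt l ω = a} * μ {ω | εt n ω = c} := by
    intro n a c
    have hdisj : Disjoint ((fun j => 2*j+3) '' (Set.Iio n)) ({2*n+3} : Set ℕ) := by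
      rw [Set.disjoint_right]
      rintro x hx ⟨j, hj, rfl⟩
      simp only [Set.mem_singleton_iff] at hx
      simp only [Set.mem_Iio] at hj
      omega
    exact (Indep_iff _ _ _).1 (hsup _ _ hdisj) _ _
      (hmEt ((fun j => 2*j+3) '' Set.Iio n) n (fun j hj => ⟨j, hj, rfl⟩) a)
      (hcomapSet (εt n) (2*n+3) (hFo n) {2*n+3} rfl {c})
  -- binomial pmfs
  have hbinε : ∀ n a, μ {ω | ∑ l ∈ Finset.range n, ε l ω = a}
      = ENNReal.ofReal ((n.choose a) * (1-p)^a * p^(n-a)) :=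
    aux_binom μ (1-p) p (by linarith) hp0.le ε hεm hε01 hεP hεP0 hindε
  have hbinεt : ∀ n a, μ {ω | ∑ l ∈ Finset.range n, εt l ω = a}
      = ENNReal.ofReal ((n.choose a) * (1-q)^a * q^(n-a)) :=
    aux_binom μ (1-q) q (by linarith) hq0.le εt hεtm hεt01 hεtP hεtP0 hindεt
  -- the four thinned variables
  set S : Ω → ℕ := fun ω => ∑ j ∈ Finset.range (X ω), ε j ω with hSdef
  set T : Ω → ℕ := fun ω => ∑ j ∈ Finset.range (X ω), (1 - ε j ω) with hTdef
  set U : Ω → ℕ := fun ω => ∑ j ∈ Finset.range (Y ω), εt j ω with hUdef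
  set V : Ω → ℕ := fun ω => ∑ j ∈ Finset.range (Y ω), (1 - εt j ω) with hVdef
  have haddX : ∀ ω, S ω + T ω = X ω := by
    intro ω
    simp only [hSdef, hTdef]
    rw [← Finset.sum_add_distrib]
    have h1 : ∀ lx ∈ Finset.range (X ω), ε lx ω + (1 - ε lx ω) = 1 := by
      intro lx _
      have := hε01 lx ω; omega
    rw [Finset.sum_congr rfl h1, Finset.sum_const, smul_eq_mul, mul_one, Finset.card_range]
  have haddY : ∀ ω, U ω + V ω = Y ω := by
    intro ω
    simp only [hUdef, hVdef]
    rw [← Finset.sum_add_distrib]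
    have h1 : ∀ lx ∈ Finset.range (Y ω), εt lx ω + (1 - εt lx ω) = 1 := by
      intro lx _
      have := hεt01 lx ω; omega
    rw [Finset.sum_congr rfl h1, Finset.sum_const, smul_eq_mul, mul_one, Finset.card_range]
  -- event identities
  have E1 : ∀ i j : ℕ, {ω | S ω = i ∧ T ω = j}
      = {ω | X ω = i+j} ∩ {ω | ∑ l ∈ Finset.range (i+j), ε l ω = i} := by
    intro i j
    ext ω
    simp only [Set.mem_setOf_eq, Set.mem_inter_iff]
    constructor
    · rintro ⟨hsi, htj⟩
      have hx : X ω = i + j := by rw [← haddX ω, hsi, htj]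
      refine ⟨hx, ?_⟩
      have hthis : S ω = i := hsi
      simp only [hSdef] at hthis
      rw [hx] at hthis
      exact hthis
    · rintro ⟨hx, hsum⟩
      have hs : S ω = i := by simp only [hSdef]; rw [hx]; exact hsum
      have := haddX ω
      constructor
      · exact hs
      · omega
  have E1t : ∀ i j : ℕ, {ω | U ω = i ∧ V ω = j}
      = {ω | Y ω = i+j} ∩ {ω | ∑ l ∈ Finset.range (i+j), εt l ω = i} := by
    intro i j
    ext ω
    simp only [Set.mem_setOf_eq, Set.mem_inter_iff]
    constructor
    · rintro ⟨hsi, htj⟩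
      have hx : Y ω = i + j := by rw [← haddY ω, hsi, htj]
      refine ⟨hx, ?_⟩
      have hthis : U ω = i := hsi
      simp only [hUdef] at hthis
      rw [hx] at hthis
      exact hthis
    · rintro ⟨hx, hsum⟩
      have hs : U ω = i := by simp only [hUdef]; rw [hx]; exact hsum
      have := haddY ω
      constructor
      · exact hs
      · omega
  have hSdec : ∀ i, {ω | S ω = i}
      = ⋃ n, ({ω | X ω = n} ∩ {ω | ∑ l ∈ Finset.range n, ε l ω = i}) := by
    intro i
    ext ω
    simp only [Set.mem_setOf_eq, Set.mem_iUnion, Set.mem_inter_iff]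
    constructor
    · intro h
      exact ⟨X ω, rfl, h⟩
    · rintro ⟨n, hn, hsum⟩
      simp only [hSdef]
      rw [hn]
      exact hsum
  have hUdec : ∀ i, {ω | U ω = i}
      = ⋃ n, ({ω | Y ω = n} ∩ {ω | ∑ l ∈ Finset.range n, εt l ω = i}) := by
    intro i
    ext ω
    simp only [Set.mem_setOf_eq, Set.mem_iUnion, Set.mem_inter_iff]
    constructor
    · intro h
      exact ⟨Y ω, rfl, h⟩
    · rintro ⟨n, hn, hsum⟩
      simp only [hUdef]
      rw [hn]
      exact hsum
  -- Y is Poisson too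
  have hlPY : ∀ k, μ {ω | Y ω = k} = ENNReal.ofReal (Real.exp (-l) * l ^ k / k.factorial) := by
    intro k
    have h := hXY.measure_mem_eq (measurableSet_singleton k)
    have h2 : μ {ω | Y ω = k} = μ {ω | X ω = k} := h.symm
    rw [h2, hlP k]
  -- joint pmfs of the pairs
  have hSTμ : ∀ i j, μ {ω | S ω = i ∧ T ω = j} = Po (l*(1-p)) i * Po (l*p) j := by
    intro i j
    have hd : Disjoint ({0} : Set ℕ) (Set.range fun j => 2*j+2) := by
      rw [Set.disjoint_left]
      rintro x hx ⟨k, rfl⟩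
      simp only [Set.mem_singleton_iff] at hx
      omega
    rw [E1 i j, (Indep_iff _ _ _).1 (hsup _ _ hd) _ _ (hmX {0} rfl (i+j))
      (hmE (Set.range fun j => 2*j+2) (i+j) (fun k _ => ⟨k, rfl⟩) i),
      hlP (i+j), hbinε (i+j) i, Nat.add_sub_cancel_left]
    exact aux_pois_split l (1-p) p hl0 (by linarith) hp0.le (by ring) i j
  have hUVμ : ∀ i j, μ {ω | U ω = i ∧ V ω = j} = Po (l*(1-q)) i * Po (l*q) j := by
    intro i j
    have hd : Disjoint ({1} : Set ℕ) (Set.range fun j => 2*j+3) := by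
      rw [Set.disjoint_left]
      rintro x hx ⟨k, rfl⟩
      simp only [Set.mem_singleton_iff] at hx
      omega
    rw [E1t i j, (Indep_iff _ _ _).1 (hsup _ _ hd) _ _ (hmY {1} rfl (i+j))
      (hmEt (Set.range fun j => 2*j+3) (i+j) (fun k _ => ⟨k, rfl⟩) i),
      hlPY (i+j), hbinεt (i+j) i, Nat.add_sub_cancel_left]
    exact aux_pois_split l (1-q) q hl0 (by linarith) hq0.le (by ring) i j
  -- Po tsum
  have hPo_tsum : ∀ c : ℝ, 0 ≤ c → ∑' k : ℕ, Po c k = 1 := fun c hc => aux_pois_tsum c hc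
  -- plain measurability
  have hsumεMeas : ∀ n : ℕ, Measurable (fun ω => ∑ l ∈ Finset.range n, ε l ω) :=
    fun n => Finset.measurable_sum _ fun l _ => hεm l
  have hsumεtMeas : ∀ n : ℕ, Measurable (fun ω => ∑ l ∈ Finset.range n, εt l ω) :=
    fun n => Finset.measurable_sum _ fun l _ => hεtm l
  have hSTmSet : ∀ i j, MeasurableSet {ω | S ω = i ∧ T ω = j} := by
    intro i j
    rw [E1 i j]
    exact (hXm (measurableSet_singleton (i+j))).inter
      ((hsumεMeas (i+j)) (measurableSet_singleton i))
  have hUVmSet : ∀ i j, MeasurableSet {ω | U ω = i ∧ V ω = j} := by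
    intro i j
    rw [E1t i j]
    exact (hYm (measurableSet_singleton (i+j))).inter
      ((hsumεtMeas (i+j)) (measurableSet_singleton i))
  have hSmSet : ∀ i, MeasurableSet {ω | S ω = i} := by
    intro i
    rw [hSdec i]
    exact MeasurableSet.iUnion fun n => (hXm (measurableSet_singleton n)).inter
      ((hsumεMeas n) (measurableSet_singleton i))
  have hUmSet : ∀ i, MeasurableSet {ω | U ω = i} := by
    intro i
    rw [hUdec i]
    exact MeasurableSet.iUnion fun n => (hYm (measurableSet_singleton n)).inter
      ((hsumεtMeas n) (measurableSet_singleton i))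
  -- marginal decompositions
  have hTdec : ∀ j, {ω | T ω = j} = ⋃ i, {ω | S ω = i ∧ T ω = j} := by
    intro j
    ext ω
    simp only [Set.mem_setOf_eq, Set.mem_iUnion]
    exact ⟨fun h => ⟨S ω, rfl, h⟩, fun ⟨i, _, h⟩ => h⟩
  have hVdec : ∀ j, {ω | V ω = j} = ⋃ i, {ω | U ω = i ∧ V ω = j} := by
    intro j
    ext ω
    simp only [Set.mem_setOf_eq, Set.mem_iUnion]
    exact ⟨fun h => ⟨U ω, rfl, h⟩, fun ⟨i, _, h⟩ => h⟩
  have hTmSet : ∀ j, MeasurableSet {ω | T ω = j} := by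
    intro j
    rw [hTdec j]
    exact MeasurableSet.iUnion fun i => hSTmSet i j
  have hVmSet : ∀ j, MeasurableSet {ω | V ω = j} := by
    intro j
    rw [hVdec j]
    exact MeasurableSet.iUnion fun i => hUVmSet i j
  -- marginal pmfs
  have hSμ : ∀ i, μ {ω | S ω = i} = Po (l*(1-p)) i := by
    intro i
    have hdec : {ω | S ω = i} = ⋃ j, {ω | S ω = i ∧ T ω = j} := by
      ext ω
      simp only [Set.mem_setOf_eq, Set.mem_iUnion]
      exact ⟨fun h => ⟨T ω, h, rfl⟩, fun ⟨j, h, _⟩ => h⟩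
    have hpd : Pairwise (Function.onFun Disjoint fun j => {ω | S ω = i ∧ T ω = j}) := by
      intro j k hjk
      refine Set.disjoint_left.mpr ?_
      rintro ω ⟨-, h1⟩ ⟨-, h2⟩
      omega
    rw [hdec, measure_iUnion hpd (fun j => hSTmSet i j)]
    calc ∑' j, μ {ω | S ω = i ∧ T ω = j} = ∑' j, Po (l*(1-p)) i * Po (l*p) j :=
          tsum_congr fun j => hSTμ i j
      _ = Po (l*(1-p)) i := by
          rw [ENNReal.tsum_mul_left, hPo_tsum (l*p) (by positivity), mul_one]
  have hTμ : ∀ j, μ {ω | T ω = j} = Po (l*p) j := by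
    intro j
    have hpd : Pairwise (Function.onFun Disjoint fun i => {ω | S ω = i ∧ T ω = j}) := by
      intro i k hik
      refine Set.disjoint_left.mpr ?_
      rintro ω ⟨h1, -⟩ ⟨h2, -⟩
      omega
    rw [hTdec j, measure_iUnion hpd (fun i => hSTmSet i j)]
    calc ∑' i, μ {ω | S ω = i ∧ T ω = j} = ∑' i, Po (l*(1-p)) i * Po (l*p) j :=
          tsum_congr fun i => hSTμ i j
      _ = Po (l*p) j := by
          rw [ENNReal.tsum_mul_right, hPo_tsum (l*(1-p)) (by nlinarith), one_mul]
  have hUμ : ∀ i, μ {ω | U ω = i} = Po (l*(1-q)) i := by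
    intro i
    have hdec : {ω | U ω = i} = ⋃ j, {ω | U ω = i ∧ V ω = j} := by
      ext ω
      simp only [Set.mem_setOf_eq, Set.mem_iUnion]
      exact ⟨fun h => ⟨V ω, h, rfl⟩, fun ⟨j, h, _⟩ => h⟩
    have hpd : Pairwise (Function.onFun Disjoint fun j => {ω | U ω = i ∧ V ω = j}) := by
      intro j k hjk
      refine Set.disjoint_left.mpr ?_
      rintro ω ⟨-, h1⟩ ⟨-, h2⟩
      omega
    rw [hdec, measure_iUnion hpd (fun j => hUVmSet i j)]
    calc ∑' j, μ {ω | U ω = i ∧ V ω = j} = ∑' j, Po (l*(1-q)) i * Po (l*q) j :=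
          tsum_congr fun j => hUVμ i j
      _ = Po (l*(1-q)) i := by
          rw [ENNReal.tsum_mul_left, hPo_tsum (l*q) (by positivity), mul_one]
  have hVμ : ∀ j, μ {ω | V ω = j} = Po (l*q) j := by
    intro j
    have hpd : Pairwise (Function.onFun Disjoint fun i => {ω | U ω = i ∧ V ω = j}) := by
      intro i k hik
      refine Set.disjoint_left.mpr ?_
      rintro ω ⟨h1, -⟩ ⟨h2, -⟩
      omega
    rw [hVdec j, measure_iUnion hpd (fun i => hUVmSet i j)]
    calc ∑' i, μ {ω | U ω = i ∧ V ω = j} = ∑' i, Po (l*(1-q)) i * Po (l*q) j :=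
          tsum_congr fun i => hUVμ i j
      _ = Po (l*q) j := by
          rw [ENNReal.tsum_mul_right, hPo_tsum (l*(1-q)) (by nlinarith), one_mul]
  -- cross-block independence
  set SXset : Set ℕ := insert 0 (Set.range fun j => 2*j+2) with hSXset
  set SYset : Set ℕ := insert 1 (Set.range fun j => 2*j+3) with hSYset
  have hdXY : Disjoint SXset SYset := by
    rw [Set.disjoint_left]
    rintro x hx hy
    simp only [hSXset, hSYset, Set.mem_insert_iff, Set.mem_range] at hx hy
    rcases hx with rfl | ⟨k, rfl⟩ <;> rcases hy with h | ⟨m, hm⟩ <;> omega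
  have hcross := (Indep_iff _ _ _).1 (hsup SXset SYset hdXY)
  have h0mem : (0 : ℕ) ∈ SXset := Set.mem_insert 0 _
  have h1mem : (1 : ℕ) ∈ SYset := Set.mem_insert 1 _
  have hemem : ∀ j : ℕ, 2*j+2 ∈ SXset := fun j => Set.mem_insert_of_mem _ ⟨j, rfl⟩
  have homem : ∀ j : ℕ, 2*j+3 ∈ SYset := fun j => Set.mem_insert_of_mem _ ⟨j, rfl⟩
  have hmXE_ST : ∀ i j, MeasurableSet[⨆ i ∈ SXset, MeasurableSpace.comap (F i) inferInstance]
      {ω | S ω = i ∧ T ω = j} := by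
    intro i j
    rw [E1 i j]
    exact (hmX SXset h0mem (i+j)).inter (hmE SXset (i+j) (fun k _ => hemem k) i)
  have hmYE_UV : ∀ i j, MeasurableSet[⨆ i ∈ SYset, MeasurableSpace.comap (F i) inferInstance]
      {ω | U ω = i ∧ V ω = j} := by
    intro i j
    rw [E1t i j]
    exact (hmY SYset h1mem (i+j)).inter (hmEt SYset (i+j) (fun k _ => homem k) i)
  have hmXE_S : ∀ i, MeasurableSet[⨆ i ∈ SXset, MeasurableSpace.comap (F i) inferInstance]
      {ω | S ω = i} := by
    intro i
    rw [hSdec i]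
    exact MeasurableSet.iUnion fun n =>
      (hmX SXset h0mem n).inter (hmE SXset n (fun k _ => hemem k) i)
  have hmYE_U : ∀ i, MeasurableSet[⨆ i ∈ SYset, MeasurableSpace.comap (F i) inferInstance]
      {ω | U ω = i} := by
    intro i
    rw [hUdec i]
    exact MeasurableSet.iUnion fun n =>
      (hmY SYset h1mem n).inter (hmEt SYset n (fun k _ => homem k) i)
  have hmXE_T : ∀ j, MeasurableSet[⨆ i ∈ SXset, MeasurableSpace.comap (F i) inferInstance]
      {ω | T ω = j} := by
    intro j
    rw [hTdec j]
    exact MeasurableSet.iUnion fun i => hmXE_ST i j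
  have hmYE_V : ∀ j, MeasurableSet[⨆ i ∈ SYset, MeasurableSpace.comap (F i) inferInstance]
      {ω | V ω = j} := by
    intro j
    rw [hVdec j]
    exact MeasurableSet.iUnion fun i => hmYE_UV i j
  -- pmf of K₁
  have hK1 : ∀ a, μ {ω | S ω + U ω = a}
      = ∑ i ∈ Finset.range (a+1), Po (l*(1-p)) i * Po (l*(1-q)) (a-i) := by
    intro a
    have hev : {ω | S ω + U ω = a}
        = ⋃ i ∈ Finset.range (a+1), ({ω | S ω = i} ∩ {ω | U ω = a - i}) := by
      ext ω
      simp only [Set.mem_setOf_eq, Set.mem_iUnion, Finset.mem_range, Set.mem_inter_iff,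
        exists_prop]
      constructor
      · intro h
        exact ⟨S ω, by omega, rfl, by omega⟩
      · rintro ⟨i, hi, h1, h2⟩
        omega
    have hd : Set.PairwiseDisjoint ↑(Finset.range (a+1))
        (fun i => {ω | S ω = i} ∩ {ω | U ω = a - i}) := by
      intro i _ j _ hij
      refine Set.disjoint_left.mpr ?_
      rintro ω ⟨h1, -⟩ ⟨h2, -⟩
      simp only [Set.mem_setOf_eq] at h1 h2
      omega
    rw [hev, measure_biUnion_finset hd
      (fun i _ => (hSmSet i).inter (hUmSet (a-i)))]
    refine Finset.sum_congr rfl fun i _ => ?_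
    rw [hcross _ _ (hmXE_S i) (hmYE_U (a-i)), hSμ i, hUμ (a-i)]
  -- pmf of K₂
  have hK2 : ∀ b, μ {ω | T ω + V ω = b}
      = ∑ j ∈ Finset.range (b+1), Po (l*p) j * Po (l*q) (b-j) := by
    intro b
    have hev : {ω | T ω + V ω = b}
        = ⋃ j ∈ Finset.range (b+1), ({ω | T ω = j} ∩ {ω | V ω = b - j}) := by
      ext ω
      simp only [Set.mem_setOf_eq, Set.mem_iUnion, Finset.mem_range, Set.mem_inter_iff,
        exists_prop]
      constructor
      · intro h
        exact ⟨T ω, by omega, rfl, by omega⟩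
      · rintro ⟨j, hj, h1, h2⟩
        omega
    have hd : Set.PairwiseDisjoint ↑(Finset.range (b+1))
        (fun j => {ω | T ω = j} ∩ {ω | V ω = b - j}) := by
      intro i _ j _ hij
      refine Set.disjoint_left.mpr ?_
      rintro ω ⟨h1, -⟩ ⟨h2, -⟩
      simp only [Set.mem_setOf_eq] at h1 h2
      omega
    rw [hev, measure_biUnion_finset hd
      (fun j _ => (hTmSet j).inter (hVmSet (b-j)))]
    refine Finset.sum_congr rfl fun j _ => ?_
    rw [hcross _ _ (hmXE_T j) (hmYE_V (b-j)), hTμ j, hVμ (b-j)]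
  -- joint pmf of (K₁, K₂)
  have hK12 : ∀ a b, μ {ω | S ω + U ω = a ∧ T ω + V ω = b}
      = ∑ x ∈ Finset.range (a+1) ×ˢ Finset.range (b+1),
          (Po (l*(1-p)) x.1 * Po (l*p) x.2) * (Po (l*(1-q)) (a-x.1) * Po (l*q) (b-x.2)) := by
    intro a b
    have hev : {ω | S ω + U ω = a ∧ T ω + V ω = b}
        = ⋃ x ∈ Finset.range (a+1) ×ˢ Finset.range (b+1),
          ({ω | S ω = x.1 ∧ T ω = x.2} ∩ {ω | U ω = a - x.1 ∧ V ω = b - x.2}) := by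
      ext ω
      simp only [Set.mem_setOf_eq, Set.mem_iUnion, Finset.mem_product, Finset.mem_range,
        Set.mem_inter_iff, exists_prop]
      constructor
      · rintro ⟨h1, h2⟩
        exact ⟨(S ω, T ω), ⟨by omega, by omega⟩, ⟨rfl, rfl⟩, ⟨by omega, by omega⟩⟩
      · rintro ⟨⟨i, j⟩, ⟨hi, hj⟩, ⟨hS1, hT1⟩, hU1, hV1⟩
        simp only at hS1 hT1 hU1 hV1
        constructor <;> omega
    have hd : Set.PairwiseDisjoint ↑(Finset.range (a+1) ×ˢ Finset.range (b+1))
        (fun x : ℕ × ℕ => {ω | S ω = x.1 ∧ T ω = x.2}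
          ∩ {ω | U ω = a - x.1 ∧ V ω = b - x.2}) := by
      intro x _ y _ hxy
      refine Set.disjoint_left.mpr ?_
      rintro ω ⟨⟨hs1, ht1⟩, -⟩ ⟨⟨hs2, ht2⟩, -⟩
      exact hxy (Prod.ext (by omega) (by omega))
    rw [hev, measure_biUnion_finset hd
      (fun x _ => (hSTmSet x.1 x.2).inter (hUVmSet (a-x.1) (b-x.2)))]
    refine Finset.sum_congr rfl fun x _ => ?_
    rw [hcross _ _ (hmXE_ST x.1 x.2) (hmYE_UV (a-x.1) (b-x.2)), hSTμ x.1 x.2,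
      hUVμ (a-x.1) (b-x.2)]
  -- factorization
  have hfact : ∀ a b, μ {ω | S ω + U ω = a ∧ T ω + V ω = b}
      = μ {ω | S ω + U ω = a} * μ {ω | T ω + V ω = b} := by
    intro a b
    rw [hK12 a b, hK1 a, hK2 b, Finset.sum_mul_sum, Finset.sum_product]
    refine Finset.sum_congr rfl fun i _ => Finset.sum_congr rfl fun j _ => ?_
    ring
  -- assemble
  have hSmbl : Measurable S := measurable_to_countable' fun i => hSmSet i
  have hTmbl : Measurable T := measurable_to_countable' fun j => hTmSet j
  have hUmbl : Measurable U := measurable_to_countable' fun i => hUmSet i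
  have hVmbl : Measurable V := measurable_to_countable' fun j => hVmSet j
  have hK1m : Measurable (fun ω => S ω + U ω) := hSmbl.add hUmbl
  have hK2m : Measurable (fun ω => T ω + V ω) := hTmbl.add hVmbl
  have hmain : IndepFun (fun ω => S ω + U ω) (fun ω => T ω + V ω) μ := by
    rw [indepFun_iff_map_prod_eq_prod_map_map hK1m.aemeasurable hK2m.aemeasurable]
    have i1 : IsProbabilityMeasure (μ.map (fun ω => S ω + U ω)) :=
      Measure.isProbabilityMeasure_map hK1m.aemeasurable
    have i2 : IsProbabilityMeasure (μ.map (fun ω => T ω + V ω)) :=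
      Measure.isProbabilityMeasure_map hK2m.aemeasurable
    apply MeasureTheory.Measure.ext_of_singleton
    rintro ⟨a, b⟩
    rw [Measure.map_apply (hK1m.prodMk hK2m) (measurableSet_singleton (a,b)),
      ← Set.singleton_prod_singleton, Measure.prod_prod,
      Measure.map_apply hK1m (measurableSet_singleton a),
      Measure.map_apply hK2m (measurableSet_singleton b)]
    have hpre1 : (fun ω => (S ω + U ω, T ω + V ω)) ⁻¹' ({a} ×ˢ {b})
        = {ω | S ω + U ω = a ∧ T ω + V ω = b} := by
      ext ω
      simp [Set.mem_prod]
    have hpre2 : (fun ω => S ω + U ω) ⁻¹' {a} = {ω | S ω + U ω = a} := rfl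
    have hpre3 : (fun ω => T ω + V ω) ⁻¹' {b} = {ω | T ω + V ω = b} := rfl
    rw [hpre1, hpre2, hpre3]
    exact hfact a b
  exact hmain
end

section
/- Suppose the linear forms K₁ = X̃_{1-p} + Ỹ_{1-q} and K₂ = X̃_p + Ỹ_q are stochastically independent. Then X is Poisson distributed: there exists λ ≥ 0 with P(X = k) = e^{-λ} λ^k / k! for all k ∈ ℕ. -/
open MeasureTheory ProbabilityTheory
open scoped ENNReal NNReal

section aux
variable {Ω : Type*} [MeasurableSpace Ω] {μ : Measure Ω}

lemma aux_bern [IsProbabilityMeasure μ] {W : Ω → ℕ} (hW : Measurable W)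
    (h01 : ∀ ω, W ω ≤ 1) (S T : ℝ≥0∞) :
    ∫⁻ ω, S ^ (W ω) * T ^ (1 - W ω) ∂μ
      = μ {ω | W ω = 1} * S + (1 - μ {ω | W ω = 1}) * T := by
  have hms : MeasurableSet {ω | W ω = 1} := hW (measurableSet_singleton 1)
  have hpt : ∀ ω, S ^ (W ω) * T ^ (1 - W ω)
      = {ω | W ω = 1}.indicator (fun _ => S) ω + {ω | W ω = 1}ᶜ.indicator (fun _ => T) ω := by
    intro ω
    rcases Nat.le_one_iff_eq_zero_or_eq_one.mp (h01 ω) with h | h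
    · simp [h, Set.indicator_apply]
    · simp [h, Set.indicator_apply]
  calc ∫⁻ ω, S ^ (W ω) * T ^ (1 - W ω) ∂μ
      = ∫⁻ ω, ({ω | W ω = 1}.indicator (fun _ => S) ω
          + {ω | W ω = 1}ᶜ.indicator (fun _ => T) ω) ∂μ := lintegral_congr hpt
    _ = μ {ω | W ω = 1} * S + (1 - μ {ω | W ω = 1}) * T := by
        rw [lintegral_add_left (measurable_const.indicator hms),
          lintegral_indicator_const hms, lintegral_indicator_const hms.compl,
          prob_compl_eq_one_sub hms, mul_comm, mul_comm T]

lemma aux_indic (m : ℕ) {W : Ω → ℕ} (hW : Measurable W) :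
    ∫⁻ ω, ({m} : Set ℕ).indicator (fun _ => (1:ℝ≥0∞)) (W ω) ∂μ = μ {ω | W ω = m} := by
  have : ∀ ω, ({m} : Set ℕ).indicator (fun _ => (1:ℝ≥0∞)) (W ω)
      = (W ⁻¹' {m}).indicator (fun _ => (1:ℝ≥0∞)) ω := by
    intro ω; by_cases h : W ω = m <;> simp [Set.indicator_apply, Set.mem_preimage, h]
  rw [lintegral_congr this, lintegral_indicator_const (hW (measurableSet_singleton m)), one_mul]
  rfl

end aux

/-- index finset for the grand product -/
def auxI (m n : ℕ) : Finset ℕ :=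
  insert 0 (insert 1 ((Finset.range m).image (fun j => 2*j+2)
    ∪ (Finset.range n).image (fun j => 2*j+3)))

lemma aux_prod_I (m n : ℕ) (φ : ℕ → ℝ≥0∞) :
    ∏ i ∈ auxI m n, φ i
      = φ 0 * φ 1 * (∏ j ∈ Finset.range m, φ (2*j+2)) * (∏ j ∈ Finset.range n, φ (2*j+3)) := by
  have h0 : (0:ℕ) ∉ insert 1 ((Finset.range m).image (fun j => 2*j+2)
      ∪ (Finset.range n).image (fun j => 2*j+3)) := by
    simp only [Finset.mem_insert, Finset.mem_union, Finset.mem_image, Finset.mem_range]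
    push_neg
    exact ⟨one_ne_zero.symm, fun j _ => by omega, fun j _ => by omega⟩
  have h1 : (1:ℕ) ∉ (Finset.range m).image (fun j => 2*j+2)
      ∪ (Finset.range n).image (fun j => 2*j+3) := by
    simp only [Finset.mem_union, Finset.mem_image, Finset.mem_range]
    push_neg
    exact ⟨fun j _ => by omega, fun j _ => by omega⟩
  have hdisj : Disjoint ((Finset.range m).image (fun j => 2*j+2))
      ((Finset.range n).image (fun j => 2*j+3)) := by
    rw [Finset.disjoint_left]
    intro x hx hy
    simp only [Finset.mem_image, Finset.mem_range] at hx hy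
    obtain ⟨j, _, hj⟩ := hx
    obtain ⟨k, _, hk⟩ := hy
    omega
  rw [auxI, Finset.prod_insert h0, Finset.prod_insert h1, Finset.prod_union hdisj,
    Finset.prod_image (fun a _ b _ h => by omega), Finset.prod_image (fun a _ b _ h => by omega)]
  ring

lemma aux_mem0 (m n : ℕ) : 0 ∈ auxI m n := Finset.mem_insert_self _ _
lemma aux_mem1 (m n : ℕ) : 1 ∈ auxI m n :=
  Finset.mem_insert_of_mem (Finset.mem_insert_self _ _)


lemma aux_lintegral_prod_of_iIndepFun {Ω : Type*} [MeasurableSpace Ω] {μ : Measure Ω}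
    [IsProbabilityMeasure μ] {Z : ℕ → Ω → ℕ}
    (hindep : iIndepFun Z μ) (hZ : ∀ i, Measurable (Z i))
    (g : ℕ → ℕ → ℝ≥0∞) (s : Finset ℕ) :
    ∫⁻ ω, ∏ i ∈ s, g i (Z i ω) ∂μ = ∏ i ∈ s, ∫⁻ ω, g i (Z i ω) ∂μ := by
  classical
  have hGindep : iIndepFun (fun i => (g i) ∘ (Z i)) μ :=
    hindep.comp _ (fun i => Measurable.of_discrete)
  have hGmeas : ∀ i, Measurable ((g i) ∘ (Z i)) := fun i => Measurable.of_discrete.comp (hZ i)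
  induction s using Finset.induction_on with
  | empty => simp
  | insert i s hi ih =>
    have h1 : IndepFun (∏ j ∈ s, (g j ∘ Z j)) (g i ∘ Z i) μ :=
      hGindep.indepFun_finsetProd_of_notMem hGmeas hi
    have hpm : Measurable (∏ j ∈ s, (g j ∘ Z j)) := by
      rw [show (∏ j ∈ s, (g j ∘ Z j)) = fun ω => ∏ j ∈ s, g j (Z j ω) from
        funext fun ω => by simp [Finset.prod_apply]]
      exact Finset.measurable_prod _ (fun j _ => hGmeas j)
    have h2 := lintegral_mul_eq_lintegral_mul_lintegral_of_indepFun hpm (hGmeas i) h1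
    rw [Finset.prod_insert hi]
    have h3 : (fun ω => ∏ j ∈ insert i s, g j (Z j ω))
        = fun ω => ((∏ j ∈ s, (g j ∘ Z j)) * (g i ∘ Z i)) ω := by
      funext ω; simp [Finset.prod_apply, Finset.prod_insert hi, mul_comm]
    calc ∫⁻ ω, ∏ j ∈ insert i s, g j (Z j ω) ∂μ
        = ∫⁻ ω, ((∏ j ∈ s, (g j ∘ Z j)) * (g i ∘ Z i)) ω ∂μ := by rw [h3]
      _ = (∫⁻ ω, (∏ j ∈ s, (g j ∘ Z j)) ω ∂μ) * ∫⁻ ω, (g i ∘ Z i) ω ∂μ := h2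
      _ = (∫⁻ ω, g i (Z i ω) ∂μ) * ∏ j ∈ s, ∫⁻ ω, g j (Z j ω) ∂μ := by
          rw [← ih, mul_comm]
          congr 1
          exact lintegral_congr fun ω => by simp [Finset.prod_apply]


section aux
variable {Ω : Type*} [MeasurableSpace Ω] {μ : Measure Ω}

lemma aux_joint_pgf [IsProbabilityMeasure μ]
    (X Y : Ω → ℕ) (ε εt : ℕ → Ω → ℕ)
    (hXm : Measurable X) (hYm : Measurable Y)
    (hεm : ∀ j, Measurable (ε j)) (hεtm : ∀ j, Measurable (εt j))
    (hε01 : ∀ j ω, ε j ω ≤ 1) (hεt01 : ∀ j ω, εt j ω ≤ 1)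
    (hindep : iIndepFun
      (fun i : ℕ => if i = 0 then X else if i = 1 then Y
        else if (i - 2) % 2 = 0 then ε ((i - 2) / 2) else εt ((i - 2) / 2)) μ)
    (S T : ℝ≥0∞) (A B : ℝ≥0∞)
    (hA : ∀ j, μ {ω | ε j ω = 1} * S + (1 - μ {ω | ε j ω = 1}) * T = A)
    (hB : ∀ j, μ {ω | εt j ω = 1} * S + (1 - μ {ω | εt j ω = 1}) * T = B) :
    ∫⁻ ω, S ^ ((∑ j ∈ Finset.range (X ω), ε j ω) + ∑ j ∈ Finset.range (Y ω), εt j ω)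
        * T ^ ((∑ j ∈ Finset.range (X ω), (1 - ε j ω))
            + ∑ j ∈ Finset.range (Y ω), (1 - εt j ω)) ∂μ
      = (∑' m : ℕ, μ {ω | X ω = m} * A ^ m) * (∑' n : ℕ, μ {ω | Y ω = n} * B ^ n) := by
  classical
  set Z : ℕ → Ω → ℕ := fun i : ℕ => if i = 0 then X else if i = 1 then Y
        else if (i - 2) % 2 = 0 then ε ((i - 2) / 2) else εt ((i - 2) / 2) with hZdef
  have hZm : ∀ i, Measurable (Z i) := by
    intro i
    simp only [hZdef]
    split_ifs
    · exact hXm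
    · exact hYm
    · exact hεm _
    · exact hεtm _
  have hZ0 : Z 0 = X := by simp [hZdef]
  have hZ1 : Z 1 = Y := by simp [hZdef]
  have hZ2 : ∀ j, Z (2*j+2) = ε j := by
    intro j
    have e1 : 2*j+2 ≠ 0 := by omega
    have e2 : 2*j+2 ≠ 1 := by omega
    have e3 : (2*j+2-2) % 2 = 0 := by omega
    have e4 : (2*j+2-2) / 2 = j := by omega
    simp [hZdef, e1, e2, e3, e4]
  have hZ3 : ∀ j, Z (2*j+3) = εt j := by
    intro j
    have e1 : 2*j+3 ≠ 0 := by omega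
    have e2 : 2*j+3 ≠ 1 := by omega
    have e3 : ¬((2*j+1) % 2 = 0) := by omega
    have e4 : (2*j+1) / 2 = j := by omega
    simp [hZdef, e1, e2, e3, e4]
  -- the elementary factor functions
  set G : ℕ → ℕ → ℕ → ℕ → ℝ≥0∞ := fun m n i =>
    if i = 0 then ({m} : Set ℕ).indicator (fun _ => (1:ℝ≥0∞))
    else if i = 1 then ({n} : Set ℕ).indicator (fun _ => (1:ℝ≥0∞))
    else fun e => S ^ e * T ^ (1 - e) with hGdef
  -- Step 1 : pointwise expansion as a tsum
  have step1 : ∀ ω, S ^ ((∑ j ∈ Finset.range (X ω), ε j ω) + ∑ j ∈ Finset.range (Y ω), εt j ω)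
        * T ^ ((∑ j ∈ Finset.range (X ω), (1 - ε j ω))
            + ∑ j ∈ Finset.range (Y ω), (1 - εt j ω))
      = ∑' mn : ℕ × ℕ, ∏ i ∈ auxI mn.1 mn.2, G mn.1 mn.2 i (Z i ω) := by
    intro ω
    rw [tsum_eq_single (X ω, Y ω) ?_]
    · rw [aux_prod_I]
      have g0 : G (X ω) (Y ω) 0 (Z 0 ω) = 1 := by
        simp [hGdef, hZ0, Set.indicator_apply]
      have g1 : G (X ω) (Y ω) 1 (Z 1 ω) = 1 := by
        simp [hGdef, hZ1, Set.indicator_apply]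
      have g2 : ∀ j, G (X ω) (Y ω) (2*j+2) (Z (2*j+2) ω) = S ^ (ε j ω) * T ^ (1 - ε j ω) := by
        intro j
        have e1 : 2*j+2 ≠ 0 := by omega
        have e2 : 2*j+2 ≠ 1 := by omega
        simp [hGdef, e1, e2, hZ2 j]
      have g3 : ∀ j, G (X ω) (Y ω) (2*j+3) (Z (2*j+3) ω) = S ^ (εt j ω) * T ^ (1 - εt j ω) := by
        intro j
        have e1 : 2*j+3 ≠ 0 := by omega
        have e2 : 2*j+3 ≠ 1 := by omega
        simp [hGdef, e1, e2, hZ3 j]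
      simp only [g0, g1]
      rw [Finset.prod_congr rfl (fun j _ => g2 j), Finset.prod_congr rfl (fun j _ => g3 j),
        Finset.prod_mul_distrib, Finset.prod_mul_distrib,
        Finset.prod_pow_eq_pow_sum, Finset.prod_pow_eq_pow_sum,
        Finset.prod_pow_eq_pow_sum, Finset.prod_pow_eq_pow_sum, pow_add, pow_add]
      ring
    · rintro ⟨m, n⟩ hmn
      have : m ≠ X ω ∨ n ≠ Y ω := by
        by_contra h
        push_neg at h
        exact hmn (by simp [h.1, h.2])
      rcases this with h | h
      · refine Finset.prod_eq_zero (aux_mem0 m n) ?_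
        simp [hGdef, hZ0, Set.indicator_apply, Ne.symm h]
      · refine Finset.prod_eq_zero (aux_mem1 m n) ?_
        simp [hGdef, hZ1, Set.indicator_apply, Ne.symm h]
  -- Step 2 : swap lintegral and tsum
  have step2 : ∫⁻ ω, S ^ ((∑ j ∈ Finset.range (X ω), ε j ω) + ∑ j ∈ Finset.range (Y ω), εt j ω)
        * T ^ ((∑ j ∈ Finset.range (X ω), (1 - ε j ω))
            + ∑ j ∈ Finset.range (Y ω), (1 - εt j ω)) ∂μ
      = ∑' mn : ℕ × ℕ, ∫⁻ ω, ∏ i ∈ auxI mn.1 mn.2, G mn.1 mn.2 i (Z i ω) ∂μ := by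
    rw [lintegral_congr step1]
    exact lintegral_tsum fun mn =>
      (Finset.measurable_prod _ fun i _ => Measurable.of_discrete.comp (hZm i)).aemeasurable
  rw [step2]
  -- Step 3 : factor each term
  have step3 : ∀ m n : ℕ, ∫⁻ ω, ∏ i ∈ auxI m n, G m n i (Z i ω) ∂μ
      = μ {ω | X ω = m} * A ^ m * (μ {ω | Y ω = n} * B ^ n) := by
    intro m n
    rw [aux_lintegral_prod_of_iIndepFun hindep hZm (G m n) (auxI m n), aux_prod_I]
    have c0 : ∫⁻ ω, G m n 0 (Z 0 ω) ∂μ = μ {ω | X ω = m} := by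
      simp only [hGdef, hZ0, if_pos rfl]
      exact aux_indic m hXm
    have c1 : ∫⁻ ω, G m n 1 (Z 1 ω) ∂μ = μ {ω | Y ω = n} := by
      simp only [hGdef, hZ1]
      simp only [one_ne_zero, ↓reduceIte]
      exact aux_indic n hYm
    have c2 : ∀ j, ∫⁻ ω, G m n (2*j+2) (Z (2*j+2) ω) ∂μ = A := by
      intro j
      have e1 : 2*j+2 ≠ 0 := by omega
      have e2 : 2*j+2 ≠ 1 := by omega
      simp only [hGdef, hZ2 j, if_neg e1, if_neg e2]
      rw [aux_bern (hεm j) (hε01 j)]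
      exact hA j
    have c3 : ∀ j, ∫⁻ ω, G m n (2*j+3) (Z (2*j+3) ω) ∂μ = B := by
      intro j
      have e1 : 2*j+3 ≠ 0 := by omega
      have e2 : 2*j+3 ≠ 1 := by omega
      simp only [hGdef, hZ3 j, if_neg e1, if_neg e2]
      rw [aux_bern (hεtm j) (hεt01 j)]
      exact hB j
    rw [c0, c1, Finset.prod_congr rfl (fun j _ => c2 j),
      Finset.prod_congr rfl (fun j _ => c3 j), Finset.prod_const, Finset.prod_const,
      Finset.card_range, Finset.card_range]
    ring
  calc ∑' mn : ℕ × ℕ, ∫⁻ ω, ∏ i ∈ auxI mn.1 mn.2, G mn.1 mn.2 i (Z i ω) ∂μ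
      = ∑' m : ℕ, ∑' n : ℕ, μ {ω | X ω = m} * A ^ m * (μ {ω | Y ω = n} * B ^ n) := by
        rw [ENNReal.tsum_prod']
        exact tsum_congr fun m => tsum_congr fun n => step3 m n
    _ = (∑' m : ℕ, μ {ω | X ω = m} * A ^ m) * (∑' n : ℕ, μ {ω | Y ω = n} * B ^ n) := by
        rw [← ENNReal.tsum_mul_right]
        exact tsum_congr fun m => ENNReal.tsum_mul_left

end aux


lemma aux_meas_sum {Ω : Type*} [MeasurableSpace Ω] {N : Ω → ℕ} {W : ℕ → Ω → ℕ}
    (hN : Measurable N) (hW : ∀ j, Measurable (W j)) :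
    Measurable fun ω => ∑ j ∈ Finset.range (N ω), W j ω := by
  apply measurable_to_countable'
  intro k
  have : (fun ω => ∑ j ∈ Finset.range (N ω), W j ω) ⁻¹' {k}
      = ⋃ m : ℕ, ({ω | N ω = m} ∩ {ω | ∑ j ∈ Finset.range m, W j ω = k}) := by
    ext ω
    simp only [Set.mem_preimage, Set.mem_singleton_iff, Set.mem_iUnion, Set.mem_inter_iff,
      Set.mem_setOf_eq]
    constructor
    · intro h; exact ⟨N ω, rfl, h⟩
    · rintro ⟨m, h1, h2⟩; rw [h1]; exact h2
  rw [this]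
  exact MeasurableSet.iUnion fun m => (hN (measurableSet_singleton m)).inter
    ((Finset.measurable_sum _ fun j _ => hW j) (measurableSet_singleton k))



/-- a function with vanishing derivative on `Ioo 0 1` is constant there -/
lemma aux_const_of_deriv0 {h : ℝ → ℝ} (hd : ∀ x ∈ Set.Ioo (0:ℝ) 1, HasDerivAt h 0 x)
    {x y : ℝ} (hx : x ∈ Set.Ioo (0:ℝ) 1) (hy : y ∈ Set.Ioo (0:ℝ) 1) : h x = h y := by
  refine (convex_Ioo (0:ℝ) 1).is_const_of_fderivWithin_eq_zero
    (fun z hz => (hd z hz).differentiableAt.differentiableWithinAt) ?_ hx hy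
  intro z hz
  rw [fderivWithin_of_isOpen isOpen_Ioo hz]
  have := (hd z hz).hasFDerivAt.fderiv
  rw [this]
  ext w
  simp

/-- a function constant on `Ioo 0 1` has zero derivative there -/
lemma aux_deriv0_of_const {h : ℝ → ℝ} {c : ℝ} (hconst : ∀ x ∈ Set.Ioo (0:ℝ) 1, h x = c)
    {x : ℝ} (hx : x ∈ Set.Ioo (0:ℝ) 1) {D : ℝ} (hD : HasDerivAt h D x) : D = 0 := by
  have heq : h =ᶠ[nhds x] fun _ => c :=
    Filter.eventuallyEq_of_mem (isOpen_Ioo.mem_nhds hx) hconst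
  exact hD.unique ((hasDerivAt_const x c).congr_of_eventuallyEq heq)

/-- two nonnegative summable coefficient sequences with the same generating function
on `(0,1)` agree -/
lemma aux_coeff {α β : ℕ → ℝ} (hα : ∀ k, 0 ≤ α k) (hβ : ∀ k, 0 ≤ β k)
    (hsa : Summable α) (hsb : Summable β)
    (h : ∀ x ∈ Set.Ioo (0:ℝ) 1, ∑' k, α k * x ^ k = ∑' k, β k * x ^ k) :
    ∀ k, α k = β k := by
  intro k
  induction k using Nat.strong_induction_on with
  | _ k ih =>
  -- summability of weighted tails
  have hsum_pow : ∀ (γ : ℕ → ℝ), (∀ j, 0 ≤ γ j) → Summable γ → ∀ (x : ℝ), 0 ≤ x → x ≤ 1 →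
      ∀ (i : ℕ), Summable fun j => γ (j + i) * x ^ j := by
    intro γ hγ hsγ x hx0 hx1 i
    refine Summable.of_nonneg_of_le (fun j => mul_nonneg (hγ _) (pow_nonneg hx0 _))
      (fun j => ?_) ((summable_nat_add_iff i).mpr hsγ)
    calc γ (j + i) * x ^ j ≤ γ (j + i) * 1 :=
          mul_le_mul_of_nonneg_left (pow_le_one₀ hx0 hx1) (hγ _)
      _ = γ (j + i) := mul_one _
  -- tails of the generating functions agree
  have htail : ∀ x ∈ Set.Ioo (0:ℝ) 1,
      (∑' j, α (j + k) * x ^ j) = ∑' j, β (j + k) * x ^ j := by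
    intro x hx
    obtain ⟨hx0, hx1⟩ := hx
    have hsax : Summable fun j => α j * x ^ j := by
      simpa using hsum_pow α hα hsa x hx0.le hx1.le 0
    have hsbx : Summable fun j => β j * x ^ j := by
      simpa using hsum_pow β hβ hsb x hx0.le hx1.le 0
    have h1 := Summable.sum_add_tsum_nat_add k hsax
    have h2 := Summable.sum_add_tsum_nat_add k hsbx
    have hpart : (∑ i ∈ Finset.range k, α i * x ^ i) = ∑ i ∈ Finset.range k, β i * x ^ i :=
      Finset.sum_congr rfl fun i hi => by rw [ih i (Finset.mem_range.mp hi)]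
    have h3 : (∑' j, α (j + k) * x ^ (j + k)) = ∑' j, β (j + k) * x ^ (j + k) := by
      have := h x ⟨hx0, hx1⟩
      rw [← h1, ← h2, hpart] at this
      linarith
    have h4 : ∀ (γ : ℕ → ℝ), (∑' j, γ (j + k) * x ^ (j + k))
        = (∑' j, γ (j + k) * x ^ j) * x ^ k := by
      intro γ
      rw [← tsum_mul_right]
      congr 1
      funext j
      rw [pow_add]
      ring
    rw [h4 α, h4 β] at h3
    exact mul_right_cancel₀ (pow_ne_zero _ hx0.ne') h3
  -- bound |α k - β k|
  have hbound : ∀ x ∈ Set.Ioo (0:ℝ) 1, |α k - β k| ≤ x * (∑' j, α j + ∑' j, β j) := by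
    intro x hx
    obtain ⟨hx0, hx1⟩ := hx
    have key : ∀ (γ : ℕ → ℝ), (∀ j, 0 ≤ γ j) → Summable γ →
        |(∑' j, γ (j + k) * x ^ j) - γ k| ≤ x * ∑' j, γ j := by
      intro γ hγ hsγ
      have hs0 : Summable fun j => γ (j + k) * x ^ j := hsum_pow γ hγ hsγ x hx0.le hx1.le k
      have h5 := Summable.sum_add_tsum_nat_add 1 hs0
      have h6 : (∑ i ∈ Finset.range 1, γ (i + k) * x ^ i) = γ k := by simp
      -- the tail τ = ∑' j, γ (j+1+k) * x^(j+1)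
      have h7 : (∑' j, γ (j + k) * x ^ j) - γ k = ∑' j, γ (j + 1 + k) * x ^ (j + 1) := by
        rw [← h5, h6]; ring
      rw [h7]
      have hnn : ∀ j, 0 ≤ γ (j + 1 + k) * x ^ (j + 1) :=
        fun j => mul_nonneg (hγ _) (pow_nonneg hx0.le _)
      rw [abs_of_nonneg (tsum_nonneg hnn)]
      have hstep : ∀ j, γ (j + 1 + k) * x ^ (j + 1) ≤ x * γ (j + 1 + k) := by
        intro j
        calc γ (j + 1 + k) * x ^ (j + 1) = x * (γ (j + 1 + k) * x ^ j) := by ring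
          _ ≤ x * (γ (j + 1 + k) * 1) := by
              apply mul_le_mul_of_nonneg_left _ hx0.le
              exact mul_le_mul_of_nonneg_left (pow_le_one₀ hx0.le hx1.le) (hγ _)
          _ = x * γ (j + 1 + k) := by rw [mul_one]
      have hsum_tail : Summable fun j => γ (j + 1 + k) := by
        have := (summable_nat_add_iff (1 + k)).mpr hsγ
        refine this.congr fun j => by ring_nf
      calc (∑' j, γ (j + 1 + k) * x ^ (j + 1)) ≤ ∑' j, x * γ (j + 1 + k) := by
            refine Summable.tsum_le_tsum hstep ?_ (hsum_tail.mul_left x)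
            · refine Summable.of_nonneg_of_le hnn hstep (hsum_tail.mul_left x)
        _ = x * ∑' j, γ (j + 1 + k) := tsum_mul_left
        _ ≤ x * ∑' j, γ j := by
            apply mul_le_mul_of_nonneg_left _ hx0.le
            have h8 := Summable.sum_add_tsum_nat_add (1 + k) hsγ
            have h9 : (∑' j, γ (j + 1 + k)) = ∑' j, γ (j + (1 + k)) := by
              apply tsum_congr; intro j; congr 1; ring
            rw [h9, ← h8]
            have : 0 ≤ ∑ i ∈ Finset.range (1 + k), γ i :=
              Finset.sum_nonneg fun i _ => hγ i
            linarith
    have hkα := key α hα hsa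
    have hkβ := key β hβ hsb
    have := htail x ⟨hx0, hx1⟩
    calc |α k - β k|
        = |((∑' j, β (j + k) * x ^ j) - β k) - ((∑' j, α (j + k) * x ^ j) - α k)| := by
          rw [this]; congr 1; ring
      _ ≤ |(∑' j, β (j + k) * x ^ j) - β k| + |(∑' j, α (j + k) * x ^ j) - α k| :=
          abs_sub _ _
      _ ≤ x * ∑' j, β j + x * ∑' j, α j := add_le_add hkβ hkα
      _ = x * (∑' j, α j + ∑' j, β j) := by ring
  -- conclude
  have habs : |α k - β k| ≤ 0 := by
    by_contra hcon
    push_neg at hcon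
    set C := (∑' j, α j) + ∑' j, β j with hC
    have hC0 : 0 ≤ C := add_nonneg (tsum_nonneg hα) (tsum_nonneg hβ)
    set x := min (1/2) (|α k - β k| / (2 * (C + 1))) with hxdef
    have hx0 : 0 < x := lt_min (by norm_num) (by positivity)
    have hx1 : x < 1 := lt_of_le_of_lt (min_le_left _ _) (by norm_num)
    have := hbound x ⟨hx0, hx1⟩
    have hle : x ≤ |α k - β k| / (2 * (C + 1)) := min_le_right _ _
    have : |α k - β k| ≤ (|α k - β k| / (2 * (C + 1))) * C := by
      calc |α k - β k| ≤ x * C := this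
        _ ≤ (|α k - β k| / (2 * (C + 1))) * C := mul_le_mul_of_nonneg_right hle hC0
    have h2 : (|α k - β k| / (2 * (C + 1))) * C < |α k - β k| := by
      rw [div_mul_eq_mul_div, div_lt_iff₀ (by positivity)]
      nlinarith [abs_nonneg (α k - β k)]
    linarith
  have := abs_nonneg (α k - β k)
  have : |α k - β k| = 0 := le_antisymm habs this
  have := abs_eq_zero.mp this
  linarith


lemma aux_hasFPower {α : ℕ → ℝ} (h0 : ∀ k, 0 ≤ α k) (hle : ∀ k, α k ≤ 1) :
    HasFPowerSeriesOnBall (fun x => ∑' k, α k * x ^ k)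
      (FormalMultilinearSeries.ofScalars ℝ α) 0 1 := by
  have hnorm : ∀ n, ‖FormalMultilinearSeries.ofScalars ℝ α n‖ = |α n| := by
    intro n
    rw [FormalMultilinearSeries.ofScalars_norm]
    exact Real.norm_eq_abs _
  refine ⟨?_, one_pos, ?_⟩
  · have hb : ∀ n, ‖FormalMultilinearSeries.ofScalars ℝ α n‖ * ((1:ℝ≥0):ℝ) ^ n ≤ 1 := by
      intro n
      rw [hnorm n]
      simp [abs_of_nonneg (h0 n), hle n]
    have := (FormalMultilinearSeries.ofScalars ℝ α).le_radius_of_bound 1 hb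
    simpa using this
  · intro y hy
    have hy1 : ‖y‖ < 1 := by
      have : edist y 0 < 1 := by simpa [EMetric.mem_ball] using hy
      rw [edist_dist, dist_zero_right] at this
      exact_mod_cast (ENNReal.ofReal_lt_one.mp this)
    have hsum : Summable fun n => α n * y ^ n := by
      refine Summable.of_norm_bounded (summable_geometric_of_lt_one (norm_nonneg y) hy1) ?_
      intro n
      rw [norm_mul, norm_pow]
      calc ‖α n‖ * ‖y‖ ^ n ≤ 1 * ‖y‖ ^ n := by
            apply mul_le_mul_of_nonneg_right _ (pow_nonneg (norm_nonneg y) n)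
            rw [Real.norm_eq_abs, abs_of_nonneg (h0 n)]; exact hle n
       _ = ‖y‖ ^ n := one_mul _
    have : (fun n => (FormalMultilinearSeries.ofScalars ℝ α) n fun _ => y)
        = fun n => α n * y ^ n := by
      funext n
      rw [FormalMultilinearSeries.ofScalars_apply_eq]
      simp [smul_eq_mul]
    rw [this, zero_add]
    exact hsum.hasSum



lemma aux_mem_Ioo {r s t : ℝ} (hr0 : 0 < r) (hr1 : r < 1)
    (hs0 : 0 < s) (hs1 : s ≤ 1) (ht0 : 0 < t) (ht1 : t ≤ 1) (hlt : s < 1 ∨ t < 1) :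
    (1-r)*s + r*t ∈ Set.Ioo (0:ℝ) 1 := by
  constructor
  · nlinarith
  · rcases hlt with h | h
    · nlinarith
    · nlinarith

set_option maxHeartbeats 1000000 in
lemma aux_analysis (p q : ℝ) (hp0 : 0 < p) (hp1 : p < 1) (hq0 : 0 < q) (hq1 : q < 1)
    (A : ℕ → ℝ≥0∞) (hsum : ∑' m, A m = 1)
    (hfe : ∀ S T : ℝ≥0∞,
      (∑' m, A m * (ENNReal.ofReal (1-p) * S + ENNReal.ofReal p * T) ^ m) *
      (∑' m, A m * (ENNReal.ofReal (1-q) * S + ENNReal.ofReal q * T) ^ m) =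
      ((∑' m, A m * (ENNReal.ofReal (1-p) * S + ENNReal.ofReal p) ^ m) *
       (∑' m, A m * (ENNReal.ofReal (1-q) * S + ENNReal.ofReal q) ^ m)) *
      ((∑' m, A m * (ENNReal.ofReal (1-p) + ENNReal.ofReal p * T) ^ m) *
       (∑' m, A m * (ENNReal.ofReal (1-q) + ENNReal.ofReal q * T) ^ m))) :
    ∃ l : ℝ, 0 ≤ l ∧ ∀ k : ℕ, A k = ENNReal.ofReal (Real.exp (-l) * l ^ k / k.factorial) := by
  classical
  -- real coefficients
  have hA1 : ∀ k, A k ≤ 1 := fun k => hsum ▸ ENNReal.le_tsum k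
  have hAne : ∀ k, A k ≠ ∞ := fun k => ((hA1 k).trans_lt (by norm_num)).ne
  set α : ℕ → ℝ := fun k => (A k).toReal with hαdef
  have hα0 : ∀ k, 0 ≤ α k := fun k => ENNReal.toReal_nonneg
  have hα1 : ∀ k, α k ≤ 1 := fun k => by
    have := ENNReal.toReal_mono (by norm_num) (hA1 k)
    simpa using this
  have hAα : ∀ k, A k = ENNReal.ofReal (α k) := fun k => (ENNReal.ofReal_toReal (hAne k)).symm
  have hαsummable : Summable α :=
    ENNReal.summable_toReal (by rw [hsum]; exact ENNReal.one_ne_top)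
  have hαsum : ∑' k, α k = 1 := by
    have := ENNReal.tsum_toReal_eq hAne
    rw [hsum] at this
    simpa using this.symm
  set f : ℝ → ℝ := fun x => ∑' k, α k * x ^ k with hfdef
  have hfsum : ∀ x : ℝ, 0 ≤ x → x ≤ 1 → Summable fun k => α k * x ^ k := by
    intro x h0 h1
    refine Summable.of_nonneg_of_le (fun k => mul_nonneg (hα0 k) (pow_nonneg h0 k))
      (fun k => ?_) hαsummable
    calc α k * x ^ k ≤ α k * 1 := mul_le_mul_of_nonneg_left (pow_le_one₀ h0 h1) (hα0 k)
      _ = α k := mul_one _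
  have hfnn : ∀ x : ℝ, 0 ≤ x → 0 ≤ f x :=
    fun x hx => tsum_nonneg fun k => mul_nonneg (hα0 k) (pow_nonneg hx k)
  -- bridge between the ENNReal and real generating functions
  have R1 : ∀ x : ℝ, 0 ≤ x → x ≤ 1 →
      (∑' m, A m * (ENNReal.ofReal x) ^ m) = ENNReal.ofReal (f x) := by
    intro x h0 h1
    rw [hfdef, ENNReal.ofReal_tsum_of_nonneg
      (fun k => mul_nonneg (hα0 k) (pow_nonneg h0 k)) (hfsum x h0 h1)]
    exact tsum_congr fun k => by
      rw [ENNReal.ofReal_mul (hα0 k), ENNReal.ofReal_pow h0, ← hAα k]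
  -- the real functional equation
  have hfe' : ∀ s t : ℝ, s ∈ Set.Ioo (0:ℝ) 1 → t ∈ Set.Ioo (0:ℝ) 1 →
      f ((1-p)*s + p*t) * f ((1-q)*s + q*t)
        = (f ((1-p)*s + p) * f ((1-q)*s + q)) * (f ((1-p) + p*t) * f ((1-q) + q*t)) := by
    intro s t hs ht
    obtain ⟨hs0, hs1⟩ := hs
    obtain ⟨ht0, ht1⟩ := ht
    have h := hfe (ENNReal.ofReal s) (ENNReal.ofReal t)
    have key : ∀ r u v : ℝ, 0 < r → r < 1 → 0 ≤ u → 0 ≤ v →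
        ENNReal.ofReal (1-r) * ENNReal.ofReal u + ENNReal.ofReal r * ENNReal.ofReal v
          = ENNReal.ofReal ((1-r)*u + r*v) := by
      intro r u v hr0 hr1 hu hv
      rw [← ENNReal.ofReal_mul (by linarith), ← ENNReal.ofReal_mul (by linarith),
        ← ENNReal.ofReal_add (by nlinarith) (by nlinarith)]
    have e1 := key p s t hp0 hp1 hs0.le ht0.le
    have e2 := key q s t hq0 hq1 hs0.le ht0.le
    have e3 : ENNReal.ofReal (1-p) * ENNReal.ofReal s + ENNReal.ofReal p
        = ENNReal.ofReal ((1-p)*s + p) := by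
      have := key p s 1 hp0 hp1 hs0.le zero_le_one
      simpa using this
    have e4 : ENNReal.ofReal (1-q) * ENNReal.ofReal s + ENNReal.ofReal q
        = ENNReal.ofReal ((1-q)*s + q) := by
      have := key q s 1 hq0 hq1 hs0.le zero_le_one
      simpa using this
    have e5 : ENNReal.ofReal (1-p) + ENNReal.ofReal p * ENNReal.ofReal t
        = ENNReal.ofReal ((1-p) + p*t) := by
      have := key p 1 t hp0 hp1 zero_le_one ht0.le
      simpa using this
    have e6 : ENNReal.ofReal (1-q) + ENNReal.ofReal q * ENNReal.ofReal t
        = ENNReal.ofReal ((1-q) + q*t) := by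
      have := key q 1 t hq0 hq1 zero_le_one ht0.le
      simpa using this
    have m1 := aux_mem_Ioo hp0 hp1 hs0 hs1.le ht0 ht1.le (Or.inl hs1)
    have m2 := aux_mem_Ioo hq0 hq1 hs0 hs1.le ht0 ht1.le (Or.inl hs1)
    have m3 : (1-p)*s + p = (1-p)*s + p*1 := by ring
    have m3' := aux_mem_Ioo hp0 hp1 hs0 hs1.le one_pos le_rfl (Or.inl hs1)
    rw [← m3] at m3'
    have m4 : (1-q)*s + q = (1-q)*s + q*1 := by ring
    have m4' := aux_mem_Ioo hq0 hq1 hs0 hs1.le one_pos le_rfl (Or.inl hs1)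
    rw [← m4] at m4'
    have m5 : (1-p) + p*t = (1-p)*1 + p*t := by ring
    have m5' := aux_mem_Ioo hp0 hp1 one_pos le_rfl ht0 ht1.le (Or.inr ht1)
    rw [← m5] at m5'
    have m6 : (1-q) + q*t = (1-q)*1 + q*t := by ring
    have m6' := aux_mem_Ioo hq0 hq1 one_pos le_rfl ht0 ht1.le (Or.inr ht1)
    rw [← m6] at m6'
    rw [e1, e2, e3, e4, e5, e6] at h
    rw [R1 _ m1.1.le m1.2.le, R1 _ m2.1.le m2.2.le,
      R1 _ m3'.1.le m3'.2.le, R1 _ m4'.1.le m4'.2.le,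
      R1 _ m5'.1.le m5'.2.le, R1 _ m6'.1.le m6'.2.le] at h
    rw [← ENNReal.ofReal_mul (hfnn _ m1.1.le), ← ENNReal.ofReal_mul (hfnn _ m3'.1.le),
      ← ENNReal.ofReal_mul (hfnn _ m5'.1.le),
      ← ENNReal.ofReal_mul (mul_nonneg (hfnn _ m3'.1.le) (hfnn _ m4'.1.le))] at h
    exact (ENNReal.ofReal_eq_ofReal_iff
      (mul_nonneg (hfnn _ m1.1.le) (hfnn _ m2.1.le))
      (mul_nonneg (mul_nonneg (hfnn _ m3'.1.le) (hfnn _ m4'.1.le))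
        (mul_nonneg (hfnn _ m5'.1.le) (hfnn _ m6'.1.le)))).mp h
  -- analytic structure
  have hFP : HasFPowerSeriesOnBall f (FormalMultilinearSeries.ofScalars ℝ α) 0 1 :=
    aux_hasFPower hα0 hα1
  have hball : ∀ x : ℝ, x ∈ Set.Ioo (0:ℝ) 1 → x ∈ Metric.eball (0:ℝ) 1 := by
    intro x hx
    rw [Metric.mem_eball, edist_dist, dist_zero_right, Real.norm_eq_abs, abs_of_pos hx.1]
    exact ENNReal.ofReal_lt_one.mpr hx.2
  have hAnal : AnalyticOnNhd ℝ f (Metric.eball (0:ℝ) 1) := hFP.analyticOnNhd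
  have hfd : ∀ x ∈ Set.Ioo (0:ℝ) 1, DifferentiableAt ℝ f x :=
    fun x hx => (hAnal x (hball x hx)).differentiableAt
  have hfd' : ∀ x ∈ Set.Ioo (0:ℝ) 1, DifferentiableAt ℝ (deriv f) x :=
    fun x hx => ((hAnal.deriv) x (hball x hx)).differentiableAt
  have hk0 : ∃ k, 0 < α k := by
    by_contra hcon
    push_neg at hcon
    have : ∀ k, α k = 0 := fun k => le_antisymm (hcon k) (hα0 k)
    rw [tsum_congr (fun k => this k)] at hαsum
    simp at hαsum
  obtain ⟨k0, hk0⟩ := hk0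
  have hfpos : ∀ x ∈ Set.Ioo (0:ℝ) 1, 0 < f x := by
    intro x hx
    exact Summable.tsum_pos (hfsum x hx.1.le hx.2.le)
      (fun k => mul_nonneg (hα0 k) (pow_nonneg hx.1.le k)) k0
      (mul_pos hk0 (pow_pos hx.1 k0))
  set g : ℝ → ℝ := fun x => Real.log (f x) with hgdef
  set g₁ : ℝ → ℝ := fun x => deriv f x / f x with hg₁def
  have hg : ∀ x ∈ Set.Ioo (0:ℝ) 1, HasDerivAt g (g₁ x) x := by
    intro x hx
    have h1 : HasDerivAt Real.log (f x)⁻¹ (f x) := Real.hasDerivAt_log (hfpos x hx).ne'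
    have h2 : HasDerivAt f (deriv f x) x := (hfd x hx).hasDerivAt
    have h3 := h1.comp x h2
    have : (f x)⁻¹ * deriv f x = g₁ x := by rw [hg₁def]; field_simp
    rw [this] at h3
    exact h3
  have hg₁d : ∀ x ∈ Set.Ioo (0:ℝ) 1, DifferentiableAt ℝ g₁ x := by
    intro x hx
    exact (hfd' x hx).div (hfd x hx) (hfpos x hx).ne'
  set g₂ : ℝ → ℝ := fun x => deriv g₁ x with hg₂def
  have hg₁ : ∀ x ∈ Set.Ioo (0:ℝ) 1, HasDerivAt g₁ (g₂ x) x :=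
    fun x hx => (hg₁d x hx).hasDerivAt
  -- chain rules
  have hchainR : ∀ r v x : ℝ, r + v*x ∈ Set.Ioo (0:ℝ) 1 →
      HasDerivAt (fun y => g (r + v*y)) (g₁ (r + v*x) * v) x := by
    intro r v x hm
    have hlin : HasDerivAt (fun y : ℝ => r + v*y) v x := by
      simpa using ((hasDerivAt_id x).const_mul v).const_add r
    exact (hg _ hm).comp x hlin
  have hchainL₁ : ∀ v r x : ℝ, v*x + r ∈ Set.Ioo (0:ℝ) 1 →
      HasDerivAt (fun y => g₁ (v*y + r)) (g₂ (v*x + r) * v) x := by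
    intro v r x hm
    have hlin : HasDerivAt (fun y : ℝ => v*y + r) v x := by
      simpa using ((hasDerivAt_id x).const_mul v).add_const r
    exact (hg₁ _ hm).comp x hlin
  -- additive functional equation
  have hFElog : ∀ s t : ℝ, s ∈ Set.Ioo (0:ℝ) 1 → t ∈ Set.Ioo (0:ℝ) 1 →
      g ((1-p)*s + p*t) + g ((1-q)*s + q*t)
        = (g ((1-p)*s + p) + g ((1-q)*s + q)) + (g ((1-p) + p*t) + g ((1-q) + q*t)) := by
    intro s t hs ht
    obtain ⟨hs0, hs1⟩ := hs
    obtain ⟨ht0, ht1⟩ := ht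
    have h := hfe' s t ⟨hs0, hs1⟩ ⟨ht0, ht1⟩
    have m1 := aux_mem_Ioo hp0 hp1 hs0 hs1.le ht0 ht1.le (Or.inl hs1)
    have m2 := aux_mem_Ioo hq0 hq1 hs0 hs1.le ht0 ht1.le (Or.inl hs1)
    have e3 : (1-p)*s + p = (1-p)*s + p*1 := by ring
    have m3 : ((1-p)*s + p) ∈ Set.Ioo (0:ℝ) 1 := by
      rw [e3]; exact aux_mem_Ioo hp0 hp1 hs0 hs1.le one_pos le_rfl (Or.inl hs1)
    have e4 : (1-q)*s + q = (1-q)*s + q*1 := by ring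
    have m4 : ((1-q)*s + q) ∈ Set.Ioo (0:ℝ) 1 := by
      rw [e4]; exact aux_mem_Ioo hq0 hq1 hs0 hs1.le one_pos le_rfl (Or.inl hs1)
    have e5 : (1-p) + p*t = (1-p)*1 + p*t := by ring
    have m5 : ((1-p) + p*t) ∈ Set.Ioo (0:ℝ) 1 := by
      rw [e5]; exact aux_mem_Ioo hp0 hp1 one_pos le_rfl ht0 ht1.le (Or.inr ht1)
    have e6 : (1-q) + q*t = (1-q)*1 + q*t := by ring
    have m6 : ((1-q) + q*t) ∈ Set.Ioo (0:ℝ) 1 := by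
      rw [e6]; exact aux_mem_Ioo hq0 hq1 one_pos le_rfl ht0 ht1.le (Or.inr ht1)
    have := congrArg Real.log h
    rw [Real.log_mul (hfpos _ m1).ne' (hfpos _ m2).ne',
      Real.log_mul (mul_pos (hfpos _ m3) (hfpos _ m4)).ne'
        (mul_pos (hfpos _ m5) (hfpos _ m6)).ne',
      Real.log_mul (hfpos _ m3).ne' (hfpos _ m4).ne',
      Real.log_mul (hfpos _ m5).ne' (hfpos _ m6).ne'] at this
    exact this
  -- first differentiation (in t)
  have hderT : ∀ s ∈ Set.Ioo (0:ℝ) 1, ∀ s' ∈ Set.Ioo (0:ℝ) 1, ∀ t ∈ Set.Ioo (0:ℝ) 1,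
      g₁ ((1-p)*s + p*t) * p + g₁ ((1-q)*s + q*t) * q
        = g₁ ((1-p)*s' + p*t) * p + g₁ ((1-q)*s' + q*t) * q := by
    intro s hs s' hs' t ht
    set h : ℝ → ℝ := fun u => (g ((1-p)*s + p*u) + g ((1-q)*s + q*u))
      - (g ((1-p)*s' + p*u) + g ((1-q)*s' + q*u)) with hhdef
    set c : ℝ := (g ((1-p)*s + p) + g ((1-q)*s + q))
      - (g ((1-p)*s' + p) + g ((1-q)*s' + q)) with hcdef
    have hconst : ∀ u ∈ Set.Ioo (0:ℝ) 1, h u = c := by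
      intro u hu
      have h1 := hFElog s u hs hu
      have h2 := hFElog s' u hs' hu
      rw [hhdef, hcdef]
      dsimp only
      linarith
    have m1 := aux_mem_Ioo hp0 hp1 hs.1 hs.2.le ht.1 ht.2.le (Or.inl hs.2)
    have m2 := aux_mem_Ioo hq0 hq1 hs.1 hs.2.le ht.1 ht.2.le (Or.inl hs.2)
    have m3 := aux_mem_Ioo hp0 hp1 hs'.1 hs'.2.le ht.1 ht.2.le (Or.inl hs'.2)
    have m4 := aux_mem_Ioo hq0 hq1 hs'.1 hs'.2.le ht.1 ht.2.le (Or.inl hs'.2)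
    have hD : HasDerivAt h
        ((g₁ ((1-p)*s + p*t) * p + g₁ ((1-q)*s + q*t) * q)
          - (g₁ ((1-p)*s' + p*t) * p + g₁ ((1-q)*s' + q*t) * q)) t :=
      (((hchainR ((1-p)*s) p t m1).add (hchainR ((1-q)*s) q t m2)).sub
        ((hchainR ((1-p)*s') p t m3).add (hchainR ((1-q)*s') q t m4)))
    have := aux_deriv0_of_const hconst ht hD
    linarith
  -- second differentiation (in s), evaluated on the diagonal
  have hg₂0 : ∀ t ∈ Set.Ioo (0:ℝ) 1, g₂ t = 0 := by
    intro t ht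
    set k : ℝ → ℝ := fun s => g₁ ((1-p)*s + p*t) * p + g₁ ((1-q)*s + q*t) * q with hkdef
    have hconst : ∀ s ∈ Set.Ioo (0:ℝ) 1, k s = k t := by
      intro s hs
      exact hderT s hs t ht t ht
    have m1 := aux_mem_Ioo hp0 hp1 ht.1 ht.2.le ht.1 ht.2.le (Or.inl ht.2)
    have m2 := aux_mem_Ioo hq0 hq1 ht.1 ht.2.le ht.1 ht.2.le (Or.inl ht.2)
    have m1' : ((1-p)*t + p*t) = t := by ring
    have m2' : ((1-q)*t + q*t) = t := by ring
    have hD : HasDerivAt k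
        ((g₂ ((1-p)*t + p*t) * (1-p)) * p + (g₂ ((1-q)*t + q*t) * (1-q)) * q) t := by
      have c1 : HasDerivAt (fun s => g₁ ((1-p)*s + p*t)) (g₂ ((1-p)*t + p*t) * (1-p)) t :=
        hchainL₁ (1-p) (p*t) t (by rw [m1']; exact ht)
      have c2 : HasDerivAt (fun s => g₁ ((1-q)*s + q*t)) (g₂ ((1-q)*t + q*t) * (1-q)) t :=
        hchainL₁ (1-q) (q*t) t (by rw [m2']; exact ht)
      exact (c1.mul_const p).add (c2.mul_const q)
    have hzero := aux_deriv0_of_const hconst ht hD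
    rw [m1', m2'] at hzero
    have hcoeff : 0 < (1-p)*p + (1-q)*q := by nlinarith
    have hlin : ((1-p)*p + (1-q)*q) * g₂ t = 0 := by linear_combination hzero
    rcases mul_eq_zero.mp hlin with h | h
    · exact absurd h hcoeff.ne'
    · exact h
  -- g₁ is constant
  have hhalf : (1/2 : ℝ) ∈ Set.Ioo (0:ℝ) 1 := by constructor <;> norm_num
  set β := g₁ (1/2) with hβdef
  have hg₁const : ∀ x ∈ Set.Ioo (0:ℝ) 1, g₁ x = β := by
    intro x hx
    exact aux_const_of_deriv0
      (fun z hz => by have := hg₁ z hz; rwa [hg₂0 z hz] at this) hx hhalf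
  -- g is affine
  set γ := g (1/2) - β * (1/2) with hγdef
  have hgaff : ∀ x ∈ Set.Ioo (0:ℝ) 1, g x = β * x + γ := by
    intro x hx
    have hder0 : ∀ z ∈ Set.Ioo (0:ℝ) 1, HasDerivAt (fun y => g y - β * y) 0 z := by
      intro z hz
      have h1 : HasDerivAt (fun y : ℝ => β * y) β z := by
        simpa using (hasDerivAt_id z).const_mul β
      have := (hg z hz).sub h1
      rwa [hg₁const z hz, sub_self] at this
    have h2 : g x - β * x = g (1/2) - β * (1/2) := aux_const_of_deriv0 hder0 hx hhalf
    rw [hγdef]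
    linarith
  have hfexp : ∀ x ∈ Set.Ioo (0:ℝ) 1, f x = Real.exp (β * x + γ) := by
    intro x hx
    rw [← hgaff x hx, hgdef]
    exact (Real.exp_log (hfpos x hx)).symm
  -- β ≥ 0 by monotonicity
  have hβ0 : 0 ≤ β := by
    have hq14 : (1/4 : ℝ) ∈ Set.Ioo (0:ℝ) 1 := by constructor <;> norm_num
    have hmono : f (1/4 : ℝ) ≤ f (1/2 : ℝ) := by
      refine Summable.tsum_le_tsum (fun k => ?_) (hfsum _ (by norm_num) (by norm_num))
        (hfsum _ (by norm_num) (by norm_num))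
      exact mul_le_mul_of_nonneg_left
        (pow_le_pow_left₀ (by norm_num) (by norm_num) k) (hα0 k)
    rw [hfexp _ hq14, hfexp _ hhalf] at hmono
    have := Real.exp_le_exp.mp hmono
    linarith
  -- coefficient extraction
  set δ : ℕ → ℝ := fun k => Real.exp γ * β ^ k / k.factorial with hδdef
  have hδ0 : ∀ k, 0 ≤ δ k := by
    intro k
    rw [hδdef]
    positivity
  have hδsum : Summable δ := by
    have h1 := (Real.summable_pow_div_factorial β).mul_left (Real.exp γ)
    refine h1.congr fun k => ?_
    rw [hδdef]
    dsimp only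
    ring
  have hexp_tsum : ∀ y : ℝ, Real.exp y = ∑' k : ℕ, y ^ k / k.factorial := by
    intro y
    rw [Real.exp_eq_exp_ℝ, NormedSpace.exp_eq_tsum_div]
  have hrepr : ∀ x ∈ Set.Ioo (0:ℝ) 1, (∑' k, α k * x ^ k) = ∑' k, δ k * x ^ k := by
    intro x hx
    have h1 : f x = Real.exp γ * Real.exp (β * x) := by
      rw [hfexp x hx, ← Real.exp_add]
      ring_nf
    have h2 : Real.exp (β * x) = ∑' k : ℕ, (β ^ k / k.factorial) * x ^ k := by
      rw [hexp_tsum (β * x)]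
      exact tsum_congr fun k => by rw [mul_pow]; ring
    have h3 : (∑' k, δ k * x ^ k) = Real.exp γ * ∑' k : ℕ, (β ^ k / k.factorial) * x ^ k := by
      rw [← tsum_mul_left]
      exact tsum_congr fun k => by rw [hδdef]; dsimp only; ring
    rw [h3, ← h2, ← h1]
  have hcoeff := aux_coeff hα0 hδ0 hαsummable hδsum hrepr
  -- identify the parameters
  have hsumδ : (∑' k, δ k) = Real.exp γ * Real.exp β := by
    rw [hexp_tsum β, ← tsum_mul_left]
    exact tsum_congr fun k => by rw [hδdef]; dsimp only; ring
  have hone : Real.exp γ * Real.exp β = 1 := by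
    rw [← hsumδ]
    rw [show (∑' k, δ k) = ∑' k, α k from tsum_congr fun k => (hcoeff k).symm]
    exact hαsum
  have hγβ : γ = -β := by
    rw [← Real.exp_add] at hone
    have h0 : Real.exp (γ + β) = Real.exp 0 := by rw [Real.exp_zero]; exact hone
    have := Real.exp_eq_exp.mp h0
    linarith
  refine ⟨β, hβ0, fun k => ?_⟩
  rw [hAα k, hcoeff k, hδdef]
  dsimp only
  rw [hγβ]

/-- If the linear forms `K₁ = X̃_{1-p} + Ỹ_{1-q}` and `K₂ = X̃_p + Ỹ_q` are
independent, then `X` is Poisson distributed. -/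
theorem indep_linear_forms_implies_poisson
    {Ω : Type*} [MeasurableSpace Ω] (μ : Measure Ω) [IsProbabilityMeasure μ]
    (p q : ℝ) (hp0 : 0 < p) (hp1 : p < 1) (hq0 : 0 < q) (hq1 : q < 1)
    (X Y : Ω → ℕ) (ε εt : ℕ → Ω → ℕ)
    (hXm : Measurable X) (hYm : Measurable Y)
    (hεm : ∀ j, Measurable (ε j)) (hεtm : ∀ j, Measurable (εt j))
    -- X and Y are identically distributed
    (hXY : IdentDistrib X Y μ μ)
    -- each ε_j is a Bernoulli random variable with parameter 1 - p
    (hε01 : ∀ j ω, ε j ω ≤ 1)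
    (hεP : ∀ j, μ {ω | ε j ω = 1} = ENNReal.ofReal (1 - p))
    -- each ε̃_j is a Bernoulli random variable with parameter 1 - q
    (hεt01 : ∀ j ω, εt j ω ≤ 1)
    (hεtP : ∀ j, μ {ω | εt j ω = 1} = ENNReal.ofReal (1 - q))
    -- X, Y, the ε_j's and the ε̃_j's are mutually independent
    (hindep : iIndepFun
      (fun i : ℕ => if i = 0 then X else if i = 1 then Y
        else if (i - 2) % 2 = 0 then ε ((i - 2) / 2) else εt ((i - 2) / 2)) μ)
    -- the linear forms K₁ and K₂ are independent
    (hKindep : IndepFun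
      (fun ω => (∑ j ∈ Finset.range (X ω), ε j ω) +
        ∑ j ∈ Finset.range (Y ω), εt j ω)
      (fun ω => (∑ j ∈ Finset.range (X ω), (1 - ε j ω)) +
        ∑ j ∈ Finset.range (Y ω), (1 - εt j ω)) μ) :
    ∃ l : ℝ, 0 ≤ l ∧ ∀ k : ℕ,
      μ {ω | X ω = k} = ENNReal.ofReal (Real.exp (-l) * l ^ k / k.factorial) := by
  classical
  set A : ℕ → ℝ≥0∞ := fun m => μ {ω | X ω = m} with hAdef
  set a := ENNReal.ofReal (1-p) with hadef
  set b := ENNReal.ofReal p with hbdef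
  set c := ENNReal.ofReal (1-q) with hcdef
  set d := ENNReal.ofReal q with hddef
  have hba : (1:ℝ≥0∞) - a = b := by
    rw [hadef, hbdef, ← ENNReal.ofReal_one, ← ENNReal.ofReal_sub _ (by linarith)]
    norm_num
  have hdc : (1:ℝ≥0∞) - c = d := by
    rw [hcdef, hddef, ← ENNReal.ofReal_one, ← ENNReal.ofReal_sub _ (by linarith)]
    norm_num
  have hYA : ∀ n, μ {ω | Y ω = n} = A n := by
    intro n
    exact (hXY.measure_mem_eq (measurableSet_singleton n)).symm
  set K₁ : Ω → ℕ := fun ω => (∑ j ∈ Finset.range (X ω), ε j ω) +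
        ∑ j ∈ Finset.range (Y ω), εt j ω with hK1def
  set K₂ : Ω → ℕ := fun ω => (∑ j ∈ Finset.range (X ω), (1 - ε j ω)) +
        ∑ j ∈ Finset.range (Y ω), (1 - εt j ω) with hK2def
  have hK1m : Measurable K₁ := (aux_meas_sum hXm hεm).add (aux_meas_sum hYm hεtm)
  have hK2m : Measurable K₂ :=
    (aux_meas_sum hXm (fun j => Measurable.of_discrete.comp (hεm j))).add
      (aux_meas_sum hYm (fun j => Measurable.of_discrete.comp (hεtm j)))
  -- joint pgf
  have hjoint : ∀ S T : ℝ≥0∞, ∫⁻ ω, S ^ (K₁ ω) * T ^ (K₂ ω) ∂μ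
      = (∑' m, A m * (a*S + b*T) ^ m) * (∑' n, A n * (c*S + d*T) ^ n) := by
    intro S T
    have h := aux_joint_pgf X Y ε εt hXm hYm hεm hεtm hε01 hεt01 hindep S T
      (a*S + b*T) (c*S + d*T)
      (fun j => by rw [hεP j, hba])
      (fun j => by rw [hεtP j, hdc])
    rw [hK1def, hK2def]
    rw [h]
    congr 1
    exact tsum_congr fun n => by rw [hYA n]
  -- the marginals
  have hmarg1 : ∀ S : ℝ≥0∞, ∫⁻ ω, S ^ (K₁ ω) ∂μ
      = (∑' m, A m * (a*S + b) ^ m) * (∑' n, A n * (c*S + d) ^ n) := by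
    intro S
    have := hjoint S 1
    simp only [one_pow, mul_one] at this
    exact this
  have hmarg2 : ∀ T : ℝ≥0∞, ∫⁻ ω, T ^ (K₂ ω) ∂μ
      = (∑' m, A m * (a + b*T) ^ m) * (∑' n, A n * (c + d*T) ^ n) := by
    intro T
    have := hjoint 1 T
    simp only [one_pow, mul_one, one_mul] at this
    exact this
  -- independence of the linear forms
  have hfe : ∀ S T : ℝ≥0∞,
      (∑' m, A m * (a*S + b*T) ^ m) * (∑' m, A m * (c*S + d*T) ^ m) =
      ((∑' m, A m * (a*S + b) ^ m) * (∑' m, A m * (c*S + d) ^ m)) *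
      ((∑' m, A m * (a + b*T) ^ m) * (∑' m, A m * (c + d*T) ^ m)) := by
    intro S T
    have h1 : Measurable fun ω => S ^ K₁ ω := Measurable.of_discrete.comp hK1m
    have h2 : Measurable fun ω => T ^ K₂ ω := Measurable.of_discrete.comp hK2m
    have hi : IndepFun (fun ω => S ^ K₁ ω) (fun ω => T ^ K₂ ω) μ :=
      hKindep.comp (φ := fun k : ℕ => S ^ k) (ψ := fun k : ℕ => T ^ k)
        Measurable.of_discrete Measurable.of_discrete
    have h := lintegral_mul_eq_lintegral_mul_lintegral_of_indepFun h1 h2 hi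
    have h' : ∫⁻ ω, S ^ K₁ ω * T ^ K₂ ω ∂μ
        = (∫⁻ ω, S ^ K₁ ω ∂μ) * ∫⁻ ω, T ^ K₂ ω ∂μ := by
      rw [← h]; exact lintegral_congr fun ω => rfl
    rw [hjoint S T, hmarg1 S, hmarg2 T] at h'
    exact h'
  -- total mass one
  have hsum : ∑' m, A m = 1 := by
    have hdis : Pairwise (Function.onFun Disjoint fun m => {ω | X ω = m}) := by
      intro m n hmn
      simp only [Function.onFun, Set.disjoint_left]
      intro ω h1 h2
      exact hmn (h1.symm.trans h2)
    have := measure_iUnion (μ := μ) hdis (fun m => hXm (measurableSet_singleton m))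
    have huniv : (⋃ m, {ω | X ω = m}) = Set.univ := by
      ext ω; simp
    rw [huniv, measure_univ] at this
    exact this.symm
  exact aux_analysis p q hp0 hp1 hq0 hq1 A hsum hfe
end
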